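/- arXiv:2006.02794 — 6 statements merged into one kernel-verified Lean document; each statement's English description precedes it below -/
import Mathlib

section
/- Let S be a set of positive integers, r ≥ 1 an integer, and n ≥ 1, k ≥ 1 integers. Then (n+r)·L_{S,r}(n,k) = Σ_{s∈S} s·s!·C(n,s)·L_{S,r}(n−s, k−1) + r·Σ_{s∈S} s·s!·C(n, s−1)·L_{S,r−1}(n−s+1, k), where both sums have only finitely many nonzero terms. -/
open Finset
open scoped Classical

/-- A partition of `Fin N` into nonempty lists of distinct elements:
every element lies in exactly one list of `P`. -/
def IsListPartition {N : ℕ} (P : Finset (List (Fin N))) : Prop :=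
  (∀ l ∈ P, l ≠ [] ∧ l.Nodup) ∧ ∀ x : Fin N, ∃! l, l ∈ P ∧ x ∈ l

/-- The set of partitions of `{1,…,n+r}` (encoded as `Fin (n+r)`) into `k+r` nonempty
lists whose lengths lie in `S`, such that the first `r` elements lie in distinct lists. -/
def srLahSet (S : Set ℕ) (r n k : ℕ) : Set (Finset (List (Fin (n + r)))) :=
  {P | IsListPartition P ∧ P.card = k + r ∧ (∀ l ∈ P, l.length ∈ S) ∧
    ∀ i j : Fin (n + r), (i : ℕ) < r → (j : ℕ) < r → i ≠ j →
      ∀ l ∈ P, i ∈ l → j ∉ l}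

/-- The `(S,r)`-Lah number `L_{S,r}(n,k)`. -/
noncomputable def srLah (S : Set ℕ) (r n k : ℕ) : ℕ := Nat.card (srLahSet S r n k)

/-- The `(S,r)`-Lah number with integer arguments, zero for negative arguments. -/
noncomputable def srLahZ (S : Set ℕ) (r : ℕ) (n k : ℤ) : ℤ :=
  if 0 ≤ n ∧ 0 ≤ k then srLah S r n.toNat k.toNat else 0

/-- Partitions of the finset `A` into `m` nonempty nodup lists with lengths in `S`,
no list containing two distinct elements of `R`. -/
def PartSet (S : Set ℕ) {α : Type*} (A R : Finset α) (m : ℕ) : Set (Finset (List α)) :=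
  {P | (∀ l ∈ P, l ≠ [] ∧ l.Nodup ∧ l.length ∈ S ∧ ∀ x ∈ l, x ∈ A)
    ∧ (∀ x ∈ A, ∃! l, l ∈ P ∧ x ∈ l)
    ∧ P.card = m
    ∧ ∀ i ∈ R, ∀ j ∈ R, i ≠ j → ∀ l ∈ P, i ∈ l → j ∉ l}

lemma srLahSet_eq_partSet (S : Set ℕ) (r n k : ℕ) :
    srLahSet S r n k =
      PartSet S (univ : Finset (Fin (n + r)))
        (univ.filter (fun i : Fin (n + r) => (i : ℕ) < r)) (k + r) := by
  ext P
  simp only [srLahSet, PartSet, IsListPartition, Set.mem_setOf_eq, Finset.mem_filter,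
    Finset.mem_univ, true_and]
  constructor
  · rintro ⟨⟨h1, h2⟩, h3, h4, h5⟩
    refine ⟨fun l hl => ⟨(h1 l hl).1, (h1 l hl).2, h4 l hl, fun x _ => trivial⟩,
      fun x _ => h2 x, h3, fun i hi j hj hij => h5 i j hi hj hij⟩
  · rintro ⟨h1, h2, h3, h4⟩
    exact ⟨⟨fun l hl => ⟨(h1 l hl).1, (h1 l hl).2.1⟩, fun x => h2 x trivial⟩, h3,
      fun l hl => (h1 l hl).2.2.1, fun i j hi hj hij => h4 i hi j hj hij⟩

lemma partSet_finite {S : Set ℕ} {α : Type*} [Fintype α] (A R : Finset α) (m : ℕ) :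
    (PartSet S A R m).Finite := by
  have hL : {l : List α | l.length ≤ Fintype.card α}.Finite := List.finite_length_le α _
  have hsub : (PartSet S A R m) ⊆
      ((↑) : Finset (List α) → Set (List α)) ⁻¹' {t : Set (List α) | t ⊆ {l : List α | l.length ≤ Fintype.card α}} := by
    intro P hP
    intro l hl
    exact ((hP.1 l hl).2.1).length_le_card
  exact Set.Finite.subset (Set.Finite.preimage (fun a _ b _ h => Finset.coe_injective h)
    hL.finite_subsets) hsub

section Transport
variable {S : Set ℕ} {α : Type*} {β : Type*} [DecidableEq α] [DecidableEq β]

omit [DecidableEq α] [DecidableEq β] in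
lemma listmap_inj {f : α → β} {A : Finset α} (hf : Set.InjOn f ↑A) :
    ∀ l₁ l₂ : List α, (∀ x ∈ l₁, x ∈ A) → (∀ x ∈ l₂, x ∈ A) →
      l₁.map f = l₂.map f → l₁ = l₂ := by
  intro l₁
  induction l₁ with
  | nil => intro l₂ _ _ h; cases l₂ <;> simp_all
  | cons a t ih =>
    intro l₂ h1 h2 h
    cases l₂ with
    | nil => simp at h
    | cons b t₂ =>
      simp only [List.map_cons, List.cons.injEq] at h
      have ha : a = b := hf (h1 a (by simp)) (h2 b (by simp)) h.1
      have := ih t₂ (fun x hx => h1 x (by simp [hx])) (fun x hx => h2 x (by simp [hx])) h.2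
      simp [ha, this]

lemma partSet_image_mem {f : α → β} {A R : Finset α} {m : ℕ} (hf : Set.InjOn f ↑A)
    (hRA : R ⊆ A) {P : Finset (List α)} (hP : P ∈ PartSet S A R m) :
    P.image (List.map f) ∈ PartSet S (A.image f) (R.image f) m := by
  obtain ⟨h1, h2, h3, h4⟩ := hP
  refine ⟨?_, ?_, ?_, ?_⟩
  · intro l' hl'
    obtain ⟨l, hl, rfl⟩ := Finset.mem_image.1 hl'
    obtain ⟨hne, hnd, hlen, hmem⟩ := h1 l hl
    refine ⟨by simpa using hne, ?_, by simpa using hlen, ?_⟩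
    · exact hnd.map_on (fun x hx y hy hxy => hf (hmem x hx) (hmem y hy) hxy)
    · intro y hy
      obtain ⟨x, hx, rfl⟩ := List.mem_map.1 hy
      exact Finset.mem_image_of_mem f (hmem x hx)
  · intro y hy
    obtain ⟨x, hx, rfl⟩ := Finset.mem_image.1 hy
    obtain ⟨l, ⟨hl, hxl⟩, hu⟩ := h2 x hx
    refine ⟨l.map f, ⟨Finset.mem_image_of_mem _ hl, List.mem_map_of_mem hxl⟩, ?_⟩
    rintro l' ⟨hl', hyl'⟩
    obtain ⟨l₁, hl₁, rfl⟩ := Finset.mem_image.1 hl'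
    obtain ⟨x₁, hx₁, hfx⟩ := List.mem_map.1 hyl'
    have hx₁A : x₁ ∈ A := (h1 l₁ hl₁).2.2.2 x₁ hx₁
    have : x₁ = x := hf hx₁A hx hfx
    subst this
    exact congrArg _ (hu l₁ ⟨hl₁, hx₁⟩)
  · rw [Finset.card_image_of_injOn, h3]
    intro l₁ hl₁ l₂ hl₂ h
    exact listmap_inj hf l₁ l₂ (h1 l₁ hl₁).2.2.2 (h1 l₂ hl₂).2.2.2 h
  · intro i' hi' j' hj' hij l' hl' hi'l hj'l
    obtain ⟨i, hi, rfl⟩ := Finset.mem_image.1 hi'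
    obtain ⟨j, hj, rfl⟩ := Finset.mem_image.1 hj'
    obtain ⟨l, hl, rfl⟩ := Finset.mem_image.1 hl'
    have hmem := (h1 l hl).2.2.2
    obtain ⟨x, hx, hfx⟩ := List.mem_map.1 hi'l
    have : x = i := hf (hmem x hx) (hRA hi) hfx
    subst this
    obtain ⟨y, hy, hfy⟩ := List.mem_map.1 hj'l
    have : y = j := hf (hmem y hy) (hRA hj) hfy
    subst this
    have hxy : x ≠ y := fun h => hij (by rw [h])
    exact h4 x hi y hj hxy l hl hx hy

lemma partSet_image_image {f : α → β} {g : β → α} {A R : Finset α} {m : ℕ}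
    (hgf : ∀ a ∈ A, g (f a) = a) {P : Finset (List α)} (hP : P ∈ PartSet S A R m) :
    (P.image (List.map f)).image (List.map g) = P := by
  rw [Finset.image_image]
  have : ∀ l ∈ P, (List.map g ∘ List.map f) l = l := by
    intro l hl
    have hmem := (hP.1 l hl).2.2.2
    simp only [Function.comp_apply, List.map_map]
    calc l.map (g ∘ f) = l.map id := List.map_congr_left
          (fun a ha => by simp [hgf a (hmem a ha)])
      _ = l := List.map_id l
  calc P.image (List.map g ∘ List.map f) = P.image id := Finset.image_congr
        (fun l hl => this l hl)
    _ = P := Finset.image_id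

lemma partSet_card_image {f : α → β} {g : β → α} {A R : Finset α} {m : ℕ}
    (hgf : ∀ a ∈ A, g (f a) = a) (hRA : R ⊆ A) :
    Nat.card (PartSet S (A.image f) (R.image f) m) = Nat.card (PartSet S A R m) := by
  have hf : Set.InjOn f ↑A := fun a ha b hb h => by
    rw [← hgf a ha, ← hgf b hb, h]
  have hfg : ∀ b ∈ A.image f, f (g b) = b := by
    rintro b hb
    obtain ⟨a, ha, rfl⟩ := Finset.mem_image.1 hb
    rw [hgf a ha]
  have hg : Set.InjOn g ↑(A.image f) := fun a ha b hb h => by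
    rw [← hfg a ha, ← hfg b hb, h]
  have hgA : (A.image f).image g = A := by
    rw [Finset.image_image]
    calc A.image (g ∘ f) = A.image id := Finset.image_congr (fun a ha => hgf a ha)
      _ = A := Finset.image_id
  have hgR : (R.image f).image g = R := by
    rw [Finset.image_image]
    calc R.image (g ∘ f) = R.image id := Finset.image_congr (fun a ha => hgf a (hRA ha))
      _ = R := Finset.image_id
  have hbij : Set.BijOn (fun P => P.image (List.map f)) (PartSet S A R m)
      (PartSet S (A.image f) (R.image f) m) := by
    refine ⟨fun P hP => partSet_image_mem hf hRA hP, ?_, ?_⟩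
    · intro P hP Q hQ h
      have := congrArg (fun T => T.image (List.map g)) h
      simpa [partSet_image_image hgf hP, partSet_image_image hgf hQ] using this
    · intro Q hQ
      have hQ' : Q.image (List.map g) ∈ PartSet S A R m := by
        have := partSet_image_mem (S := S) hg (Finset.image_subset_image hRA) hQ
        rwa [hgA, hgR] at this
      refine ⟨Q.image (List.map g), hQ', ?_⟩
      simpa using partSet_image_image hfg hQ
  exact (Nat.card_congr hbij.equiv).symm

end Transport

lemma partSet_empty_ground (S : Set ℕ) {α : Type*} (m : ℕ) :
    PartSet S (∅ : Finset α) ∅ m = if m = 0 then {(∅ : Finset (List α))} else ∅ := by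
  ext P
  have hP : ∀ Q ∈ PartSet S (∅ : Finset α) ∅ m, Q = (∅ : Finset (List α)) := by
    intro Q hQ
    rw [Finset.eq_empty_iff_forall_notMem]
    intro l hl
    obtain ⟨hne, -, -, hmem⟩ := hQ.1 l hl
    cases l with
    | nil => exact hne rfl
    | cons a t => exact absurd (hmem a (by simp)) (Finset.notMem_empty a)
  constructor
  · intro h
    have hPe := hP P h
    subst hPe
    have : m = 0 := by simpa using h.2.2.1.symm
    simp [this]
  · intro h
    by_cases hm : m = 0
    · simp only [hm, if_pos] at h
      simp only [Set.mem_singleton_iff] at h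
      subst h
      exact ⟨by simp, by simp, by simp [hm], by simp⟩
    · simp [hm] at h

lemma nat_card_if_singleton {γ : Type*} (m : ℕ) :
    Nat.card ((if m = 0 then {(∅ : Finset (List γ))} else ∅ : Set (Finset (List γ)))) =
      if m = 0 then 1 else 0 := by
  by_cases hm : m = 0 <;>
    simp [hm, Nat.card_coe_set_eq, Set.ncard_singleton, Set.ncard_empty]

lemma partSet_card_eq_srLah {α : Type*} [Fintype α] (S : Set ℕ) (A R : Finset α)
    (hRA : R ⊆ A) (m : ℕ) (hm : R.card ≤ m) :
    Nat.card (PartSet S A R m) = srLah S R.card (A.card - R.card) (m - R.card) := by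
  set r' := R.card with hr'
  set n' := A.card - R.card with hn'
  have hcard : n' + r' = A.card := by
    have := Finset.card_le_card hRA
    omega
  have hmm : (m - r') + r' = m := by omega
  have hkey : srLah S r' n' (m - r') =
      Nat.card (PartSet S (univ : Finset (Fin (n' + r')))
        (univ.filter (fun i : Fin (n' + r') => (i : ℕ) < r')) m) := by
    rw [srLah, srLahSet_eq_partSet, hmm]
  rcases Finset.eq_empty_or_nonempty A with hA | hA
  · subst hA
    have hR : R = ∅ := Finset.subset_empty.1 hRA
    subst hR
    have h0 : r' = 0 := rfl
    have h1 : n' = 0 := rfl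
    rw [hkey]
    have huniv : (univ : Finset (Fin (n' + r'))) = ∅ := by
      rw [h0, h1]; rfl
    have hfilter : (univ.filter (fun i : Fin (n' + r') => (i : ℕ) < r')) = ∅ := by
      rw [huniv]; simp
    rw [hfilter, huniv, partSet_empty_ground, partSet_empty_ground,
      nat_card_if_singleton, nat_card_if_singleton]
  · have hpos : 0 < n' + r' := by
      rw [hcard]; exact Finset.card_pos.2 hA
    set eR := R.equivFin with heR
    set eA := (A \ R).equivFin with heA
    have hAR : (A \ R).card = n' := by rw [Finset.card_sdiff_of_subset hRA]
    -- the forward relabeling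
    set f : α → Fin (n' + r') := fun a =>
      if h : a ∈ R then ⟨(eR ⟨a, h⟩ : Fin R.card).val, by
        have := (eR ⟨a, h⟩).2; omega⟩
      else if h2 : a ∈ A \ R then ⟨r' + (eA ⟨a, h2⟩ : Fin (A \ R).card).val, by
        have := (eA ⟨a, h2⟩).2; omega⟩
      else ⟨0, hpos⟩ with hf
    set g : Fin (n' + r') → α := fun i =>
      if h : (i : ℕ) < r' then ↑(eR.symm ⟨(i : ℕ), h⟩)
      else if h2 : (i : ℕ) - r' < (A \ R).card then ↑(eA.symm ⟨(i : ℕ) - r', h2⟩)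
      else hA.choose with hg
    have hgf : ∀ a ∈ A, g (f a) = a := by
      intro a ha
      by_cases haR : a ∈ R
      · have h1 : f a = ⟨(eR ⟨a, haR⟩ : Fin R.card).val, by have := (eR ⟨a, haR⟩).2; omega⟩ := by
          rw [hf]; exact dif_pos haR
        rw [h1]
        simp only [hg]
        have hlt : ((eR ⟨a, haR⟩ : Fin R.card) : ℕ) < r' := (eR ⟨a, haR⟩).2
        rw [dif_pos hlt]
        have : (⟨((eR ⟨a, haR⟩ : Fin R.card) : ℕ), hlt⟩ : Fin R.card) = eR ⟨a, haR⟩ :=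
          Fin.ext rfl
        rw [this, Equiv.symm_apply_apply]
      · have haAR : a ∈ A \ R := Finset.mem_sdiff.2 ⟨ha, haR⟩
        have h1 : f a = ⟨r' + (eA ⟨a, haAR⟩ : Fin (A \ R).card).val, by
            have := (eA ⟨a, haAR⟩).2; omega⟩ := by
          rw [hf]; simp only [dif_neg haR]; exact dif_pos haAR
        rw [h1]
        simp only [hg]
        have hnlt : ¬ (r' + (eA ⟨a, haAR⟩ : Fin (A \ R).card).val < r') := by omega
        rw [dif_neg hnlt]
        have hlt2 : r' + (eA ⟨a, haAR⟩ : Fin (A \ R).card).val - r' < (A \ R).card := by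
          have := (eA ⟨a, haAR⟩).2; omega
        rw [dif_pos hlt2]
        have : (⟨r' + (eA ⟨a, haAR⟩ : Fin (A \ R).card).val - r', hlt2⟩ : Fin (A \ R).card)
            = eA ⟨a, haAR⟩ := Fin.ext (by simp only [Fin.val_mk]; omega)
        rw [this, Equiv.symm_apply_apply]
    have hfInj : Set.InjOn f ↑A := fun a ha b hb h => by
      rw [← hgf a ha, ← hgf b hb, h]
    have hAimg : A.image f = (univ : Finset (Fin (n' + r'))) := by
      apply Finset.eq_univ_of_card
      rw [Finset.card_image_of_injOn hfInj, Fintype.card_fin, hcard]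
    have hRimg : R.image f = univ.filter (fun i : Fin (n' + r') => (i : ℕ) < r') := by
      apply Finset.Subset.antisymm
      · intro i hi
        obtain ⟨a, haR, rfl⟩ := Finset.mem_image.1 hi
        have h1 : f a = ⟨(eR ⟨a, haR⟩ : Fin R.card).val, by have := (eR ⟨a, haR⟩).2; omega⟩ := by
          rw [hf]; exact dif_pos haR
        rw [h1]
        simp only [Finset.mem_filter, Finset.mem_univ, true_and]
        exact (eR ⟨a, haR⟩).2
      · intro i hi
        simp only [Finset.mem_filter, Finset.mem_univ, true_and] at hi
        set z := eR.symm ⟨(i : ℕ), hi⟩ with hz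
        refine Finset.mem_image.2 ⟨↑z, z.2, ?_⟩
        have h1 : f ↑z = ⟨(eR ⟨(↑z : α), z.2⟩ : Fin R.card).val, by
            have := (eR ⟨(↑z : α), z.2⟩).2; omega⟩ := by
          rw [hf]; exact dif_pos z.2
        rw [h1]
        have : (⟨(↑z : α), z.2⟩ : {x // x ∈ R}) = z := Subtype.ext rfl
        refine Fin.ext ?_
        show ((eR ⟨(↑z : α), z.2⟩ : Fin R.card) : ℕ) = i
        rw [this, hz, Equiv.apply_symm_apply]
    have := partSet_card_image (S := S) (m := m) hgf hRA
    rw [hAimg, hRimg] at this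
    rw [← this, hkey]

lemma card_fiber_eq {α : Type*} [DecidableEq α] (S : Set ℕ) (A R : Finset α) (m : ℕ)
    (hm : 1 ≤ m) (L : List α) (hLne : L ≠ []) (hLnd : L.Nodup) (hLS : L.length ∈ S)
    (hLA : ∀ x ∈ L, x ∈ A)
    (hL1 : ∀ i ∈ R, ∀ j ∈ R, i ≠ j → i ∈ L → j ∉ L) :
    Nat.card {P : Finset (List α) | P ∈ PartSet S A R m ∧ L ∈ P} =
      Nat.card (PartSet S (A \ L.toFinset) (R \ L.toFinset) (m - 1)) := by
  have hbij : Set.BijOn (fun P => P.erase L)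
      {P : Finset (List α) | P ∈ PartSet S A R m ∧ L ∈ P}
      (PartSet S (A \ L.toFinset) (R \ L.toFinset) (m - 1)) := by
    refine ⟨?_, ?_, ?_⟩
    · rintro P ⟨⟨h1, h2, h3, h4⟩, hLP⟩
      refine ⟨?_, ?_, ?_, ?_⟩
      · intro l hl
        have hlP : l ∈ P := Finset.mem_of_mem_erase hl
        have hlL : l ≠ L := Finset.ne_of_mem_erase hl
        obtain ⟨hne, hnd, hlen, hmem⟩ := h1 l hlP
        refine ⟨hne, hnd, hlen, fun x hx => Finset.mem_sdiff.2 ⟨hmem x hx, ?_⟩⟩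
        intro hxL
        have hxL' : x ∈ L := List.mem_toFinset.1 hxL
        exact hlL ((h2 x (hmem x hx)).unique ⟨hlP, hx⟩ ⟨hLP, hxL'⟩)
      · intro x hx
        obtain ⟨hxA, hxL⟩ := Finset.mem_sdiff.1 hx
        obtain ⟨l, ⟨hl, hxl⟩, hu⟩ := h2 x hxA
        have hlL : l ≠ L := by
          intro h; subst h; exact hxL (List.mem_toFinset.2 hxl)
        exact ⟨l, ⟨Finset.mem_erase.2 ⟨hlL, hl⟩, hxl⟩,
          fun l' ⟨hl', hxl'⟩ => hu l' ⟨Finset.mem_of_mem_erase hl', hxl'⟩⟩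
      · rw [Finset.card_erase_of_mem hLP, h3]
      · intro i hi j hj hij l hl
        exact h4 i (Finset.mem_sdiff.1 hi).1 j (Finset.mem_sdiff.1 hj).1 hij l
          (Finset.mem_of_mem_erase hl)
    · rintro P ⟨hP, hLP⟩ Q ⟨hQ, hLQ⟩ h
      simp only at h
      rw [← Finset.insert_erase hLP, ← Finset.insert_erase hLQ, h]
    · rintro Q ⟨h1, h2, h3, h4⟩
      have hLQ : L ∉ Q := by
        intro hLQ
        obtain ⟨x, hx⟩ := List.exists_mem_of_ne_nil L hLne
        have := (h1 L hLQ).2.2.2 x hx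
        exact (Finset.mem_sdiff.1 this).2 (List.mem_toFinset.2 hx)
      refine ⟨insert L Q, ⟨⟨?_, ?_, ?_, ?_⟩, Finset.mem_insert_self L Q⟩, ?_⟩
      · intro l hl
        rcases Finset.mem_insert.1 hl with rfl | hlQ
        · exact ⟨hLne, hLnd, hLS, hLA⟩
        · obtain ⟨hne, hnd, hlen, hmem⟩ := h1 l hlQ
          exact ⟨hne, hnd, hlen, fun x hx => (Finset.mem_sdiff.1 (hmem x hx)).1⟩
      · intro x hx
        by_cases hxL : x ∈ L
        · refine ⟨L, ⟨Finset.mem_insert_self L Q, hxL⟩, ?_⟩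
          rintro l' ⟨hl', hxl'⟩
          rcases Finset.mem_insert.1 hl' with rfl | hl'Q
          · rfl
          · exact absurd (List.mem_toFinset.2 hxL)
              (Finset.mem_sdiff.1 ((h1 l' hl'Q).2.2.2 x hxl')).2
        · have hx' : x ∈ A \ L.toFinset :=
            Finset.mem_sdiff.2 ⟨hx, fun h => hxL (List.mem_toFinset.1 h)⟩
          obtain ⟨l, ⟨hl, hxl⟩, hu⟩ := h2 x hx'
          refine ⟨l, ⟨Finset.mem_insert_of_mem hl, hxl⟩, ?_⟩
          rintro l' ⟨hl', hxl'⟩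
          rcases Finset.mem_insert.1 hl' with rfl | hl'Q
          · exact absurd hxl' hxL
          · exact hu l' ⟨hl'Q, hxl'⟩
      · rw [Finset.card_insert_of_notMem hLQ, h3]; omega
      · intro i hi j hj hij l hl hil hjl
        rcases Finset.mem_insert.1 hl with rfl | hlQ
        · exact hL1 i hi j hj hij hil hjl
        · have hi' : i ∈ R \ L.toFinset := Finset.mem_sdiff.2
            ⟨hi, (Finset.mem_sdiff.1 ((h1 l hlQ).2.2.2 i hil)).2⟩
          have hj' : j ∈ R \ L.toFinset := Finset.mem_sdiff.2
            ⟨hj, (Finset.mem_sdiff.1 ((h1 l hlQ).2.2.2 j hjl)).2⟩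
          exact h4 i hi' j hj' hij l hlQ hil hjl
      · simp only
        rw [Finset.erase_insert hLQ]
  exact Nat.card_congr hbij.equiv

noncomputable def allLists (α : Type*) [Fintype α] : Finset (List α) :=
  (List.finite_length_le α (Fintype.card α)).toFinset

lemma mem_allLists {α : Type*} [Fintype α] (L : List α) :
    L ∈ allLists α ↔ L.length ≤ Fintype.card α := Set.Finite.mem_toFinset _

lemma card_nodup_lists {α : Type*} [Fintype α] [DecidableEq α] (B : Finset α) (s : ℕ) :
    ((allLists α).filter (fun L => L.Nodup ∧ L.length = s ∧ ∀ x ∈ L, x ∈ B)).card =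
      B.card.descFactorial s := by
  have key : ((allLists α).filter (fun L => L.Nodup ∧ L.length = s ∧ ∀ x ∈ L, x ∈ B)).card =
      (univ : Finset (Fin s ↪ {x // x ∈ B})).card := by
    refine Finset.card_bij' (fun L hL =>
      (⟨fun idx => ⟨L.get (Fin.cast (by
          simp only [Finset.mem_filter] at hL
          exact hL.2.2.1.symm) idx), by
        simp only [Finset.mem_filter] at hL
        exact hL.2.2.2 _ (List.get_mem L _)⟩, by
        simp only [Finset.mem_filter] at hL
        intro a b hab
        simp only [Subtype.mk.injEq] at hab
        have := List.nodup_iff_injective_get.1 hL.2.1 hab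
        exact Fin.cast_injective _ this⟩ : Fin s ↪ {x // x ∈ B}))
      (fun e he => List.ofFn (fun idx => ↑(e idx))) ?_ ?_ ?_ ?_
    · intro L hL
      exact Finset.mem_univ _
    · intro e he
      have hsB : s ≤ B.card := by
        have := Fintype.card_le_of_embedding e
        simpa [Fintype.card_coe] using this
      simp only [Finset.mem_filter]
      refine ⟨(mem_allLists _).2 ?_, ?_, by simp, ?_⟩
      · simp only [List.length_ofFn]
        exact le_trans hsB (by simpa using Finset.card_le_univ B)
      · rw [List.nodup_ofFn]
        exact Subtype.val_injective.comp e.injective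
      · intro x hx
        rw [List.mem_ofFn] at hx
        obtain ⟨idx, rfl⟩ := hx
        exact (e idx).2
    · intro L hL
      have hlen : L.length = s := by
        simp only [Finset.mem_filter] at hL
        exact hL.2.2.1
      subst hlen
      exact List.ofFn_get L
    · intro e he
      apply Function.Embedding.ext
      intro idx
      apply Subtype.ext
      simp [List.get_ofFn]
  rw [key, Finset.card_univ, Fintype.card_embedding_eq, Fintype.card_coe, Fintype.card_fin]

lemma card_pair_set {α : Type*} [DecidableEq α] (Q : Finset (List α × α))
    (Lset : Finset (List α)) (s : ℕ)
    (hQ : ∀ p : List α × α, p ∈ Q ↔ p.1 ∈ Lset ∧ p.2 ∈ p.1)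
    (hLs : ∀ L ∈ Lset, L.Nodup ∧ L.length = s) :
    Q.card = Lset.card * s := by
  rw [Finset.card_eq_sum_card_fiberwise (f := Prod.fst) (t := Lset)
    (fun p hp => ((hQ p).1 hp).1)]
  have : ∀ L ∈ Lset, (Q.filter (fun p => p.1 = L)).card = s := by
    intro L hL
    have hQL : Q.filter (fun p => p.1 = L) = {L} ×ˢ L.toFinset := by
      ext ⟨l, x⟩
      simp only [Finset.mem_filter, Finset.mem_product, Finset.mem_singleton, hQ,
        List.mem_toFinset]
      constructor
      · rintro ⟨⟨-, hx⟩, rfl⟩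
        exact ⟨rfl, hx⟩
      · rintro ⟨rfl, hx⟩
        exact ⟨⟨hL, hx⟩, rfl⟩
    rw [hQL, Finset.card_product, Finset.card_singleton, one_mul,
      List.toFinset_card_of_nodup (hLs L hL).1, (hLs L hL).2]
  rw [Finset.sum_congr rfl this, Finset.sum_const, smul_eq_mul]

lemma card_filter_lt_fin (n r : ℕ) (h : r ≤ n) :
    (Finset.filter (fun i : Fin n => (i : ℕ) < r) univ).card = r := by
  rw [← Fintype.card_subtype]
  have e : {i : Fin n // (i : ℕ) < r} ≃ Fin r :=
    ⟨fun x => ⟨x.1.1, x.2⟩, fun j => ⟨⟨j.1, by omega⟩, j.2⟩,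
      fun x => by ext; rfl, fun j => by ext; rfl⟩
  rw [Fintype.card_congr e, Fintype.card_fin]

lemma finsum_mem_eq_sum_sfin (S : Set ℕ) (hS : ∀ s ∈ S, 0 < s) (f : ℕ → ℤ) (n : ℕ)
    (hf : ∀ s, n + 1 < s → f s = 0) (h : (S ∩ Set.Icc 1 (n + 1)).Finite) :
    ∑ᶠ s ∈ S, f s = ∑ s ∈ h.toFinset, f s := by
  have hsupp : (S ∩ Function.support f).Finite := by
    apply (Set.finite_Icc 0 (n + 1)).subset
    rintro s ⟨-, hs⟩
    simp only [Set.mem_Icc]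
    constructor
    · omega
    · by_contra hc
      exact hs (hf s (by omega))
  rw [finsum_mem_eq_sum f hsupp]
  apply Finset.sum_subset
  · intro s hs
    simp only [Set.Finite.mem_toFinset, Set.mem_inter_iff, Function.mem_support] at hs ⊢
    refine ⟨hs.1, Set.mem_Icc.2 ⟨hS s hs.1, ?_⟩⟩
    by_contra hc
    exact hs.2 (hf s (by omega))
  · intro s hs hns
    simp only [Set.Finite.mem_toFinset, Set.mem_inter_iff, Function.mem_support,
      not_and, not_not] at hs hns
    exact hns hs.1

lemma descFactorial_diff (n s : ℕ) (hs : 1 ≤ s) :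
    (n + 1).descFactorial s - n.descFactorial s = s * n.descFactorial (s - 1) := by
  obtain ⟨t, rfl⟩ : ∃ t, s = t + 1 := ⟨s - 1, by omega⟩
  rw [Nat.succ_descFactorial_succ, Nat.descFactorial_succ]
  by_cases ht : t ≤ n
  · rw [← Nat.sub_mul]
    congr 1
    omega
  · have : n.descFactorial t = 0 := Nat.descFactorial_eq_zero_iff_lt.2 (by omega)
    simp [this]

noncomputable def listOfAux {γ : Type*} (P : Finset (List γ)) (x : γ) : List γ :=
  Classical.epsilon (fun l => l ∈ P ∧ x ∈ l)

lemma listOfAux_spec {S : Set ℕ} {γ : Type*} {A R : Finset γ} {m : ℕ} {P : Finset (List γ)}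
    (hP : P ∈ PartSet S A R m) {x : γ} (hx : x ∈ A) :
    (listOfAux P x ∈ P ∧ x ∈ listOfAux P x) ∧ ∀ l ∈ P, x ∈ l → l = listOfAux P x := by
  obtain ⟨l₀, hl₀, hu⟩ := hP.2.1 x hx
  have hex : ∃ l, l ∈ P ∧ x ∈ l := ⟨l₀, hl₀⟩
  have hspec : listOfAux P x ∈ P ∧ x ∈ listOfAux P x := Classical.epsilon_spec hex
  exact ⟨hspec, fun l hl hxl => by rw [hu l ⟨hl, hxl⟩, hu _ hspec]⟩

lemma fiber_card_lemma {γ : Type*} [Fintype γ] [DecidableEq γ] (S : Set ℕ) (R : Finset γ)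
    (m : ℕ) (hm : 1 ≤ m) (hT : (PartSet S (univ : Finset γ) R m).Finite)
    (L : List γ) (x : γ) (hLnd : L.Nodup) (hLS : L.length ∈ S) (hxL : x ∈ L)
    (hL1 : ∀ i ∈ R, ∀ j ∈ R, i ≠ j → i ∈ L → j ∉ L) :
    ((hT.toFinset ×ˢ (univ : Finset γ)).filter
        (fun p => (listOfAux p.1 p.2, p.2) = (L, x))).card =
      Nat.card (PartSet S (univ \ L.toFinset) (R \ L.toFinset) (m - 1)) := by
  have hA : (hT.toFinset ×ˢ (univ : Finset γ)).filter
        (fun p => (listOfAux p.1 p.2, p.2) = (L, x))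
      = (hT.toFinset.filter (fun P => L ∈ P)) ×ˢ ({x} : Finset γ) := by
    ext ⟨P, y⟩
    simp only [Finset.mem_filter, Finset.mem_product, Finset.mem_singleton, Finset.mem_univ,
      and_true, true_and, Prod.mk.injEq]
    constructor
    · rintro ⟨hP𝒯, hLy, rfl⟩
      have hP : P ∈ PartSet S univ R m := (Set.Finite.mem_toFinset hT).1 hP𝒯
      have hmem := (listOfAux_spec hP (Finset.mem_univ y)).1
      rw [hLy] at hmem
      exact ⟨⟨hP𝒯, hmem.1⟩, rfl⟩
    · rintro ⟨⟨hP𝒯, hLP⟩, rfl⟩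
      have hP : P ∈ PartSet S univ R m := (Set.Finite.mem_toFinset hT).1 hP𝒯
      exact ⟨hP𝒯, ((listOfAux_spec hP (Finset.mem_univ y)).2 L hLP hxL).symm, rfl⟩
  have hC : (↑(hT.toFinset.filter (fun P => L ∈ P)) : Set (Finset (List γ)))
      = {P : Finset (List γ) | P ∈ PartSet S univ R m ∧ L ∈ P} := by
    ext P
    simp [Set.Finite.mem_toFinset]
  have hD := card_fiber_eq S univ R m hm L (List.ne_nil_of_mem hxL) hLnd hLS
    (fun y _ => Finset.mem_univ y) hL1
  rw [hA, Finset.card_product, Finset.card_singleton, mul_one, ← hD,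
    ← Set.ncard_coe_finset, hC, Nat.card_coe_set_eq]

lemma count_pairs_avoid {γ : Type*} [Fintype γ] [DecidableEq γ] (B : Finset γ) (s : ℕ)
    (Q : Finset (List γ × γ))
    (hQ : ∀ p : List γ × γ,
      p ∈ Q ↔ (p.1.Nodup ∧ p.1.length = s ∧ (∀ y ∈ p.1, y ∈ B) ∧ p.2 ∈ p.1)) :
    Q.card = B.card.descFactorial s * s := by
  rw [← card_nodup_lists B s]
  apply card_pair_set Q _ s
  · intro p
    rw [hQ]
    simp only [Finset.mem_filter]
    constructor
    · rintro ⟨hnd, hlen, hB, hx⟩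
      exact ⟨⟨(mem_allLists _).2 (hnd.length_le_card), hnd, hlen, hB⟩, hx⟩
    · rintro ⟨⟨-, hnd, hlen, hB⟩, hx⟩
      exact ⟨hnd, hlen, hB, hx⟩
  · intro L hL
    simp only [Finset.mem_filter] at hL
    exact ⟨hL.2.1, hL.2.2.1⟩

lemma count_pairs_with {γ : Type*} [Fintype γ] [DecidableEq γ] (B : Finset γ) (i : γ)
    (hi : i ∉ B) (s : ℕ) (Q : Finset (List γ × γ))
    (hQ : ∀ p : List γ × γ, p ∈ Q ↔
      (p.1.Nodup ∧ p.1.length = s ∧ (∀ y ∈ p.1, y ∈ insert i B) ∧ i ∈ p.1 ∧ p.2 ∈ p.1)) :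
    Q.card = ((B.card + 1).descFactorial s - B.card.descFactorial s) * s := by
  have hLset : ((allLists γ).filter
        (fun L => L.Nodup ∧ L.length = s ∧ (∀ y ∈ L, y ∈ insert i B) ∧ i ∈ L)).card
      = (B.card + 1).descFactorial s - B.card.descFactorial s := by
    have hsdiff : (allLists γ).filter
          (fun L => L.Nodup ∧ L.length = s ∧ (∀ y ∈ L, y ∈ insert i B) ∧ i ∈ L)
        = ((allLists γ).filter (fun L => L.Nodup ∧ L.length = s ∧ ∀ y ∈ L, y ∈ insert i B))
          \ ((allLists γ).filter (fun L => L.Nodup ∧ L.length = s ∧ ∀ y ∈ L, y ∈ B)) := by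
      ext L
      simp only [Finset.mem_sdiff, Finset.mem_filter]
      constructor
      · rintro ⟨hall, hnd, hlen, hins, hiL⟩
        refine ⟨⟨hall, hnd, hlen, hins⟩, ?_⟩
        rintro ⟨-, -, -, hBall⟩
        exact hi (hBall i hiL)
      · rintro ⟨⟨hall, hnd, hlen, hins⟩, hns⟩
        refine ⟨hall, hnd, hlen, hins, ?_⟩
        by_contra hiL
        apply hns
        refine ⟨hall, hnd, hlen, fun y hy => ?_⟩
        rcases Finset.mem_insert.1 (hins y hy) with rfl | hyB
        · exact absurd hy hiL
        · exact hyB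
    have hsub : ((allLists γ).filter (fun L => L.Nodup ∧ L.length = s ∧ ∀ y ∈ L, y ∈ B))
        ⊆ ((allLists γ).filter
            (fun L => L.Nodup ∧ L.length = s ∧ ∀ y ∈ L, y ∈ insert i B)) := by
      intro L hL
      simp only [Finset.mem_filter] at hL ⊢
      exact ⟨hL.1, hL.2.1, hL.2.2.1, fun y hy => Finset.mem_insert_of_mem (hL.2.2.2 y hy)⟩
    rw [hsdiff, Finset.card_sdiff_of_subset hsub, card_nodup_lists, card_nodup_lists,
      Finset.card_insert_of_notMem hi]
  rw [← hLset]
  apply card_pair_set Q _ s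
  · intro p
    rw [hQ]
    simp only [Finset.mem_filter]
    constructor
    · rintro ⟨hnd, hlen, hB, hiL, hx⟩
      exact ⟨⟨(mem_allLists _).2 (hnd.length_le_card), hnd, hlen, hB, hiL⟩, hx⟩
    · rintro ⟨⟨-, hnd, hlen, hB, hiL⟩, hx⟩
      exact ⟨hnd, hlen, hB, hiL, hx⟩
  · intro L hL
    simp only [Finset.mem_filter] at hL
    exact ⟨hL.2.1, hL.2.2.1⟩

theorem srLah_nat_identity (S : Set ℕ) (hS : ∀ s ∈ S, 0 < s) (r n k : ℕ)
    (hr : 1 ≤ r) (hk : 1 ≤ k) (hfin : (S ∩ Set.Icc 1 (n + 1)).Finite) :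
    srLah S r n k * (n + r) = ∑ s ∈ hfin.toFinset,
      (n.descFactorial s * s * srLah S r (n - s) (k - 1)
        + r * (((n + 1).descFactorial s - n.descFactorial s) * s * srLah S (r - 1) (n + 1 - s) k)) := by
  classical
  haveI : Nonempty (Fin (n + r)) := ⟨⟨0, by omega⟩⟩
  set R : Finset (Fin (n + r)) := Finset.filter (fun i : Fin (n + r) => (i : ℕ) < r) univ
    with hRdef
  have hRcard : R.card = r := card_filter_lt_fin (n + r) r (by omega)
  have hBcard : ((univ : Finset (Fin (n + r))) \ R).card = n := by
    rw [Finset.card_sdiff_of_subset (Finset.subset_univ R), Finset.card_univ, Fintype.card_fin, hRcard]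
    omega
  have hset : srLahSet S r n k = PartSet S univ R (k + r) := srLahSet_eq_partSet S r n k
  have hT : (PartSet S (univ : Finset (Fin (n + r))) R (k + r)).Finite := partSet_finite _ _ _
  have hTcard : hT.toFinset.card = srLah S r n k := by
    rw [srLah, hset, Nat.card_coe_set_eq, Set.ncard_eq_toFinset_card _ hT]
  set M := ((allLists (Fin (n + r))) ×ˢ (univ : Finset (Fin (n + r)))).filter
      (fun p => p.1.Nodup ∧ p.1.length ∈ S ∧ p.2 ∈ p.1 ∧
        ∀ i ∈ R, ∀ j ∈ R, i ≠ j → i ∈ p.1 → j ∉ p.1) with hMdef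
  have hMmem : ∀ p : List (Fin (n + r)) × Fin (n + r), p ∈ M ↔
      (p.1.Nodup ∧ p.1.length ∈ S ∧ p.2 ∈ p.1 ∧
        ∀ i ∈ R, ∀ j ∈ R, i ≠ j → i ∈ p.1 → j ∉ p.1) := by
    intro p
    rw [hMdef, Finset.mem_filter]
    constructor
    · tauto
    · intro h
      exact ⟨Finset.mem_product.2 ⟨(mem_allLists _).2 h.1.length_le_card, Finset.mem_univ _⟩, h⟩
  set E := hT.toFinset ×ˢ (univ : Finset (Fin (n + r))) with hEdef
  have hEcard : E.card = srLah S r n k * (n + r) := by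
    rw [hEdef, Finset.card_product, hTcard, Finset.card_univ, Fintype.card_fin]
  have hφM : ∀ p ∈ E, ((listOfAux p.1 p.2, p.2) : List (Fin (n + r)) × Fin (n + r)) ∈ M := by
    rintro ⟨P, x⟩ hp
    obtain ⟨hP𝒯, -⟩ := Finset.mem_product.1 hp
    have hP : P ∈ PartSet S univ R (k + r) := (Set.Finite.mem_toFinset hT).1 hP𝒯
    obtain ⟨⟨hlP, hxl⟩, -⟩ := listOfAux_spec hP (Finset.mem_univ x)
    obtain ⟨-, hnd, hlen, -⟩ := hP.1 _ hlP
    rw [hMmem]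
    exact ⟨hnd, hlen, hxl, fun i hi j hj hij hil => hP.2.2.2 i hi j hj hij _ hlP hil⟩
  have step1 : E.card = ∑ q ∈ M,
      (E.filter (fun p => (listOfAux p.1 p.2, p.2) = q)).card :=
    Finset.card_eq_sum_card_fiberwise hφM
  have step2 : ∀ q ∈ M, (E.filter (fun p => (listOfAux p.1 p.2, p.2) = q)).card =
      Nat.card (PartSet S (univ \ q.1.toFinset) (R \ q.1.toFinset) (k + r - 1)) := by
    rintro ⟨L, x⟩ hq
    rw [hMmem] at hq
    obtain ⟨hnd, hlen, hxL, h1⟩ := hq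
    exact fiber_card_lemma S R (k + r) (by omega) hT L x hnd hlen hxL h1
  -- length bounds
  have hlenS : ∀ q ∈ M, 1 ≤ q.1.length := by
    rintro ⟨L, x⟩ hq
    rw [hMmem] at hq
    exact List.length_pos_iff.2 (List.ne_nil_of_mem hq.2.2.1)
  have hsub0 : ∀ q ∈ M, (∀ i ∈ R, i ∉ q.1) → q.1.toFinset ⊆ univ \ R := by
    rintro ⟨L, x⟩ hq h0 y hy
    rw [List.mem_toFinset] at hy
    refine Finset.mem_sdiff.2 ⟨Finset.mem_univ y, fun hyR => h0 y hyR hy⟩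
  have hlen0 : ∀ q ∈ M, (∀ i ∈ R, i ∉ q.1) → q.1.length ≤ n := by
    rintro ⟨L, x⟩ hq h0
    rw [hMmem] at hq
    have := Finset.card_le_card (hsub0 ⟨L, x⟩ (by rw [hMmem]; exact hq) h0)
    rwa [List.toFinset_card_of_nodup hq.1, hBcard] at this
  have hsub1 : ∀ q ∈ M, ∀ i ∈ R, i ∈ q.1 → q.1.toFinset ⊆ insert i (univ \ R) := by
    rintro ⟨L, x⟩ hq i hiR hiL y hy
    rw [hMmem] at hq
    rw [List.mem_toFinset] at hy
    by_cases hyR : y ∈ R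
    · rcases eq_or_ne y i with rfl | hne
      · exact Finset.mem_insert_self _ _
      · exact absurd hy (hq.2.2.2 i hiR y hyR (fun h => hne h.symm) hiL)
    · exact Finset.mem_insert_of_mem (Finset.mem_sdiff.2 ⟨Finset.mem_univ y, hyR⟩)
  have hlen1 : ∀ q ∈ M, ∀ i ∈ R, i ∈ q.1 → q.1.length ≤ n + 1 := by
    rintro ⟨L, x⟩ hq i hiR hiL
    rw [hMmem] at hq
    have hiB : i ∉ (univ : Finset (Fin (n + r))) \ R := fun h => (Finset.mem_sdiff.1 h).2 hiR
    have := Finset.card_le_card (hsub1 ⟨L, x⟩ (by rw [hMmem]; exact hq) i hiR hiL)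
    rwa [List.toFinset_card_of_nodup hq.1, Finset.card_insert_of_notMem hiB, hBcard] at this
  -- weights
  have hw0 : ∀ q ∈ M, (∀ i ∈ R, i ∉ q.1) →
      Nat.card (PartSet S (univ \ q.1.toFinset) (R \ q.1.toFinset) (k + r - 1)) =
        srLah S r (n - q.1.length) (k - 1) := by
    rintro ⟨L, x⟩ hqM h0
    have hRL : R \ L.toFinset = R := by
      ext i
      simp only [Finset.mem_sdiff, List.mem_toFinset, and_iff_left_iff_imp]
      exact fun hiR => h0 i hiR
    rw [hMmem] at hqM
    have hsle : L.length ≤ n := hlen0 ⟨L, x⟩ (by rw [hMmem]; exact hqM) h0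
    have hsub : R \ L.toFinset ⊆ univ \ L.toFinset :=
      Finset.sdiff_subset_sdiff (Finset.subset_univ R) (le_refl _)
    have hm2 : (R \ L.toFinset).card ≤ k + r - 1 := by
      rw [hRL, hRcard]; omega
    rw [partSet_card_eq_srLah S _ _ hsub _ hm2, hRL, hRcard,
      Finset.card_sdiff_of_subset (Finset.subset_univ _), Finset.card_univ, Fintype.card_fin,
      List.toFinset_card_of_nodup hqM.1]
    congr 1 <;> omega
  have hw1 : ∀ q ∈ M, ∀ i ∈ R, i ∈ q.1 →
      Nat.card (PartSet S (univ \ q.1.toFinset) (R \ q.1.toFinset) (k + r - 1)) =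
        srLah S (r - 1) (n + 1 - q.1.length) k := by
    rintro ⟨L, x⟩ hqM i hiR hiL
    rw [hMmem] at hqM
    have hRL : R \ L.toFinset = R.erase i := by
      ext j
      simp only [Finset.mem_sdiff, List.mem_toFinset, Finset.mem_erase]
      constructor
      · rintro ⟨hjR, hjL⟩
        exact ⟨fun h => hjL (h ▸ hiL), hjR⟩
      · rintro ⟨hji, hjR⟩
        exact ⟨hjR, hqM.2.2.2 i hiR j hjR (fun h => hji h.symm) hiL⟩
    have hsle : L.length ≤ n + 1 := hlen1 ⟨L, x⟩ (by rw [hMmem]; exact hqM) i hiR hiL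
    have hsub : R \ L.toFinset ⊆ univ \ L.toFinset :=
      Finset.sdiff_subset_sdiff (Finset.subset_univ R) (le_refl _)
    have hRLcard : (R \ L.toFinset).card = r - 1 := by
      rw [hRL, Finset.card_erase_of_mem hiR, hRcard]
    have hm2 : (R \ L.toFinset).card ≤ k + r - 1 := by
      rw [hRLcard]; omega
    rw [partSet_card_eq_srLah S _ _ hsub _ hm2, hRLcard,
      Finset.card_sdiff_of_subset (Finset.subset_univ _), Finset.card_univ, Fintype.card_fin,
      List.toFinset_card_of_nodup hqM.1]
    congr 1 <;> omega
  -- the two class sums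
  have hfinmem : ∀ s, s ∈ hfin.toFinset ↔ (s ∈ S ∧ 1 ≤ s ∧ s ≤ n + 1) := by
    intro s
    rw [Set.Finite.mem_toFinset]
    simp [Set.mem_Icc]
  have hlenfin0 : ∀ q ∈ M.filter (fun q => ∀ i ∈ R, i ∉ q.1), q.1.length ∈ hfin.toFinset := by
    rintro q hq
    obtain ⟨hqM, h0⟩ := Finset.mem_filter.1 hq
    rw [hfinmem]
    exact ⟨((hMmem q).1 hqM).2.1, hlenS q hqM, le_trans (hlen0 q hqM h0) (by omega)⟩
  have hlenfin1 : ∀ q ∈ M.filter (fun q => ¬ ∀ i ∈ R, i ∉ q.1), q.1.length ∈ hfin.toFinset := by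
    rintro q hq
    obtain ⟨hqM, h1⟩ := Finset.mem_filter.1 hq
    push_neg at h1
    obtain ⟨i, hiR, hiL⟩ := h1
    rw [hfinmem]
    exact ⟨((hMmem q).1 hqM).2.1, hlenS q hqM, hlen1 q hqM i hiR hiL⟩
  have hA0 : ∑ q ∈ M.filter (fun q => ∀ i ∈ R, i ∉ q.1),
        Nat.card (PartSet S (univ \ q.1.toFinset) (R \ q.1.toFinset) (k + r - 1))
      = ∑ s ∈ hfin.toFinset, n.descFactorial s * s * srLah S r (n - s) (k - 1) := by
    rw [Finset.sum_congr rfl (fun q hq => hw0 q (Finset.mem_filter.1 hq).1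
      (Finset.mem_filter.1 hq).2)]
    rw [← Finset.sum_fiberwise_of_maps_to hlenfin0 (fun q => srLah S r (n - q.1.length) (k - 1))]
    apply Finset.sum_congr rfl
    intro s hs
    rw [Finset.sum_congr rfl (fun q hq => by rw [(Finset.mem_filter.1 hq).2]),
      Finset.sum_const, smul_eq_mul]
    congr 1
    have hchar : ∀ p : List (Fin (n + r)) × Fin (n + r),
        p ∈ (M.filter (fun q => ∀ i ∈ R, i ∉ q.1)).filter (fun q => q.1.length = s) ↔
          (p.1.Nodup ∧ p.1.length = s ∧
            (∀ y ∈ p.1, y ∈ (univ : Finset (Fin (n + r))) \ R) ∧ p.2 ∈ p.1) := by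
      intro p
      simp only [Finset.mem_filter]
      constructor
      · rintro ⟨⟨hpM, h0⟩, hlen⟩
        obtain ⟨hnd, -, hx, -⟩ := (hMmem p).1 hpM
        exact ⟨hnd, hlen, fun y hy => Finset.mem_sdiff.2
          ⟨Finset.mem_univ y, fun hyR => h0 y hyR hy⟩, hx⟩
      · rintro ⟨hnd, hlen, hB, hx⟩
        have h0 : ∀ i ∈ R, i ∉ p.1 := fun i hiR hiL =>
          (Finset.mem_sdiff.1 (hB i hiL)).2 hiR
        refine ⟨⟨(hMmem p).2 ⟨hnd, ?_, hx, ?_⟩, h0⟩, hlen⟩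
        · rw [hlen]; exact ((hfinmem s).1 hs).1
        · intro i hiR j hjR hij hiL
          exact absurd hiL (h0 i hiR)
    have hc := count_pairs_avoid ((univ : Finset (Fin (n + r))) \ R) s _ hchar
    rwa [hBcard] at hc
  have countM1 : ∀ s ∈ hfin.toFinset,
      ((M.filter (fun q => ¬ ∀ i ∈ R, i ∉ q.1)).filter (fun q => q.1.length = s)).card =
        r * (((n + 1).descFactorial s - n.descFactorial s) * s) := by
    intro s hs
    set M1s := (M.filter (fun q => ¬ ∀ i ∈ R, i ∉ q.1)).filter (fun q => q.1.length = s)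
      with hM1s
    have hmemM1s : ∀ q, q ∈ M1s ↔ (q ∈ M ∧ (∃ i ∈ R, i ∈ q.1) ∧ q.1.length = s) := by
      intro q
      rw [hM1s, Finset.mem_filter, Finset.mem_filter]
      constructor
      · rintro ⟨⟨hqM, hnot⟩, hlen⟩
        push_neg at hnot
        exact ⟨hqM, hnot, hlen⟩
      · rintro ⟨hqM, ⟨i, hiR, hiL⟩, hlen⟩
        exact ⟨⟨hqM, fun h => h i hiR hiL⟩, hlen⟩
    have hψ : ∀ q ∈ M1s, (Classical.epsilon (fun a => a ∈ R ∧ a ∈ q.1) ∈ R ∧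
        Classical.epsilon (fun a => a ∈ R ∧ a ∈ q.1) ∈ q.1) := by
      intro q hq
      obtain ⟨-, ⟨i, hiR, hiL⟩, -⟩ := (hmemM1s q).1 hq
      exact Classical.epsilon_spec (⟨i, hiR, hiL⟩ : ∃ a, a ∈ R ∧ a ∈ q.1)
    have hψchar : ∀ q ∈ M1s, ∀ i ∈ R, i ∈ q.1 →
        Classical.epsilon (fun a => a ∈ R ∧ a ∈ q.1) = i := by
      intro q hq i hiR hiL
      obtain ⟨hqM, -, -⟩ := (hmemM1s q).1 hq
      obtain ⟨hψR, hψL⟩ := hψ q hq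
      by_contra hne
      exact (((hMmem q).1 hqM).2.2.2 i hiR _ hψR (fun h => hne h.symm) hiL) hψL
    rw [Finset.card_eq_sum_card_fiberwise
      (f := fun q => Classical.epsilon (fun a => a ∈ R ∧ a ∈ q.1)) (t := R)
      (fun q hq => (hψ q hq).1)]
    have heach : ∀ i ∈ R,
        (M1s.filter (fun q => Classical.epsilon (fun a => a ∈ R ∧ a ∈ q.1) = i)).card =
          ((n + 1).descFactorial s - n.descFactorial s) * s := by
      intro i hiR
      have hiB : i ∉ (univ : Finset (Fin (n + r))) \ R := fun h => (Finset.mem_sdiff.1 h).2 hiR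
      have hchar : ∀ p : List (Fin (n + r)) × Fin (n + r),
          p ∈ M1s.filter (fun q => Classical.epsilon (fun a => a ∈ R ∧ a ∈ q.1) = i) ↔
            (p.1.Nodup ∧ p.1.length = s ∧
              (∀ y ∈ p.1, y ∈ insert i ((univ : Finset (Fin (n + r))) \ R)) ∧
              i ∈ p.1 ∧ p.2 ∈ p.1) := by
        intro p
        rw [Finset.mem_filter]
        constructor
        · rintro ⟨hpM1s, hψeq⟩
          obtain ⟨hpM, hex, hlen⟩ := (hmemM1s p).1 hpM1s
          obtain ⟨hnd, hSmem, hx, hpair⟩ := (hMmem p).1 hpM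
          have hiL : i ∈ p.1 := by rw [← hψeq]; exact (hψ p hpM1s).2
          exact ⟨hnd, hlen,
            fun y hy => hsub1 p hpM i hiR hiL (List.mem_toFinset.2 hy), hiL, hx⟩
        · rintro ⟨hnd, hlen, hins, hiL, hx⟩
          have hpair : ∀ i' ∈ R, ∀ j' ∈ R, i' ≠ j' → i' ∈ p.1 → j' ∉ p.1 := by
            intro i' hi' j' hj' hij hi'L hj'L
            have h1 : i' = i := by
              rcases Finset.mem_insert.1 (hins i' hi'L) with h | h
              · exact h
              · exact absurd hi' (Finset.mem_sdiff.1 h).2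
            have h2 : j' = i := by
              rcases Finset.mem_insert.1 (hins j' hj'L) with h | h
              · exact h
              · exact absurd hj' (Finset.mem_sdiff.1 h).2
            exact hij (h1.trans h2.symm)
          have hpM : p ∈ M := (hMmem p).2
            ⟨hnd, by rw [hlen]; exact ((hfinmem s).1 hs).1, hx, hpair⟩
          have hpM1s : p ∈ M1s := (hmemM1s p).2 ⟨hpM, ⟨i, hiR, hiL⟩, hlen⟩
          exact ⟨hpM1s, hψchar p hpM1s i hiR hiL⟩
      have hc := count_pairs_with ((univ : Finset (Fin (n + r))) \ R) i hiB s _ hchar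
      rwa [hBcard] at hc
    rw [Finset.sum_congr rfl heach, Finset.sum_const, smul_eq_mul, hRcard]
  have hA1 : ∑ q ∈ M.filter (fun q => ¬ ∀ i ∈ R, i ∉ q.1),
        Nat.card (PartSet S (univ \ q.1.toFinset) (R \ q.1.toFinset) (k + r - 1))
      = ∑ s ∈ hfin.toFinset,
          r * (((n + 1).descFactorial s - n.descFactorial s) * s *
            srLah S (r - 1) (n + 1 - s) k) := by
    have hw1' : ∀ q ∈ M.filter (fun q => ¬ ∀ i ∈ R, i ∉ q.1),
        Nat.card (PartSet S (univ \ q.1.toFinset) (R \ q.1.toFinset) (k + r - 1)) =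
          srLah S (r - 1) (n + 1 - q.1.length) k := by
      intro q hq
      obtain ⟨hqM, h1⟩ := Finset.mem_filter.1 hq
      push_neg at h1
      obtain ⟨i, hiR, hiL⟩ := h1
      exact hw1 q hqM i hiR hiL
    rw [Finset.sum_congr rfl hw1']
    rw [← Finset.sum_fiberwise_of_maps_to hlenfin1
      (fun q => srLah S (r - 1) (n + 1 - q.1.length) k)]
    apply Finset.sum_congr rfl
    intro s hs
    rw [Finset.sum_congr rfl (fun q hq => by rw [(Finset.mem_filter.1 hq).2]),
      Finset.sum_const, smul_eq_mul, countM1 s hs]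
    ring
  calc srLah S r n k * (n + r) = E.card := hEcard.symm
    _ = ∑ q ∈ M, (E.filter (fun p => (listOfAux p.1 p.2, p.2) = q)).card := step1
    _ = ∑ q ∈ M, Nat.card (PartSet S (univ \ q.1.toFinset) (R \ q.1.toFinset) (k + r - 1)) :=
        Finset.sum_congr rfl step2
    _ = (∑ q ∈ M.filter (fun q => ∀ i ∈ R, i ∉ q.1),
          Nat.card (PartSet S (univ \ q.1.toFinset) (R \ q.1.toFinset) (k + r - 1)))
        + ∑ q ∈ M.filter (fun q => ¬ ∀ i ∈ R, i ∉ q.1),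
          Nat.card (PartSet S (univ \ q.1.toFinset) (R \ q.1.toFinset) (k + r - 1)) :=
        (Finset.sum_filter_add_sum_filter_not M _ _).symm
    _ = _ := by rw [hA0, hA1, ← Finset.sum_add_distrib]

/-- `(n+r)·L_{S,r}(n,k) = Σ_{s∈S} s·s!·C(n,s)·L_{S,r}(n−s,k−1)
+ r·Σ_{s∈S} s·s!·C(n,s−1)·L_{S,r−1}(n−s+1,k)` for `r ≥ 1`. -/
theorem srLah_identity_colour_element (S : Set ℕ) (hS : ∀ s ∈ S, 0 < s) (r n k : ℕ)
    (hr : 1 ≤ r) (hn : 1 ≤ n) (hk : 1 ≤ k) :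
    ((n : ℤ) + r) * srLah S r n k =
      (∑ᶠ s ∈ S, (s : ℤ) * s.factorial * (n.choose s : ℤ) *
        srLahZ S r ((n : ℤ) - s) ((k : ℤ) - 1)) +
      r * ∑ᶠ s ∈ S, (s : ℤ) * s.factorial * (n.choose (s - 1) : ℤ) *
        srLahZ S (r - 1) ((n : ℤ) - s + 1) k := by
  have hfin : (S ∩ Set.Icc 1 (n + 1)).Finite := (Set.finite_Icc 1 (n + 1)).inter_of_right S
  have hv1 : ∀ s : ℕ, n + 1 < s → (s : ℤ) * s.factorial * (n.choose s : ℤ) *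
      srLahZ S r ((n : ℤ) - s) ((k : ℤ) - 1) = 0 := by
    intro s hs
    rw [Nat.choose_eq_zero_of_lt (by omega)]
    push_cast
    ring
  have hv2 : ∀ s : ℕ, n + 1 < s → (s : ℤ) * s.factorial * (n.choose (s - 1) : ℤ) *
      srLahZ S (r - 1) ((n : ℤ) - s + 1) k = 0 := by
    intro s hs
    rw [Nat.choose_eq_zero_of_lt (by omega)]
    push_cast
    ring
  rw [finsum_mem_eq_sum_sfin S hS _ n hv1 hfin, finsum_mem_eq_sum_sfin S hS _ n hv2 hfin]
  have hmain := srLah_nat_identity S hS r n k hr hk hfin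
  have hcast : ((n : ℤ) + r) * srLah S r n k = ((srLah S r n k * (n + r) : ℕ) : ℤ) := by
    push_cast
    ring
  rw [hcast, hmain, Nat.cast_sum, Finset.mul_sum, ← Finset.sum_add_distrib]
  apply Finset.sum_congr rfl
  intro s hs
  rw [Set.Finite.mem_toFinset] at hs
  obtain ⟨hsS, hsIcc⟩ := hs
  obtain ⟨hs1, hs2⟩ := Set.mem_Icc.1 hsIcc
  have part1 : ((n.descFactorial s * s * srLah S r (n - s) (k - 1) : ℕ) : ℤ)
      = (s : ℤ) * s.factorial * (n.choose s : ℤ) * srLahZ S r ((n : ℤ) - s) ((k : ℤ) - 1) := by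
    by_cases hsn : s ≤ n
    · have ha : ((n : ℤ) - s).toNat = n - s := by omega
      have hb : ((k : ℤ) - 1).toNat = k - 1 := by omega
      have hz : srLahZ S r ((n : ℤ) - s) ((k : ℤ) - 1) = (srLah S r (n - s) (k - 1) : ℤ) := by
        rw [srLahZ, if_pos ⟨by omega, by omega⟩, ha, hb]
      rw [hz, Nat.descFactorial_eq_factorial_mul_choose]
      push_cast
      ring
    · have h1 : n.descFactorial s = 0 := Nat.descFactorial_eq_zero_iff_lt.2 (by omega)
      have h2 : n.choose s = 0 := Nat.choose_eq_zero_of_lt (by omega)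
      rw [h1, h2]
      push_cast
      ring
  have part2 : ((r * (((n + 1).descFactorial s - n.descFactorial s) * s *
        srLah S (r - 1) (n + 1 - s) k) : ℕ) : ℤ)
      = (r : ℤ) * ((s : ℤ) * s.factorial * (n.choose (s - 1) : ℤ) *
          srLahZ S (r - 1) ((n : ℤ) - s + 1) k) := by
    have ha : ((n : ℤ) - s + 1).toNat = n + 1 - s := by omega
    have hb : ((k : ℤ)).toNat = k := by omega
    have hz : srLahZ S (r - 1) ((n : ℤ) - s + 1) k = (srLah S (r - 1) (n + 1 - s) k : ℤ) := by
      rw [srLahZ, if_pos ⟨by omega, by omega⟩, ha, hb]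
    rw [hz, descFactorial_diff n s hs1]
    obtain ⟨t, rfl⟩ : ∃ t, s = t + 1 := ⟨s - 1, by omega⟩
    rw [Nat.add_sub_cancel, Nat.descFactorial_eq_factorial_mul_choose]
    push_cast [Nat.factorial_succ]
    ring
  rw [Nat.cast_add, part1, part2]
end

section
/- Let S be a set of positive integers with 1 ∈ S, let r ≥ 0 and n ≥ 0 be integers. The (n+1)×(n+1) lower-triangular integer matrix A with entries A_{i,j} = L_{S,r}(i,j) for 0 ≤ i,j ≤ n has all diagonal entries equal to 1, hence is invertible over ℤ; let B = A^{−1}. Then, in the polynomial ring ℤ[x], Σ_{k=0}^{n} L_{S,r}(n,k)·x^k = (−1)^n · det M, where M is the (n+1)×(n+1) matrix over ℤ[x] with first row M_{0,j} = x^j for 0 ≤ j ≤ n, and M_{i,j} = B_{j, i−1} for 1 ≤ i ≤ n and 0 ≤ j ≤ n. -/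
open Finset
open scoped Classical

/-- The `(n+1)×(n+1)` matrix of `(S,r)`-Lah numbers. -/
noncomputable def lahMatrix (S : Set ℕ) (r n : ℕ) : Matrix (Fin (n + 1)) (Fin (n + 1)) ℤ :=
  Matrix.of fun i j => (srLah S r i j : ℤ)

/-- The inverse `(n+1)×(n+1)` matrix of `(S,r)`-Lah numbers. -/
noncomputable def lahInvMatrix (S : Set ℕ) (r n : ℕ) : Matrix (Fin (n + 1)) (Fin (n + 1)) ℤ :=
  (lahMatrix S r n)⁻¹

/-- The matrix `M` of Theorem: first row `x^j`, and `M_{i,j} = B_{j,i−1}` for `i ≥ 1`,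
where `B` is the inverse Lah matrix. -/
noncomputable def lahDetMatrix (S : Set ℕ) (r n : ℕ) :
    Matrix (Fin (n + 1)) (Fin (n + 1)) (Polynomial ℤ) :=
  Matrix.of fun i j =>
    if (i : ℕ) = 0 then Polynomial.X ^ (j : ℕ)
    else Polynomial.C
      (lahInvMatrix S r n j ⟨(i : ℕ) - 1, Nat.lt_of_le_of_lt (Nat.sub_le _ _) i.isLt⟩)

lemma listPartition_card_le {N : ℕ} {P : Finset (List (Fin N))} (hP : IsListPartition P) :
    P.card ≤ N := by
  classical
  have h := Finset.card_le_card_of_injOn (f := fun l : List (Fin N) => l.head?)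
    (t := Finset.univ.image (some : Fin N → Option (Fin N)))
    (by
      intro l hl
      obtain ⟨hne, -⟩ := hP.1 l hl
      simp [List.head?_eq_head hne])
    (by
      intro l1 h1 l2 h2 he
      obtain ⟨hne1, -⟩ := hP.1 l1 h1
      obtain ⟨hne2, -⟩ := hP.1 l2 h2
      simp only [List.head?_eq_head hne1, List.head?_eq_head hne2, Option.some_inj] at he
      have hx1 : l1.head hne1 ∈ l1 := List.head_mem hne1
      have hx2 : l1.head hne1 ∈ l2 := by rw [he]; exact List.head_mem hne2
      obtain ⟨l, -, hu⟩ := hP.2 (l1.head hne1)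
      exact (hu l1 ⟨h1, hx1⟩).trans (hu l2 ⟨h2, hx2⟩).symm)
  calc P.card ≤ _ := h
    _ ≤ (Finset.univ : Finset (Fin N)).card := Finset.card_image_le
    _ = N := by simp

lemma listPartition_sum_length {N : ℕ} {P : Finset (List (Fin N))} (hP : IsListPartition P) :
    ∑ l ∈ P, l.length = N := by
  classical
  have hg : ∀ x : Fin N, (hP.2 x).choose ∈ P ∧ x ∈ (hP.2 x).choose :=
    fun x => (hP.2 x).choose_spec.1
  have := Finset.card_eq_sum_card_fiberwise (f := fun x : Fin N => (hP.2 x).choose)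
    (s := Finset.univ) (t := P) (fun x _ => (hg x).1)
  have hfib : ∀ l ∈ P, (Finset.univ.filter (fun x : Fin N => (hP.2 x).choose = l)) = l.toFinset := by
    intro l hl
    ext x
    simp only [Finset.mem_filter, Finset.mem_univ, true_and, List.mem_toFinset]
    constructor
    · rintro rfl; exact (hg x).2
    · intro hx
      exact ((hP.2 x).choose_spec.2 l ⟨hl, hx⟩).symm ▸
        ((hP.2 x).choose_spec.2 l ⟨hl, hx⟩)
  rw [Finset.card_univ, Fintype.card_fin] at this
  refine Eq.trans ?_ this.symm
  refine Finset.sum_congr rfl fun l hl => ?_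
  rw [hfib l hl, List.toFinset_card_of_nodup (hP.1 l hl).2]

lemma srLah_eq_zero_of_lt (S : Set ℕ) (r n k : ℕ) (h : n < k) : srLah S r n k = 0 := by
  have hempty : srLahSet S r n k = ∅ := by
    ext P
    simp only [Set.mem_empty_iff_false, iff_false]
    rintro ⟨hpart, hcard, -⟩
    have hle := listPartition_card_le hpart
    omega
  rw [srLah, hempty]
  simp

lemma srLah_diag (S : Set ℕ) (h1 : (1:ℕ) ∈ S) (r n : ℕ) : srLah S r n n = 1 := by
  classical
  set P0 : Finset (List (Fin (n+r))) := Finset.univ.image (fun x => [x]) with hP0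
  have hinj : Function.Injective (fun x : Fin (n+r) => [x]) := by
    intro a b h; simpa using h
  have hmemP0 : ∀ l ∈ P0, ∃ x : Fin (n+r), l = [x] := by
    intro l hl
    obtain ⟨x, -, rfl⟩ := Finset.mem_image.mp hl
    exact ⟨x, rfl⟩
  have hmem : P0 ∈ srLahSet S r n n := by
    refine ⟨⟨?_, ?_⟩, ?_, ?_, ?_⟩
    · intro l hl
      obtain ⟨x, rfl⟩ := hmemP0 l hl
      simp
    · intro x
      refine ⟨[x], ⟨Finset.mem_image_of_mem _ (Finset.mem_univ x), by simp⟩, ?_⟩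
      rintro l ⟨hl, hxl⟩
      obtain ⟨y, rfl⟩ := hmemP0 l hl
      simp only [List.mem_singleton] at hxl
      rw [hxl]
    · rw [hP0, Finset.card_image_of_injective _ hinj, Finset.card_univ, Fintype.card_fin]
    · intro l hl
      obtain ⟨x, rfl⟩ := hmemP0 l hl
      simpa using h1
    · intro i j hi hj hij l hl hil
      obtain ⟨x, rfl⟩ := hmemP0 l hl
      simp only [List.mem_singleton] at hil ⊢
      intro hjl
      exact hij (hil.trans hjl.symm)
  have huniq : ∀ P ∈ srLahSet S r n n, P = P0 := by
    rintro P ⟨hpart, hcard, -, -⟩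
    have hsum := listPartition_sum_length hpart
    have hlen : ∀ l ∈ P, l.length = 1 := by
      have hge : ∀ l ∈ P, 1 ≤ l.length := by
        intro l hl
        have := (hpart.1 l hl).1
        exact List.length_pos_iff.mpr this
      have h0 : ∑ l ∈ P, (l.length - 1) = 0 := by
        have : ∑ l ∈ P, l.length = ∑ l ∈ P, ((l.length - 1) + 1) :=
          Finset.sum_congr rfl fun l hl => (Nat.sub_add_cancel (hge l hl)).symm
        rw [Finset.sum_add_distrib, Finset.sum_const, smul_eq_mul, mul_one] at this
        omega
      intro l hl
      have := Finset.sum_eq_zero_iff.mp h0 l hl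
      have := hge l hl
      omega
    ext l
    constructor
    · intro hl
      obtain ⟨a, rfl⟩ := List.length_eq_one_iff.mp (hlen l hl)
      exact Finset.mem_image_of_mem _ (Finset.mem_univ a)
    · intro hl
      obtain ⟨x, rfl⟩ := hmemP0 l hl
      obtain ⟨l', ⟨hl'P, hxl'⟩, -⟩ := hpart.2 x
      obtain ⟨a, rfl⟩ := List.length_eq_one_iff.mp (hlen l' hl'P)
      simp only [List.mem_singleton] at hxl'
      subst hxl'
      exact hl'P
  have hset : srLahSet S r n n = {P0} :=
    Set.eq_singleton_iff_unique_mem.mpr ⟨hmem, huniq⟩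
  rw [srLah, hset]
  simp

lemma lahMatrix_det_eq_one (S : Set ℕ) (h1 : (1:ℕ) ∈ S) (r n : ℕ) :
    (lahMatrix S r n).det = 1 := by
  rw [Matrix.det_of_lowerTriangular (lahMatrix S r n)
    (fun i j hij => by
      simp only [lahMatrix, Matrix.of_apply]
      have : (i:ℕ) < (j:ℕ) := hij
      exact_mod_cast congrArg (Nat.cast : ℕ → ℤ) (srLah_eq_zero_of_lt S r i j this))]
  refine Finset.prod_eq_one fun i _ => ?_
  simp [lahMatrix, srLah_diag S h1 r i]

theorem srLah_polynomial_det' (S : Set ℕ) (hS : ∀ s ∈ S, 0 < s) (h1 : (1 : ℕ) ∈ S)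
    (r n : ℕ) :
    (∀ i j : Fin (n + 1), (i : ℕ) < (j : ℕ) → lahMatrix S r n i j = 0) ∧
    (∀ i, lahMatrix S r n i i = 1) ∧
    IsUnit (lahMatrix S r n) ∧
    (∑ k ∈ Finset.range (n + 1), Polynomial.C (srLah S r n k : ℤ) * Polynomial.X ^ k) =
      (-1) ^ n * (lahDetMatrix S r n).det := by
  classical
  have htri : ∀ i j : Fin (n + 1), (i : ℕ) < (j : ℕ) → lahMatrix S r n i j = 0 := by
    intro i j hij
    simp [lahMatrix, srLah_eq_zero_of_lt S r i j hij]
  have hdiagm : ∀ i : Fin (n+1), lahMatrix S r n i i = 1 := by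
    intro i
    simp [lahMatrix, srLah_diag S h1 r i]
  have hdet : (lahMatrix S r n).det = 1 := lahMatrix_det_eq_one S h1 r n
  have hdetu : IsUnit (lahMatrix S r n).det := by rw [hdet]; exact isUnit_one
  have hunit : IsUnit (lahMatrix S r n) := (Matrix.isUnit_iff_isUnit_det _).mpr hdetu
  refine ⟨htri, hdiagm, hunit, ?_⟩
  set A := lahMatrix S r n with hA
  set B := lahInvMatrix S r n with hB
  have hBA : B * A = 1 := Matrix.nonsing_inv_mul A hdetu
  have hdetB : B.det = 1 := by
    have h := Matrix.det_mul B A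
    rw [hBA, Matrix.det_one, hdet, mul_one] at h
    exact h.symm
  set p : Fin (n+1) → Polynomial ℤ :=
    fun k => ∑ m : Fin (n+1), Polynomial.C (A k m) * Polynomial.X ^ (m:ℕ) with hp
  set T : Matrix (Fin (n+1)) (Fin (n+1)) (Polynomial ℤ) := Matrix.of fun i j =>
    if (i:ℕ) = 0 then p j else if (j:ℕ) = (i:ℕ) - 1 then 1 else 0 with hT
  set Nmat : Matrix (Fin (n+1)) (Fin (n+1)) (Polynomial ℤ) :=
    Matrix.of fun i j => Polynomial.C (B j i) with hN
  have hM : lahDetMatrix S r n = T * Nmat := by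
    ext i j : 1
    rw [Matrix.mul_apply]
    by_cases hi : (i:ℕ) = 0
    · have key : (∑ k, T i k * Nmat k j) = Polynomial.X ^ (j:ℕ) := by
        simp only [hT, hN, Matrix.of_apply, hi, if_true, hp]
        calc (∑ k, (∑ m : Fin (n+1), Polynomial.C (A k m) * Polynomial.X ^ (m:ℕ)) *
                Polynomial.C (B j k))
            = ∑ k, ∑ m : Fin (n+1), Polynomial.C (B j k * A k m) * Polynomial.X ^ (m:ℕ) := by
              refine Finset.sum_congr rfl fun k _ => ?_
              rw [Finset.sum_mul]
              refine Finset.sum_congr rfl fun m _ => ?_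
              rw [map_mul]; ring
          _ = ∑ m : Fin (n+1), ∑ k, Polynomial.C (B j k * A k m) * Polynomial.X ^ (m:ℕ) :=
              Finset.sum_comm
          _ = ∑ m : Fin (n+1), Polynomial.C ((B * A) j m) * Polynomial.X ^ (m:ℕ) := by
              refine Finset.sum_congr rfl fun m _ => ?_
              rw [← Finset.sum_mul, ← map_sum, Matrix.mul_apply]
          _ = Polynomial.X ^ (j:ℕ) := by
              rw [hBA]
              simp only [Matrix.one_apply, apply_ite Polynomial.C, map_one, map_zero,
                ite_mul, one_mul, zero_mul, Finset.sum_ite_eq, Finset.mem_univ, if_true]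
      rw [key]
      simp [lahDetMatrix, hi, Fin.val_eq_zero_iff.mp hi]
    · set k0 : Fin (n+1) := ⟨(i:ℕ) - 1, Nat.lt_of_le_of_lt (Nat.sub_le _ _) i.isLt⟩ with hk0
      have key : (∑ k, T i k * Nmat k j) = Polynomial.C (B j k0) := by
        rw [Finset.sum_eq_single k0]
        · simp [hT, hN, hi, hk0, (show i ≠ 0 from fun h => hi (by rw [h]; rfl))]
        · intro k _ hk
          have hkv : (k:ℕ) ≠ (i:ℕ) - 1 := by
            intro hc
            exact hk (Fin.ext hc)
          simp [hT, hN, hi, hkv, (show i ≠ 0 from fun h => hi (by rw [h]; rfl))]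
        · intro h; exact absurd (Finset.mem_univ k0) h
      rw [key]
      simp [lahDetMatrix, hi, (show i ≠ 0 from fun h => hi (by rw [h]; rfl)), hB, hk0]
  have hdetT : T.det = (-1)^n * p (Fin.last n) := by
    rw [Matrix.det_succ_row_zero]
    rw [Finset.sum_eq_single (Fin.last n)]
    · have hsub : (T.submatrix Fin.succ (Fin.last n).succAbove) = 1 := by
        ext a b
        simp only [Matrix.submatrix_apply, hT, Matrix.of_apply, Fin.succAbove_last,
          Matrix.one_apply]
        rw [if_neg (by simp)]
        have : ((b.castSucc : ℕ) = (a.succ : ℕ) - 1) ↔ (a = b) := by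
          simp [Fin.ext_iff, Fin.val_succ, Fin.coe_castSucc, eq_comm]
        rw [if_congr this rfl rfl]
      rw [hsub, Matrix.det_one, mul_one]
      have : T 0 (Fin.last n) = p (Fin.last n) := by simp [hT]
      rw [this, Fin.val_last]
    · intro j _ hj
      have hjlt : (j:ℕ) < n := by
        have := j.isLt
        have hne : (j:ℕ) ≠ n := fun hc => hj (Fin.ext (by simp [hc]))
        omega
      have hzero : (T.submatrix Fin.succ j.succAbove).det = 0 := by
        apply Matrix.det_eq_zero_of_row_eq_zero ⟨(j:ℕ), hjlt⟩
        intro b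
        simp only [Matrix.submatrix_apply, hT, Matrix.of_apply]
        rw [if_neg (by simp), if_neg ?_]
        intro hc
        have : j.succAbove b = j := by
          apply Fin.ext
          simpa using hc
        exact Fin.succAbove_ne j b this
      rw [hzero, mul_zero]
    · intro h; exact absurd (Finset.mem_univ _) h
  have hdetN : Nmat.det = 1 := by
    have hNe : Nmat = (Polynomial.C : ℤ →+* Polynomial ℤ).mapMatrix B.transpose := by
      ext i j
      simp [hN, Matrix.transpose_apply]
    rw [hNe, ← RingHom.map_det, Matrix.det_transpose, hdetB, map_one]
  rw [hM, Matrix.det_mul, hdetT, hdetN, mul_one, ← mul_assoc, ← mul_pow, neg_mul_neg,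
    one_mul, one_pow, one_mul,
    ← Fin.sum_univ_eq_sum_range (fun k => Polynomial.C ((srLah S r n k : ℤ)) * Polynomial.X ^ k)
      (n+1)]
  simp only [hp]
  refine Finset.sum_congr rfl fun m _ => ?_
  simp [hA, lahMatrix, Fin.val_last]
/-- the Lah matrix is lower triangular with unit diagonal, hence invertible
over ℤ, and the `(S,r)`-Lah polynomial equals `(−1)ⁿ` times the determinant of `M`. -/
theorem srLah_polynomial_det (S : Set ℕ) (hS : ∀ s ∈ S, 0 < s) (h1 : (1 : ℕ) ∈ S)
    (r n : ℕ) :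
    (∀ i j : Fin (n + 1), (i : ℕ) < (j : ℕ) → lahMatrix S r n i j = 0) ∧
    (∀ i, lahMatrix S r n i i = 1) ∧
    IsUnit (lahMatrix S r n) ∧
    (∑ k ∈ Finset.range (n + 1), Polynomial.C (srLah S r n k : ℤ) * Polynomial.X ^ k) =
      (-1) ^ n * (lahDetMatrix S r n).det :=
  srLah_polynomial_det' S hS h1 r n
end

section
/- Let S be a set of positive integers, r ≥ 0 an integer, and n, k natural numbers. Then L_{S,r}(n,k) equals the number of pairs (ℓ̃, a) where: ℓ̃ = (ℓ̃_1,…,ℓ̃_r) is an r-tuple of asterisk lists with labels from {1,…,n} such that the size of each ℓ̃_i belongs to S−1 = {s−1 : s ∈ S}; a is a set of k pairwise disjoint non-empty lists with labels from {1,…,n}, each of length belonging to S; and the underlying sets of the lists ℓ̃_1,…,ℓ̃_r and of the lists in a are pairwise disjoint and their union is {1,…,n}. -/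
open Finset
open scoped Classical

namespace SrLahAux

lemma append_cons_inj {α : Type*} {x : α} {A A' B B' : List α} (hA : x ∉ A) (hA' : x ∉ A')
    (h : A ++ x :: B = A' ++ x :: B') : A = A' ∧ B = B' := by
  induction A generalizing A' with
  | nil =>
    cases A' with
    | nil => simpa using h
    | cons a t =>
      simp only [List.nil_append, List.cons_append, List.cons.injEq] at h
      exact absurd (by rw [h.1]; exact List.mem_cons_self) hA'
  | cons a t ih =>
    cases A' with
    | nil =>
      simp only [List.nil_append, List.cons_append, List.cons.injEq] at h
      exact absurd (by rw [← h.1]; exact List.mem_cons_self) hA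
    | cons a' t' =>
      simp only [List.cons_append, List.cons.injEq] at h
      obtain ⟨h1, h2⟩ := h
      have := ih (fun hx => hA (List.mem_cons_of_mem _ hx))
        (fun hx => hA' (List.mem_cons_of_mem _ hx)) h2
      exact ⟨by rw [h1, this.1], this.2⟩

lemma eq_take_drop {α : Type*} [DecidableEq α] {e : α} {l : List α} (h : e ∈ l) :
    l = l.takeWhile (· ≠ e) ++ e :: (l.dropWhile (· ≠ e)).tail := by
  induction l with
  | nil => simp at h
  | cons a t ih =>
    by_cases ha : a = e
    · subst ha
      simp [List.takeWhile_cons, List.dropWhile_cons]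
    · have he : e ∈ t := by
        rcases List.mem_cons.mp h with h1 | h1
        · exact absurd h1.symm ha
        · exact h1
      simp only [List.takeWhile_cons, List.dropWhile_cons, decide_eq_true_eq]
      rw [if_pos ha, if_pos ha]
      simpa using congrArg (a :: ·) (ih he)

lemma mem_takeWhile_ne {α : Type*} [DecidableEq α] {e x : α} {l : List α}
    (h : x ∈ l.takeWhile (· ≠ e)) : x ∈ l ∧ x ≠ e := by
  refine ⟨(List.takeWhile_sublist _).mem h, ?_⟩
  have := List.mem_takeWhile_imp h
  simpa using this

def upF (r n : ℕ) (x : Fin n) : Fin (n + r) := ⟨x.val + r, by omega⟩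

lemma upF_injective (r n : ℕ) : Function.Injective (upF r n) := by
  intro x y h
  simp only [upF, Fin.mk.injEq] at h
  exact Fin.ext (by omega)

def downL (r n : ℕ) (l : List (Fin (n + r))) : List (Fin n) :=
  l.filterMap fun x => if h : r ≤ x.val then some ⟨x.val - r, by have := x.isLt; omega⟩ else none

lemma mem_downL {r n : ℕ} {l : List (Fin (n + r))} {x : Fin n} :
    x ∈ downL r n l ↔ upF r n x ∈ l := by
  simp only [downL, List.mem_filterMap]
  constructor
  · rintro ⟨y, hy, hxy⟩
    split at hxy
    · rename_i hr
      rw [Option.some.injEq] at hxy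
      have hv := congrArg Fin.val hxy
      simp only at hv
      have : y = upF r n x := Fin.ext (by simp [upF]; omega)
      exact this ▸ hy
    · simp at hxy
  · intro h
    refine ⟨upF r n x, h, ?_⟩
    rw [dif_pos (by simp [upF])]
    simp [upF]

lemma map_upF_downL {r n : ℕ} {l : List (Fin (n + r))} (h : ∀ x ∈ l, r ≤ x.val) :
    (downL r n l).map (upF r n) = l := by
  induction l with
  | nil => rfl
  | cons a t ih =>
    have ha := h a (by simp)
    simp only [downL, List.filterMap_cons, dif_pos ha]
    simp only [List.map_cons]
    rw [show upF r n ⟨a.val - r, _⟩ = a from Fin.ext (by simp [upF]; omega)]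
    exact congrArg (a :: ·) (ih (fun x hx => h x (by simp [hx])))

lemma downL_map_upF {r n : ℕ} (l : List (Fin n)) :
    downL r n (l.map (upF r n)) = l := by
  have hall : ∀ x ∈ l.map (upF r n), r ≤ x.val := by
    rintro x hx
    simp only [List.mem_map] at hx
    obtain ⟨y, _, rfl⟩ := hx
    simp [upF]
  have := map_upF_downL (r := r) (n := n) hall
  exact List.map_injective_iff.mpr (upF_injective r n) this

lemma downL_append {r n : ℕ} (l l' : List (Fin (n + r))) :
    downL r n (l ++ l') = downL r n l ++ downL r n l' := List.filterMap_append ..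

lemma nodup_downL {r n : ℕ} {l : List (Fin (n + r))} (h : ∀ x ∈ l, r ≤ x.val)
    (hl : l.Nodup) : (downL r n l).Nodup := by
  have := map_upF_downL (r := r) h
  exact List.Nodup.of_map _ (this ▸ hl)

lemma length_downL {r n : ℕ} {l : List (Fin (n + r))} (h : ∀ x ∈ l, r ≤ x.val) :
    (downL r n l).length = l.length := by
  conv_rhs => rw [← map_upF_downL h]
  simp

def ei (r n : ℕ) (i : Fin r) : Fin (n + r) := ⟨i.val, by omega⟩

lemma ei_lt (r n : ℕ) (i : Fin r) : (ei r n i).val < r := i.isLt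

lemma upF_ge (r n : ℕ) (x : Fin n) : r ≤ (upF r n x).val := by simp [upF]


variable {r n : ℕ}

def Gl (r n : ℕ) (f : Fin r → List (Fin n) × List (Fin n)) (i : Fin r) :
    List (Fin (n + r)) :=
  ((f i).1.map (upF r n)) ++ ei r n i :: ((f i).2.map (upF r n))

def GP (r n : ℕ) (f : Fin r → List (Fin n) × List (Fin n)) (a : Finset (List (Fin n))) :
    Finset (List (Fin (n + r))) :=
  a.image (List.map (upF r n)) ∪ Finset.image (Gl r n f) Finset.univ

lemma mem_Gl {f : Fin r → List (Fin n) × List (Fin n)} {i : Fin r} {x : Fin (n + r)} :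
    x ∈ Gl r n f i ↔ x = ei r n i ∨ ∃ y, (y ∈ (f i).1 ∨ y ∈ (f i).2) ∧ upF r n y = x := by
  simp only [Gl, List.mem_append, List.mem_cons, List.mem_map]
  constructor
  · rintro (⟨y, hy, hyx⟩ | h | ⟨y, hy, hyx⟩)
    · exact Or.inr ⟨y, Or.inl hy, hyx⟩
    · exact Or.inl h
    · exact Or.inr ⟨y, Or.inr hy, hyx⟩
  · rintro (h | ⟨y, hy | hy, hyx⟩)
    · exact Or.inr (Or.inl h)
    · exact Or.inl ⟨y, hy, hyx⟩
    · exact Or.inr (Or.inr ⟨y, hy, hyx⟩)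

lemma ei_mem_Gl (f : Fin r → List (Fin n) × List (Fin n)) (i : Fin r) :
    ei r n i ∈ Gl r n f i := by simp [Gl]

lemma eq_ei_of_mem_Gl {f : Fin r → List (Fin n) × List (Fin n)} {i : Fin r} {x : Fin (n + r)}
    (hx : x ∈ Gl r n f i) (hlt : x.val < r) : x = ei r n i := by
  rcases mem_Gl.mp hx with h | ⟨y, _, rfl⟩
  · exact h
  · exact absurd (upF_ge r n y) (by omega)

lemma mem_Gl_ge {f : Fin r → List (Fin n) × List (Fin n)} {i : Fin r} {x : Fin (n + r)}
    (hx : x ∈ Gl r n f i) (hne : x ≠ ei r n i) : r ≤ x.val := by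
  by_contra h
  exact hne (eq_ei_of_mem_Gl hx (by omega))

lemma upF_mem_Gl {f : Fin r → List (Fin n) × List (Fin n)} {i : Fin r} {y : Fin n} :
    upF r n y ∈ Gl r n f i ↔ y ∈ (f i).1 ++ (f i).2 := by
  rw [mem_Gl]
  constructor
  · rintro (h | ⟨z, hz, hzy⟩)
    · exact absurd (congrArg Fin.val h) (by have := upF_ge r n y; have := ei_lt r n i; omega)
    · rw [List.mem_append]; exact (upF_injective r n hzy) ▸ hz
  · intro h
    rw [List.mem_append] at h
    exact Or.inr ⟨y, h, rfl⟩

lemma Gl_ne_map {f : Fin r → List (Fin n) × List (Fin n)} {i : Fin r} {m : List (Fin n)} :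
    Gl r n f i ≠ m.map (upF r n) := by
  intro h
  have := h ▸ ei_mem_Gl f i
  simp only [List.mem_map] at this
  obtain ⟨y, _, hy⟩ := this
  have := congrArg Fin.val hy
  have := ei_lt r n i
  simp only [upF, ei] at *
  omega

lemma Gl_eq_Gl_iff {f g : Fin r → List (Fin n) × List (Fin n)} {i j : Fin r}
    (h : Gl r n f i = Gl r n g j) : i = j := by
  have := h ▸ ei_mem_Gl f i
  have := eq_ei_of_mem_Gl this (ei_lt r n i)
  have := congrArg Fin.val this
  exact Fin.ext (by simpa [ei] using this)

lemma mem_GP {f : Fin r → List (Fin n) × List (Fin n)} {a : Finset (List (Fin n))}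
    {l : List (Fin (n + r))} :
    l ∈ GP r n f a ↔ (∃ m ∈ a, m.map (upF r n) = l) ∨ ∃ i, Gl r n f i = l := by
  simp [GP, Finset.mem_union, Finset.mem_image]

lemma card_GP (f : Fin r → List (Fin n) × List (Fin n)) (a : Finset (List (Fin n))) :
    (GP r n f a).card = a.card + r := by
  rw [GP, Finset.card_union_of_disjoint, Finset.card_image_of_injective _
    (List.map_injective_iff.mpr (upF_injective r n)),
    Finset.card_image_of_injective _ (fun i j h => Gl_eq_Gl_iff h), Finset.card_univ,
    Fintype.card_fin]
  · rw [Finset.disjoint_left]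
    rintro l hl hr'
    simp only [Finset.mem_image] at hl hr'
    obtain ⟨m, _, rfl⟩ := hl
    obtain ⟨i, _, hi⟩ := hr'
    exact Gl_ne_map hi

lemma nodup_Gl {f : Fin r → List (Fin n) × List (Fin n)} {i : Fin r}
    (h : ((f i).1 ++ (f i).2).Nodup) : (Gl r n f i).Nodup := by
  rw [Gl, List.nodup_middle, List.nodup_cons]
  constructor
  · intro hmem
    rw [← List.map_append, List.mem_map] at hmem
    obtain ⟨y, _, hy⟩ := hmem
    have := congrArg Fin.val hy
    have := ei_lt r n i
    simp only [upF, ei] at *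
    omega
  · rw [← List.map_append]
    exact h.map (upF_injective r n)

lemma GP_mem_srLahSet (S : Set ℕ) (k : ℕ)
    (f : Fin r → List (Fin n) × List (Fin n)) (a : Finset (List (Fin n)))
    (h1 : ∀ i, ((f i).1 ++ (f i).2).Nodup ∧ (f i).1.length + (f i).2.length + 1 ∈ S)
    (h2 : a.card = k)
    (h3 : ∀ l ∈ a, l ≠ [] ∧ l.Nodup ∧ l.length ∈ S)
    (h4 : ∀ x : Fin n, (∃ i, x ∈ (f i).1 ++ (f i).2) ∨ ∃ l ∈ a, x ∈ l)
    (h5 : ∀ i j, i ≠ j → ∀ x, x ∈ (f i).1 ++ (f i).2 → x ∉ (f j).1 ++ (f j).2)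
    (h6 : ∀ i, ∀ l ∈ a, ∀ x, x ∈ (f i).1 ++ (f i).2 → x ∉ l)
    (h7 : ∀ l ∈ a, ∀ l' ∈ a, l ≠ l' → ∀ x ∈ l, x ∉ l') :
    GP r n f a ∈ srLahSet S r n k := by
  have hmapmem : ∀ {m : List (Fin n)} {x : Fin n}, x ∈ m ↔ upF r n x ∈ m.map (upF r n) := by
    intro m x
    constructor
    · exact fun h => List.mem_map_of_mem h
    · intro h
      obtain ⟨y, hy, hyx⟩ := List.mem_map.mp h
      exact (upF_injective r n hyx) ▸ hy
  have hlow : ∀ {m : List (Fin n)} {x : Fin (n + r)}, x ∈ m.map (upF r n) → r ≤ x.val := by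
    intro m x hx
    obtain ⟨y, _, rfl⟩ := List.mem_map.mp hx
    exact upF_ge r n y
  refine ⟨⟨?_, ?_⟩, ?_, ?_, ?_⟩
  · -- nonempty & nodup
    intro l hl
    rcases mem_GP.mp hl with ⟨m, hm, rfl⟩ | ⟨i, rfl⟩
    · exact ⟨by simpa using (h3 m hm).1, (h3 m hm).2.1.map (upF_injective r n)⟩
    · exact ⟨by simp [Gl], nodup_Gl (h1 i).1⟩
  · -- ∃!
    intro x
    by_cases hx : x.val < r
    · set i : Fin r := ⟨x.val, hx⟩ with hi
      have hxei : x = ei r n i := Fin.ext rfl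
      refine ⟨Gl r n f i, ⟨mem_GP.mpr (Or.inr ⟨i, rfl⟩), hxei ▸ ei_mem_Gl f i⟩, ?_⟩
      rintro l ⟨hl, hxl⟩
      rcases mem_GP.mp hl with ⟨m, hm, rfl⟩ | ⟨j, rfl⟩
      · exact absurd (hlow hxl) (by omega)
      · have := eq_ei_of_mem_Gl hxl hx
        have hij : j = i := Fin.ext (by
          have := congrArg Fin.val (hxei ▸ this)
          simpa [ei] using this.symm)
        rw [hij]
    · push_neg at hx
      set y : Fin n := ⟨x.val - r, by have := x.isLt; omega⟩ with hy
      have hxy : x = upF r n y := Fin.ext (by simp [upF, hy]; omega)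
      rcases h4 y with ⟨i, hyi⟩ | ⟨m, hm, hym⟩
      · refine ⟨Gl r n f i, ⟨mem_GP.mpr (Or.inr ⟨i, rfl⟩), hxy ▸ upF_mem_Gl.mpr hyi⟩, ?_⟩
        rintro l ⟨hl, hxl⟩
        rcases mem_GP.mp hl with ⟨m, hm, rfl⟩ | ⟨j, rfl⟩
        · have : y ∈ m := hmapmem.mpr (hxy ▸ hxl)
          exact absurd this (h6 i m hm y hyi)
        · have hyj : y ∈ (f j).1 ++ (f j).2 := upF_mem_Gl.mp (hxy ▸ hxl)
          by_cases hij : j = i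
          · rw [hij]
          · exact absurd hyj (h5 i j (Ne.symm hij) y hyi)
      · refine ⟨m.map (upF r n), ⟨mem_GP.mpr (Or.inl ⟨m, hm, rfl⟩),
          hxy ▸ hmapmem.mp hym⟩, ?_⟩
        rintro l ⟨hl, hxl⟩
        rcases mem_GP.mp hl with ⟨m', hm', rfl⟩ | ⟨j, rfl⟩
        · have hym' : y ∈ m' := hmapmem.mpr (hxy ▸ hxl)
          by_cases hmm : m' = m
          · rw [hmm]
          · exact absurd hym (h7 m' hm' m hm hmm y hym')
        · have hyj : y ∈ (f j).1 ++ (f j).2 := upF_mem_Gl.mp (hxy ▸ hxl)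
          exact absurd hym (h6 j m hm y hyj)
  · rw [card_GP, h2]
  · -- lengths
    intro l hl
    rcases mem_GP.mp hl with ⟨m, hm, rfl⟩ | ⟨i, rfl⟩
    · simpa using (h3 m hm).2.2
    · have hlen : (Gl r n f i).length = (f i).1.length + (f i).2.length + 1 := by
        simp [Gl]; omega
      rw [hlen]; exact (h1 i).2
  · -- first r in distinct lists
    intro i j hi hj hij l hl hil hjl
    rcases mem_GP.mp hl with ⟨m, hm, rfl⟩ | ⟨i', rfl⟩
    · exact absurd (hlow hil) (by omega)
    · have h1' := eq_ei_of_mem_Gl hil hi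
      have h2' := eq_ei_of_mem_Gl hjl hj
      exact hij (h1' ▸ h2' ▸ rfl)


lemma GP_inj {f g : Fin r → List (Fin n) × List (Fin n)} {a b : Finset (List (Fin n))}
    (h : GP r n f a = GP r n g b) : f = g ∧ a = b := by
  have hsub : ∀ (f g : Fin r → List (Fin n) × List (Fin n)) (a b : Finset (List (Fin n))),
      GP r n f a = GP r n g b → a ⊆ b := by
    intro f g a b h m hm
    have : m.map (upF r n) ∈ GP r n g b := h ▸ mem_GP.mpr (Or.inl ⟨m, hm, rfl⟩)
    rcases mem_GP.mp this with ⟨m', hm', heq⟩ | ⟨j, hj⟩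
    · exact (List.map_injective_iff.mpr (upF_injective r n) heq) ▸ hm'
    · exact absurd hj Gl_ne_map
  constructor
  · funext i
    have : Gl r n f i ∈ GP r n g b := h ▸ mem_GP.mpr (Or.inr ⟨i, rfl⟩)
    rcases mem_GP.mp this with ⟨m, _, heq⟩ | ⟨j, hj⟩
    · exact absurd heq.symm Gl_ne_map
    · have hji : j = i := Gl_eq_Gl_iff hj
      subst hji
      rw [Gl, Gl] at hj
      have hnA : ∀ (A : List (Fin n)), ei r n j ∉ A.map (upF r n) := by
        intro A hA
        obtain ⟨y, _, hy⟩ := List.mem_map.mp hA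
        have := congrArg Fin.val hy
        have := ei_lt r n j
        simp only [upF, ei] at *
        omega
      obtain ⟨hA, hB⟩ := append_cons_inj (hnA _) (hnA _) hj
      have e1 := List.map_injective_iff.mpr (upF_injective r n) hA
      have e2 := List.map_injective_iff.mpr (upF_injective r n) hB
      exact Prod.ext e1.symm e2.symm
  · exact Finset.Subset.antisymm (hsub f g a b h) (hsub g f b a h.symm)


lemma GP_surj (S : Set ℕ) (k : ℕ) (P : Finset (List (Fin (n + r))))
    (hP : P ∈ srLahSet S r n k) :
    ∃ (f : Fin r → List (Fin n) × List (Fin n)) (a : Finset (List (Fin n))),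
      (∀ i, ((f i).1 ++ (f i).2).Nodup ∧ (f i).1.length + (f i).2.length + 1 ∈ S) ∧
      a.card = k ∧
      (∀ l ∈ a, l ≠ [] ∧ l.Nodup ∧ l.length ∈ S) ∧
      (∀ x : Fin n, (∃ i, x ∈ (f i).1 ++ (f i).2) ∨ ∃ l ∈ a, x ∈ l) ∧
      (∀ i j, i ≠ j → ∀ x, x ∈ (f i).1 ++ (f i).2 → x ∉ (f j).1 ++ (f j).2) ∧
      (∀ i, ∀ l ∈ a, ∀ x, x ∈ (f i).1 ++ (f i).2 → x ∉ l) ∧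
      (∀ l ∈ a, ∀ l' ∈ a, l ≠ l' → ∀ x ∈ l, x ∉ l') ∧
      GP r n f a = P := by
  obtain ⟨⟨hne, huniq⟩, hcard, hlen, hdist⟩ := hP
  choose li hli using fun i : Fin r => huniq (ei r n i)
  have hmem : ∀ i, li i ∈ P := fun i => (hli i).1.1
  have hei : ∀ i, ei r n i ∈ li i := fun i => (hli i).1.2
  have huni : ∀ i, ∀ l, l ∈ P ∧ ei r n i ∈ l → l = li i := fun i => (hli i).2
  set A := fun i => (li i).takeWhile (· ≠ ei r n i) with hA
  set B := fun i => ((li i).dropWhile (· ≠ ei r n i)).tail with hB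
  have hdecomp : ∀ i, li i = A i ++ ei r n i :: B i := fun i => eq_take_drop (hei i)
  have hnodup : ∀ i, (li i).Nodup := fun i => (hne _ (hmem i)).2
  have hmid : ∀ i, ei r n i ∉ A i ++ B i ∧ (A i ++ B i).Nodup := by
    intro i
    have := hnodup i
    rw [hdecomp i, List.nodup_middle, List.nodup_cons] at this
    exact this
  have hnolow : ∀ i, ∀ x ∈ li i, x ≠ ei r n i → r ≤ x.val := by
    intro i x hx hne'
    by_contra hlt
    push_neg at hlt
    exact hdist (ei r n i) x (ei_lt r n i) hlt (Ne.symm hne') (li i) (hmem i) (hei i) hx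
  have hABlow : ∀ i, ∀ x ∈ A i ++ B i, r ≤ x.val := by
    intro i x hx
    have hxli : x ∈ li i := by
      rw [hdecomp i]
      rcases List.mem_append.mp hx with h | h
      · exact List.mem_append_left _ h
      · exact List.mem_append_right _ (List.mem_cons_of_mem _ h)
    have hxne : x ≠ ei r n i := fun hxe => (hmid i).1 (hxe ▸ hx)
    exact hnolow i x hxli hxne
  set f := fun i => (downL r n (A i), downL r n (B i)) with hf
  set a := (P.filter (fun l => ∀ x ∈ l, r ≤ x.val)).image (downL r n) with ha
  have hKA : ∀ i, ((f i).1).map (upF r n) = A i := fun i =>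
    map_upF_downL (fun x hx => hABlow i x (List.mem_append_left _ hx))
  have hKB : ∀ i, ((f i).2).map (upF r n) = B i := fun i =>
    map_upF_downL (fun x hx => hABlow i x (List.mem_append_right _ hx))
  have hGl : ∀ i, Gl r n f i = li i := by
    intro i
    rw [Gl, hKA, hKB, ← hdecomp]
  have hfiAB : ∀ i x, x ∈ (f i).1 ++ (f i).2 ↔ upF r n x ∈ A i ++ B i := by
    intro i x
    simp only [List.mem_append, hf, mem_downL]
  have hamem : ∀ {m : List (Fin n)}, m ∈ a ↔
      ∃ l, (l ∈ P ∧ ∀ x ∈ l, r ≤ x.val) ∧ downL r n l = m := by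
    intro m
    simp [ha, Finset.mem_image, Finset.mem_filter, and_assoc]
  have hup : ∀ {l : List (Fin (n + r))}, (∀ x ∈ l, r ≤ x.val) →
      ∀ {x : Fin n}, x ∈ downL r n l ↔ upF r n x ∈ l := fun _ => mem_downL
  -- GP f a = P
  have hGP : GP r n f a = P := by
    apply Finset.ext
    intro l
    constructor
    · intro hl
      rcases mem_GP.mp hl with ⟨m, hm, rfl⟩ | ⟨i, rfl⟩
      · obtain ⟨l0, ⟨hl0P, hl0low⟩, rfl⟩ := hamem.mp hm
        rwa [map_upF_downL hl0low]
      · rw [hGl]; exact hmem i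
    · intro hl
      by_cases hlow : ∀ x ∈ l, r ≤ x.val
      · apply mem_GP.mpr
        exact Or.inl ⟨downL r n l, hamem.mpr ⟨l, ⟨hl, hlow⟩, rfl⟩, map_upF_downL hlow⟩
      · push_neg at hlow
        obtain ⟨x, hxl, hxlt⟩ := hlow
        set i : Fin r := ⟨x.val, hxlt⟩ with hi
        have hxei : x = ei r n i := Fin.ext rfl
        have : l = li i := huni i l ⟨hl, hxei ▸ hxl⟩
        exact mem_GP.mpr (Or.inr ⟨i, this ▸ hGl i⟩)
  have hlilen : ∀ i, (li i).length = (A i).length + (B i).length + 1 := by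
    intro i
    rw [hdecomp i]
    simp; omega
  refine ⟨f, a, ?_, ?_, ?_, ?_, ?_, ?_, ?_, hGP⟩
  · -- h1
    intro i
    constructor
    · have : (f i).1 ++ (f i).2 = downL r n (A i ++ B i) := (downL_append _ _).symm
      rw [this]
      exact nodup_downL (hABlow i) (hmid i).2
    · have : (f i).1.length + (f i).2.length + 1 = (li i).length := by
        rw [hlilen i]
        have lA : (f i).1.length = (A i).length := by rw [← hKA i]; simp
        have lB : (f i).2.length = (B i).length := by rw [← hKB i]; simp
        omega
      rw [this]
      exact hlen _ (hmem i)
  · -- card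
    have := card_GP f a
    rw [hGP, hcard] at this
    omega
  · -- h3
    intro m hm
    obtain ⟨l0, ⟨hl0P, hl0low⟩, rfl⟩ := hamem.mp hm
    have hlenl : (downL r n l0).length = l0.length := length_downL hl0low
    refine ⟨?_, nodup_downL hl0low (hne _ hl0P).2, hlenl ▸ hlen _ hl0P⟩
    intro hnil
    have := hlenl ▸ congrArg List.length hnil
    simp only [List.length_nil] at this
    exact (hne _ hl0P).1 (List.eq_nil_of_length_eq_zero this)
  · -- h4
    intro y
    obtain ⟨l, ⟨hlP, hyl⟩, -⟩ := huniq (upF r n y)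
    by_cases hlow : ∀ x ∈ l, r ≤ x.val
    · exact Or.inr ⟨downL r n l, hamem.mpr ⟨l, ⟨hlP, hlow⟩, rfl⟩, mem_downL.mpr hyl⟩
    · push_neg at hlow
      obtain ⟨x, hxl, hxlt⟩ := hlow
      set i : Fin r := ⟨x.val, hxlt⟩ with hi
      have : l = li i := huni i l ⟨hlP, (Fin.ext rfl : x = ei r n i) ▸ hxl⟩
      subst this
      left
      refine ⟨i, (hfiAB i y).mpr ?_⟩
      have hyli := hyl
      rw [hdecomp i] at hyli
      rcases List.mem_append.mp hyli with h | h
      · exact List.mem_append_left _ h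
      · rcases List.mem_cons.mp h with h1 | h1
        · exact absurd (congrArg Fin.val h1)
            (by have := upF_ge r n y; have := ei_lt r n i; omega)
        · exact List.mem_append_right _ h1
  · -- h5
    intro i j hij y hyi hyj
    have h1 : upF r n y ∈ li i := by
      rw [hdecomp i]
      rcases List.mem_append.mp ((hfiAB i y).mp hyi) with h | h
      · exact List.mem_append_left _ h
      · exact List.mem_append_right _ (List.mem_cons_of_mem _ h)
    have h2 : upF r n y ∈ li j := by
      rw [hdecomp j]
      rcases List.mem_append.mp ((hfiAB j y).mp hyj) with h | h
      · exact List.mem_append_left _ h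
      · exact List.mem_append_right _ (List.mem_cons_of_mem _ h)
    have heq : li i = li j := (huniq (upF r n y)).unique ⟨hmem i, h1⟩ ⟨hmem j, h2⟩
    have : ei r n j ∈ li i := heq ▸ hei j
    have hne' : ei r n i ≠ ei r n j := by
      intro h
      exact hij (Fin.ext (by simpa [ei] using congrArg Fin.val h))
    exact hdist (ei r n i) (ei r n j) (ei_lt r n i) (ei_lt r n j) hne' (li i)
      (hmem i) (hei i) this
  · -- h6
    intro i m hm y hyi hym
    obtain ⟨l0, ⟨hl0P, hl0low⟩, rfl⟩ := hamem.mp hm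
    have h1 : upF r n y ∈ li i := by
      rw [hdecomp i]
      rcases List.mem_append.mp ((hfiAB i y).mp hyi) with h | h
      · exact List.mem_append_left _ h
      · exact List.mem_append_right _ (List.mem_cons_of_mem _ h)
    have h2 : upF r n y ∈ l0 := mem_downL.mp hym
    have heq : li i = l0 := (huniq (upF r n y)).unique ⟨hmem i, h1⟩ ⟨hl0P, h2⟩
    have := hl0low (ei r n i) (heq ▸ hei i)
    have := ei_lt r n i
    omega
  · -- h7
    intro m hm m' hm' hne' y hym hym'
    obtain ⟨l0, ⟨hl0P, hl0low⟩, rfl⟩ := hamem.mp hm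
    obtain ⟨l1, ⟨hl1P, hl1low⟩, rfl⟩ := hamem.mp hm'
    have h1 : upF r n y ∈ l0 := mem_downL.mp hym
    have h2 : upF r n y ∈ l1 := mem_downL.mp hym'
    have : l0 = l1 := (huniq (upF r n y)).unique ⟨hl0P, h1⟩ ⟨hl1P, h2⟩
    exact hne' (this ▸ rfl)

end SrLahAux

/-- `L_{S,r}(n,k)` counts pairs `(ℓ̃, a)` of an `r`-tuple of asterisk
lists (pairs of lists) with sizes in `S−1`, and a set `a` of `k` nonempty lists with
lengths in `S`, all with pairwise disjoint underlying sets whose union is `{1,…,n}`. -/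
theorem srLah_asterisk_interpretation (S : Set ℕ) (hS : ∀ s ∈ S, 0 < s) (r n k : ℕ) :
    srLah S r n k = Nat.card
      {p : (Fin r → List (Fin n) × List (Fin n)) × Finset (List (Fin n)) //
        (∀ i, ((p.1 i).1 ++ (p.1 i).2).Nodup ∧
          (p.1 i).1.length + (p.1 i).2.length + 1 ∈ S) ∧
        p.2.card = k ∧
        (∀ l ∈ p.2, l ≠ [] ∧ l.Nodup ∧ l.length ∈ S) ∧
        (∀ x : Fin n, (∃ i, x ∈ (p.1 i).1 ++ (p.1 i).2) ∨ ∃ l ∈ p.2, x ∈ l) ∧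
        (∀ i j, i ≠ j → ∀ x, x ∈ (p.1 i).1 ++ (p.1 i).2 → x ∉ (p.1 j).1 ++ (p.1 j).2) ∧
        (∀ i, ∀ l ∈ p.2, ∀ x, x ∈ (p.1 i).1 ++ (p.1 i).2 → x ∉ l) ∧
        (∀ l ∈ p.2, ∀ l' ∈ p.2, l ≠ l' → ∀ x ∈ l, x ∉ l')} := by
  classical
  rw [srLah]
  let G : {p : (Fin r → List (Fin n) × List (Fin n)) × Finset (List (Fin n)) //
        (∀ i, ((p.1 i).1 ++ (p.1 i).2).Nodup ∧
          (p.1 i).1.length + (p.1 i).2.length + 1 ∈ S) ∧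
        p.2.card = k ∧
        (∀ l ∈ p.2, l ≠ [] ∧ l.Nodup ∧ l.length ∈ S) ∧
        (∀ x : Fin n, (∃ i, x ∈ (p.1 i).1 ++ (p.1 i).2) ∨ ∃ l ∈ p.2, x ∈ l) ∧
        (∀ i j, i ≠ j → ∀ x, x ∈ (p.1 i).1 ++ (p.1 i).2 → x ∉ (p.1 j).1 ++ (p.1 j).2) ∧
        (∀ i, ∀ l ∈ p.2, ∀ x, x ∈ (p.1 i).1 ++ (p.1 i).2 → x ∉ l) ∧
        (∀ l ∈ p.2, ∀ l' ∈ p.2, l ≠ l' → ∀ x ∈ l, x ∉ l')} → (srLahSet S r n k) :=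
    fun p => ⟨SrLahAux.GP r n p.1.1 p.1.2, by
      obtain ⟨h1, h2, h3, h4, h5, h6, h7⟩ := p.2
      exact SrLahAux.GP_mem_srLahSet S k p.1.1 p.1.2 h1 h2 h3 h4 h5 h6 h7⟩
  have hinj : Function.Injective G := by
    intro p q h
    have hval : SrLahAux.GP r n p.1.1 p.1.2 = SrLahAux.GP r n q.1.1 q.1.2 :=
      congrArg Subtype.val h
    obtain ⟨hf, ha⟩ := SrLahAux.GP_inj hval
    exact Subtype.ext (Prod.ext hf ha)
  have hsurj : Function.Surjective G := by
    rintro ⟨P, hP⟩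
    obtain ⟨f, a, h1, h2, h3, h4, h5, h6, h7, hGP⟩ := SrLahAux.GP_surj S k P hP
    exact ⟨⟨(f, a), h1, h2, h3, h4, h5, h6, h7⟩, Subtype.ext hGP⟩
  exact (Nat.card_congr (Equiv.ofBijective G ⟨hinj, hsurj⟩)).symm
end

section
/- Let S be a set of positive integers and r ≥ 0 an integer. Let E_S(x) be the formal power series over ℚ with coefficient of x^m equal to 1/m! if m ∈ S and 0 otherwise, and let G_S(x) be the formal power series with coefficient of x^m equal to 1/m! if m+1 ∈ S and 0 otherwise (i.e., G_S(x) = Σ_{s∈S} x^{s−1}/(s−1)!). Since E_S(0) = 0, the series 1 − E_S(x) is invertible in ℚ⟦x⟧, and Σ_{n≥0} F_{n,S,r}·x^n/n! = r!·G_S(x)^r·(1 − E_S(x))^{−(r+1)}. -/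
open Finset
open scoped Classical

/-- The set of partitions of `{1,…,n+r}` (encoded as `Fin (n+r)`) into `k+r` nonempty
blocks with cardinalities in `S`, the first `r` elements in distinct blocks. -/
def srStirlingSet (S : Set ℕ) (r n k : ℕ) : Set (Finset (Finset (Fin (n + r)))) :=
  {P | (∀ b ∈ P, b.Nonempty ∧ b.card ∈ S) ∧ P.card = k + r ∧
    (∀ x : Fin (n + r), ∃! b, b ∈ P ∧ x ∈ b) ∧
    ∀ i j : Fin (n + r), (i : ℕ) < r → (j : ℕ) < r → i ≠ j →
      ∀ b ∈ P, i ∈ b → j ∉ b}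

/-- The `(S,r)`-Stirling number of the second kind. -/
noncomputable def srStirling (S : Set ℕ) (r n k : ℕ) : ℕ := Nat.card (srStirlingSet S r n k)

/-- The set of ordered set partitions of `{1,…,n+r}` (sequences of pairwise disjoint
nonempty blocks covering everything) with block cardinalities in `S`, the first `r`
elements in distinct blocks. -/
def srFubiniSet (S : Set ℕ) (r n : ℕ) : Set (List (Finset (Fin (n + r)))) :=
  {L | (∀ b ∈ L, b.Nonempty ∧ b.card ∈ S) ∧
    L.Pairwise (fun b b' => ∀ x ∈ b, x ∉ b') ∧
    (∀ x : Fin (n + r), ∃ b ∈ L, x ∈ b) ∧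
    ∀ i j : Fin (n + r), (i : ℕ) < r → (j : ℕ) < r → i ≠ j →
      ∀ b ∈ L, i ∈ b → j ∉ b}

/-- The `(S,r)`-Fubini number `F_{n,S,r}`. -/
noncomputable def srFubini (S : Set ℕ) (r n : ℕ) : ℕ := Nat.card (srFubiniSet S r n)

/-- The `(S,r)`-Fubini number with an integer argument, zero for negative arguments. -/
noncomputable def srFubiniZ (S : Set ℕ) (r : ℕ) (n : ℤ) : ℤ :=
  if 0 ≤ n then srFubini S r n.toNat else 0

section Comb

variable {S : Set ℕ}

lemma srf_finite (S : Set ℕ) (r n : ℕ) : (srFubiniSet S r n).Finite := by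
  apply (List.finite_length_le (Finset (Fin (n + r))) (Fintype.card (Finset (Fin (n + r))))).subset
  intro L hL
  have hnd : L.Nodup := by
    refine hL.2.1.imp_of_mem ?_
    intro a b ha hb hR hab
    obtain ⟨x, hx⟩ := (hL.1 a ha).1
    exact hR x hx (hab ▸ hx)
  exact hnd.length_le_card

lemma srFubini_zero_zero : srFubini S 0 0 = 1 := by
  have h : srFubiniSet S 0 0 = {[]} := by
    ext L
    constructor
    · intro hL
      cases L with
      | nil => rfl
      | cons b T =>
        obtain ⟨x, _⟩ := (hL.1 b (List.mem_cons_self)).1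
        exact x.elim0
    · rintro rfl
      refine ⟨by simp, by simp, fun x => x.elim0, fun i j _ _ _ b hb => by simp at hb⟩
  rw [srFubini, h, Nat.card_coe_set_eq, Set.ncard_singleton]

lemma card_filter_lt (n r : ℕ) :
    ((univ : Finset (Fin (n + r))).filter fun x => x.val < r).card = r := by
  have h : ((univ : Finset (Fin (n + r))).filter fun x => x.val < r).card =
      (univ : Finset (Fin r)).card := by
    apply Finset.card_bij (fun (a : Fin (n + r)) ha => (⟨(a : ℕ), (mem_filter.1 ha).2⟩ : Fin r))
    · intro a ha; exact mem_univ _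
    · intro a ha a' ha' h
      exact Fin.ext (by simpa using congrArg Fin.val h)
    · intro b _
      refine ⟨⟨(b : ℕ), by omega⟩, mem_filter.2 ⟨mem_univ _, b.2⟩, rfl⟩
  rw [h, card_univ, Fintype.card_fin]

lemma card_filter_not_lt (n r : ℕ) :
    ((univ : Finset (Fin (n + r))).filter fun x => ¬ x.val < r).card = n := by
  have := card_filter_add_card_filter_not (s := (univ : Finset (Fin (n + r))))
    (p := fun x => x.val < r)
  rw [card_filter_lt] at this
  have hu : (univ : Finset (Fin (n + r))).card = n + r := by simp
  omega

/-- The key fiber lemma: ordered partitions with prescribed first block `B`. -/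
lemma fiber_card (hS : ∀ s ∈ S, 0 < s) (r n : ℕ) (B : Finset (Fin (n + r)))
    (hs : B.card ∈ S)
    (hc : (B.filter fun x => x.val < r).card ≤ 1) :
    Nat.card {L | L ∈ srFubiniSet S r n ∧ L.headI = B} =
      srFubini S (r - (B.filter fun x => x.val < r).card)
        (n + (B.filter fun x => x.val < r).card - B.card) := by
  set c := (B.filter fun x => x.val < r).card with hcdef
  set A := (Bᶜ.filter fun x => x.val < r) with hAdef
  set D := (Bᶜ.filter fun x => ¬ x.val < r) with hDdef
  have hBpos : 0 < B.card := hS _ hs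
  -- counting
  have hsplit : ∀ (p : Fin (n+r) → Prop) [DecidablePred p],
      (univ.filter p).card = (B.filter p).card + (Bᶜ.filter p).card := by
    intro p _
    rw [← card_union_of_disjoint (disjoint_filter_filter disjoint_compl_right),
      ← filter_union, union_compl]
  have hcr : c + A.card = r := by
    have h := hsplit (fun x => x.val < r)
    rw [card_filter_lt, ← hcdef, ← hAdef] at h; omega
  have hnD : (B.filter fun x => ¬ x.val < r).card + D.card = n := by
    have h := hsplit (fun x => ¬ x.val < r)
    rw [card_filter_not_lt, ← hDdef] at h; omega
  have hBsplit : c + (B.filter fun x => ¬ x.val < r).card = B.card := by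
    have h : (B.filter fun x => x.val < r).card + (B.filter fun x => ¬ x.val < r).card
        = B.card := card_filter_add_card_filter_not (p := fun x : Fin (n + r) => x.val < r)
    rw [← hcdef] at h; exact h
  set r' := r - c with hr'def
  set n' := n + c - B.card with hn'def
  have hA : A.card = r' := by omega
  have hD : D.card = n' := by omega
  -- the relabeling injection
  set f : Fin (n' + r') → Fin (n + r) := fun y =>
    if h : (y : ℕ) < r' then A.orderEmbOfFin hA ⟨y, h⟩
    else D.orderEmbOfFin hD ⟨(y : ℕ) - r', by omega⟩ with hfdef
  have hfA : ∀ (y : Fin (n' + r')) (h : (y : ℕ) < r'), f y ∈ A := by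
    intro y h; simp only [hfdef, dif_pos h]; exact orderEmbOfFin_mem _ _ _
  have hfD : ∀ (y : Fin (n' + r')), ¬ (y : ℕ) < r' → f y ∈ D := by
    intro y h; simp only [hfdef, dif_neg h]; exact orderEmbOfFin_mem _ _ _
  have hfc : ∀ y, f y ∈ Bᶜ := by
    intro y
    by_cases h : (y : ℕ) < r'
    · exact (mem_filter.1 (hfA y h)).1
    · exact (mem_filter.1 (hfD y h)).1
  have hspec : ∀ y, ((f y : Fin (n + r)) : ℕ) < r ↔ (y : ℕ) < r' := by
    intro y
    by_cases h : (y : ℕ) < r'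
    · exact iff_of_true (mem_filter.1 (hfA y h)).2 h
    · exact iff_of_false (mem_filter.1 (hfD y h)).2 h
  have hinj : Function.Injective f := by
    intro y z h
    by_cases hy : (y : ℕ) < r' <;> by_cases hz : (z : ℕ) < r'
    · simp only [hfdef, dif_pos hy, dif_pos hz] at h
      have := (A.orderEmbOfFin hA).injective h
      exact Fin.ext (by simpa using congrArg Fin.val this)
    · exact absurd ((hspec z).1 (h ▸ (hspec y).2 hy)) hz
    · exact absurd ((hspec y).1 (h.symm ▸ (hspec z).2 hz)) hy
    · simp only [hfdef, dif_neg hy, dif_neg hz] at h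
      have := (D.orderEmbOfFin hD).injective h
      have h2 : (y : ℕ) - r' = (z : ℕ) - r' := congrArg Fin.val this
      exact Fin.ext (by omega)
  have hsurj : ∀ x ∈ Bᶜ, ∃ y, f y = x := by
    intro x hx
    by_cases h : (x : ℕ) < r
    · have hxA : x ∈ A := mem_filter.2 ⟨hx, h⟩
      have : x ∈ Set.range (A.orderEmbOfFin hA) := by
        rw [range_orderEmbOfFin]; exact hxA
      obtain ⟨i, hi⟩ := this
      refine ⟨⟨(i : ℕ), by omega⟩, ?_⟩
      have hlt : ((⟨(i : ℕ), by omega⟩ : Fin (n' + r')) : ℕ) < r' := i.2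
      simp only [hfdef, dif_pos hlt]
      convert hi using 2
    · have hxD : x ∈ D := mem_filter.2 ⟨hx, h⟩
      have : x ∈ Set.range (D.orderEmbOfFin hD) := by
        rw [range_orderEmbOfFin]; exact hxD
      obtain ⟨i, hi⟩ := this
      refine ⟨⟨r' + (i : ℕ), by omega⟩, ?_⟩
      have hlt : ¬ ((⟨r' + (i : ℕ), by omega⟩ : Fin (n' + r')) : ℕ) < r' := by simp
      simp only [hfdef, dif_neg hlt]
      convert hi using 2
      exact Fin.ext (by simp)
  set femb : Fin (n' + r') ↪ Fin (n + r) := ⟨f, hinj⟩ with hfembdef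
  set Φ : List (Finset (Fin (n' + r'))) → List (Finset (Fin (n + r))) :=
    fun T => B :: T.map (Finset.map femb) with hΦdef
  have hBij : Set.BijOn Φ (srFubiniSet S r' n')
      {L | L ∈ srFubiniSet S r n ∧ L.headI = B} := by
    refine ⟨?_, ?_, ?_⟩
    · -- MapsTo
      rintro T ⟨hT1, hT2, hT3, hT4⟩
      refine ⟨⟨?_, ?_, ?_, ?_⟩, rfl⟩
      · intro b hb
        rcases List.mem_cons.1 hb with rfl | hb'
        · exact ⟨Finset.card_pos.mp hBpos, hs⟩
        · obtain ⟨b₀, hb₀, rfl⟩ := List.mem_map.1 hb'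
          have h := hT1 b₀ hb₀
          exact ⟨h.1.map, by rw [Finset.card_map]; exact h.2⟩
      · rw [List.pairwise_cons]
        constructor
        · intro b' hb' x hxB hxb'
          obtain ⟨b₀, hb₀, rfl⟩ := List.mem_map.1 hb'
          obtain ⟨y, _, rfl⟩ := Finset.mem_map.1 hxb'
          exact Finset.mem_compl.1 (hfc y) hxB
        · rw [List.pairwise_map]
          refine hT2.imp ?_
          intro b₀ b₀' h x hx hx'
          obtain ⟨y, hy, rfl⟩ := Finset.mem_map.1 hx
          obtain ⟨y', hy', hyy'⟩ := Finset.mem_map.1 hx'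
          exact h y hy (hinj hyy' ▸ hy')
      · intro x
        by_cases hxB : x ∈ B
        · exact ⟨B, List.mem_cons_self, hxB⟩
        · obtain ⟨y, rfl⟩ := hsurj x (Finset.mem_compl.2 hxB)
          obtain ⟨b₀, hb₀, hyb₀⟩ := hT3 y
          exact ⟨b₀.map femb, List.mem_cons_of_mem _ (List.mem_map_of_mem hb₀),
            Finset.mem_map_of_mem _ hyb₀⟩
      · intro i j hi hj hij b hb hib
        rcases List.mem_cons.1 hb with rfl | hb'
        · intro hjB
          have hsub : ({i, j} : Finset (Fin (n + r))) ⊆ b.filter fun x => x.val < r := by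
            intro z hz
            rcases Finset.mem_insert.1 hz with rfl | hz
            · exact mem_filter.2 ⟨hib, hi⟩
            · rw [Finset.mem_singleton] at hz
              subst hz
              exact mem_filter.2 ⟨hjB, hj⟩
          have h2 : ({i, j} : Finset (Fin (n + r))).card = 2 := card_pair hij
          have := Finset.card_le_card hsub
          omega
        · obtain ⟨b₀, hb₀, rfl⟩ := List.mem_map.1 hb'
          intro hjb
          obtain ⟨yi, hyi, hfi⟩ := Finset.mem_map.1 hib
          obtain ⟨yj, hyj, hfj⟩ := Finset.mem_map.1 hjb
          have hyi' : (yi : ℕ) < r' := (hspec yi).1 (by rw [show femb yi = f yi from rfl] at hfi; rw [hfi]; exact hi)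
          have hyj' : (yj : ℕ) < r' := (hspec yj).1 (by rw [show femb yj = f yj from rfl] at hfj; rw [hfj]; exact hj)
          have hne : yi ≠ yj := by
            intro h; apply hij; rw [← hfi, ← hfj, h]
          exact hT4 yi yj hyi' hyj' hne b₀ hb₀ hyi hyj
    · -- InjOn
      intro T _ T' _ h
      simp only [hΦdef, List.cons.injEq, true_and] at h
      exact List.map_injective_iff.2 (Finset.map_injective femb) h
    · -- SurjOn
      rintro L ⟨⟨hL1, hL2, hL3, hL4⟩, hhead⟩
      cases L with
      | nil =>
        exfalso
        have hd : (List.headI ([] : List (Finset (Fin (n + r))))) = ∅ := rfl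
        rw [hd] at hhead
        rw [← hhead] at hBpos
        simp at hBpos
      | cons Bh T' =>
        simp only [List.headI_cons] at hhead
        have hBh : B = Bh := hhead.symm
        subst hBh
        rw [List.pairwise_cons] at hL2
        obtain ⟨hdisj, hT'pw⟩ := hL2
        have hsub : ∀ b ∈ T', ∀ x ∈ b, x ∈ Bᶜ := by
          intro b hb x hx
          exact Finset.mem_compl.2 (fun hxB => hdisj b hb x hxB hx)
        set g : Finset (Fin (n + r)) → Finset (Fin (n' + r')) :=
          fun b => b.preimage f hinj.injOn with hgdef
        have hgf : ∀ b ∈ T', Finset.map femb (g b) = b := by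
          intro b hb
          ext x
          simp only [Finset.mem_map, hgdef, Finset.mem_preimage]
          constructor
          · rintro ⟨y, hy, rfl⟩; exact hy
          · intro hx
            obtain ⟨y, rfl⟩ := hsurj x (hsub b hb x hx)
            exact ⟨y, hx, rfl⟩
        refine ⟨T'.map g, ⟨?_, ?_, ?_, ?_⟩, ?_⟩
        · intro b hb
          obtain ⟨b₀, hb₀, rfl⟩ := List.mem_map.1 hb
          have h := hL1 b₀ (List.mem_cons_of_mem _ hb₀)
          have hcard : (g b₀).card = b₀.card := by
            have h2 := congrArg Finset.card (hgf b₀ hb₀)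
            rwa [Finset.card_map] at h2
          refine ⟨Finset.card_pos.mp ?_, by rw [hcard]; exact h.2⟩
          rw [hcard]; exact hS _ h.2
        · rw [List.pairwise_map]
          refine hT'pw.imp_of_mem ?_
          intro b b' hb hb' h y hy hy'
          simp only [hgdef, Finset.mem_preimage] at hy hy'
          exact h (f y) hy hy'
        · intro y
          obtain ⟨b, hb, hfyb⟩ := hL3 (f y)
          rcases List.mem_cons.1 hb with rfl | hb'
          · exact absurd hfyb (Finset.mem_compl.1 (hfc y))
          · exact ⟨g b, List.mem_map_of_mem hb',
              Finset.mem_preimage.2 hfyb⟩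
        · intro i₀ j₀ hi₀ hj₀ hne b hb hib
          obtain ⟨b₀, hb₀, rfl⟩ := List.mem_map.1 hb
          simp only [hgdef, Finset.mem_preimage] at hib ⊢
          exact hL4 (f i₀) (f j₀) ((hspec i₀).2 hi₀) ((hspec j₀).2 hj₀)
            (fun h => hne (hinj h)) b₀ (List.mem_cons_of_mem _ hb₀) hib
        · simp only [hΦdef, List.map_map, List.cons.injEq, true_and]
          rw [show (Finset.map femb ∘ g) = fun b => Finset.map femb (g b) from rfl]
          exact (List.map_congr_left hgf).trans (List.map_id T')
  have := Nat.card_congr (Set.BijOn.equiv Φ hBij)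
  rw [srFubini]
  exact this.symm

lemma head_valid (r n : ℕ) (h : 0 < n + r) {L : List (Finset (Fin (n + r)))}
    (hL : L ∈ srFubiniSet S r n) :
    L.headI.card ∈ S ∧ (L.headI.filter fun x => x.val < r).card ≤ 1 := by
  cases L with
  | nil =>
    obtain ⟨b, hb, _⟩ := hL.2.2.1 ⟨0, h⟩
    simp at hb
  | cons Bh T =>
    refine ⟨(hL.1 Bh (List.mem_cons_self)).2, ?_⟩
    by_contra hcon
    push_neg at hcon
    obtain ⟨i, hi, j, hj, hij⟩ := Finset.one_lt_card.1 (by simpa using hcon)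
    rw [mem_filter] at hi hj
    exact hL.2.2.2 i j hi.2 hj.2 hij Bh (List.mem_cons_self) hi.1 hj.1

lemma srFubini_rec (hS : ∀ s ∈ S, 0 < s) (r n : ℕ) (h : 0 < n + r) :
    srFubini S r n =
      (∑ j ∈ range (n + 1), if j ∈ S then n.choose j * srFubini S r (n - j) else 0)
        + r * ∑ j ∈ range (n + 1),
            if (j + 1) ∈ S then n.choose j * srFubini S (r - 1) (n - j) else 0 := by
  have hfin := srf_finite S r n
  have hcard : srFubini S r n = hfin.toFinset.card := by
    rw [srFubini, Nat.card_coe_set_eq, Set.ncard_eq_toFinset_card _ hfin]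
  rw [hcard, Finset.card_eq_sum_card_fiberwise
    (f := List.headI) (t := (univ : Finset (Finset (Fin (n + r))))) (fun x _ => mem_univ _)]
  -- fiber cardinalities
  have hfib : ∀ B : Finset (Fin (n + r)),
      (hfin.toFinset.filter fun L => L.headI = B).card =
        if B.card ∈ S ∧ (B.filter fun x => x.val < r).card ≤ 1
        then srFubini S (r - (B.filter fun x => x.val < r).card)
          (n + (B.filter fun x => x.val < r).card - B.card)
        else 0 := by
    intro B
    have hsetfin : {L | L ∈ srFubiniSet S r n ∧ L.headI = B}.Finite :=
      hfin.subset (fun L hL => hL.1)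
    have h1 : (hfin.toFinset.filter fun L => L.headI = B).card =
        Nat.card {L | L ∈ srFubiniSet S r n ∧ L.headI = B} := by
      rw [Nat.card_coe_set_eq, Set.ncard_eq_toFinset_card _ hsetfin]
      congr 1
      ext L
      simp [Set.Finite.mem_toFinset, mem_filter]
    split
    case isTrue h' => rw [h1]; exact fiber_card hS r n B h'.1 h'.2
    case isFalse h' =>
      rw [h1]
      have hempty : {L | L ∈ srFubiniSet S r n ∧ L.headI = B} = ∅ := by
        ext L
        simp only [Set.mem_setOf_eq, Set.mem_empty_iff_false, iff_false, not_and]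
        intro hL hhead
        exact h' (hhead ▸ head_valid r n h hL)
      rw [hempty]
      simp
  rw [Finset.sum_congr rfl (fun B _ => hfib B)]
  have hNS : ((univ : Finset (Fin (n + r))).filter fun x => ¬ x.val < r).card = n :=
    card_filter_not_lt n r
  have hNSsub : ∀ t : Finset (Fin (n + r)),
      t ∈ ((univ : Finset (Fin (n + r))).filter fun x => ¬ x.val < r).powerset →
      ∀ x ∈ t, ¬ x.val < r := by
    intro t ht x hx
    exact (mem_filter.1 (mem_powerset.1 ht hx)).2
  rw [← Finset.sum_filter_add_sum_filter_not (univ : Finset (Finset (Fin (n + r))))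
      (fun B => (B.filter fun x => x.val < r).card = 0)]
  congr 1
  · -- B with no special elements
    have e0 : (univ : Finset (Finset (Fin (n + r)))).filter
        (fun B => (B.filter fun x => x.val < r).card = 0) =
        ((univ : Finset (Fin (n + r))).filter fun x => ¬ x.val < r).powerset := by
      ext B
      simp only [mem_filter, mem_univ, true_and, mem_powerset, Finset.card_eq_zero,
        Finset.filter_eq_empty_iff]
      constructor
      · intro hB x hx
        exact mem_filter.2 ⟨mem_univ _, fun hlt => hB hx hlt⟩
      · intro hB x hx hlt
        exact (mem_filter.1 (hB hx)).2 hlt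
    have e0' : ∀ B ∈ ((univ : Finset (Fin (n + r))).filter fun x => ¬ x.val < r).powerset,
        (if B.card ∈ S ∧ (B.filter fun x => x.val < r).card ≤ 1
          then srFubini S (r - (B.filter fun x => x.val < r).card)
            (n + (B.filter fun x => x.val < r).card - B.card)
          else 0)
        = (if B.card ∈ S then srFubini S r (n - B.card) else 0) := by
      intro B hB
      have hzero : (B.filter fun x => x.val < r).card = 0 := by
        rw [Finset.card_eq_zero, Finset.filter_eq_empty_iff]
        exact fun x hx => hNSsub B hB x hx
      rw [hzero]
      simp
    rw [e0, Finset.sum_congr rfl e0', Finset.sum_powerset, hNS]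
    refine Finset.sum_congr rfl ?_
    intro j hj
    have hconst : ∀ B ∈ powersetCard j
          ((univ : Finset (Fin (n + r))).filter fun x => ¬ x.val < r),
        (if B.card ∈ S then srFubini S r (n - B.card) else 0)
          = (if j ∈ S then srFubini S r (n - j) else 0) := by
      intro B hB
      rw [(mem_powersetCard.1 hB).2]
    rw [Finset.sum_congr rfl hconst, Finset.sum_const, card_powersetCard, hNS, smul_eq_mul,
      mul_ite, mul_zero]
  · -- B with exactly one special element
    rw [← Finset.sum_filter_add_sum_filter_not
      ((univ : Finset (Finset (Fin (n + r)))).filter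
        fun B => ¬ (B.filter fun x => x.val < r).card = 0)
      (fun B => (B.filter fun x => x.val < r).card = 1)]
    have hz : ∑ B ∈ (((univ : Finset (Finset (Fin (n + r)))).filter
          fun B => ¬ (B.filter fun x => x.val < r).card = 0).filter
          fun B => ¬ (B.filter fun x => x.val < r).card = 1),
        (if B.card ∈ S ∧ (B.filter fun x => x.val < r).card ≤ 1
          then srFubini S (r - (B.filter fun x => x.val < r).card)
            (n + (B.filter fun x => x.val < r).card - B.card)
          else 0) = 0 := by
      refine Finset.sum_eq_zero ?_
      intro B hB
      rw [mem_filter, mem_filter] at hB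
      rw [if_neg]
      rintro ⟨-, hle⟩
      omega
    rw [hz, add_zero]
    have e1 : ((univ : Finset (Finset (Fin (n + r)))).filter
        (fun B => ¬ (B.filter fun x => x.val < r).card = 0)).filter
        (fun B => (B.filter fun x => x.val < r).card = 1)
        = (univ : Finset (Finset (Fin (n + r)))).filter
            (fun B => (B.filter fun x => x.val < r).card = 1) := by
      ext B
      simp only [mem_filter, mem_univ, true_and]
      omega
    rw [e1]
    have hbij : ∑ B ∈ (univ : Finset (Finset (Fin (n + r)))).filter
          (fun B => (B.filter fun x => x.val < r).card = 1),
        (if B.card ∈ S ∧ (B.filter fun x => x.val < r).card ≤ 1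
          then srFubini S (r - (B.filter fun x => x.val < r).card)
            (n + (B.filter fun x => x.val < r).card - B.card)
          else 0)
        = ∑ p ∈ ((univ : Finset (Fin (n + r))).filter fun x => x.val < r) ×ˢ
            ((univ : Finset (Fin (n + r))).filter fun x => ¬ x.val < r).powerset,
            (if (p.2.card + 1) ∈ S then srFubini S (r - 1) (n - p.2.card) else 0) := by
      refine Finset.sum_bij'
        (i := fun B hB => ((B.filter fun x => x.val < r).min'
            (Finset.card_pos.1 (by rw [(mem_filter.1 hB).2]; norm_num)),
          B.filter fun x => ¬ x.val < r))
        (j := fun p _ => insert p.1 p.2) ?_ ?_ ?_ ?_ ?_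
      · -- hi
        intro B hB
        have hB1 : (B.filter fun x => x.val < r).card = 1 := (mem_filter.1 hB).2
        rw [Finset.mem_product]
        constructor
        · have := Finset.min'_mem (B.filter fun x => x.val < r)
            (Finset.card_pos.1 (by rw [hB1]; norm_num))
          exact mem_filter.2 ⟨mem_univ _, (mem_filter.1 this).2⟩
        · rw [mem_powerset]
          intro x hx
          exact mem_filter.2 ⟨mem_univ _, (mem_filter.1 hx).2⟩
      · -- hj
        intro p hp
        rw [Finset.mem_product] at hp
        have hp1 : (p.1 : ℕ) < r := (mem_filter.1 hp.1).2
        have hfilt : ((insert p.1 p.2).filter fun x => x.val < r) = {p.1} := by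
          rw [Finset.filter_insert, if_pos hp1, Finset.filter_eq_empty_iff.2
            (fun x hx => hNSsub p.2 hp.2 x hx)]
          rfl
        rw [mem_filter]
        exact ⟨mem_univ _, by rw [hfilt, Finset.card_singleton]⟩
      · -- left_inv
        intro B hB
        have hB1 : (B.filter fun x => x.val < r).card = 1 := (mem_filter.1 hB).2
        obtain ⟨a, ha⟩ := Finset.card_eq_one.1 hB1
        simp only [ha, Finset.min'_singleton]
        conv_rhs => rw [← Finset.filter_union_filter_not_eq (p := fun x => x.val < r) B, ha]
        rw [Finset.insert_eq]
      · -- right_inv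
        intro p hp
        rw [Finset.mem_product] at hp
        have hp1 : (p.1 : ℕ) < r := (mem_filter.1 hp.1).2
        have hfilt : ((insert p.1 p.2).filter fun x => x.val < r) = {p.1} := by
          rw [Finset.filter_insert, if_pos hp1, Finset.filter_eq_empty_iff.2
            (fun x hx => hNSsub p.2 hp.2 x hx)]
          rfl
        have hfilt2 : ((insert p.1 p.2).filter fun x => ¬ x.val < r) = p.2 := by
          rw [Finset.filter_insert, if_neg (not_not_intro hp1),
            Finset.filter_true_of_mem (fun x hx => hNSsub p.2 hp.2 x hx)]
        simp only [hfilt, hfilt2, Finset.min'_singleton]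
      · -- summand
        intro B hB
        have hB1 : (B.filter fun x => x.val < r).card = 1 := (mem_filter.1 hB).2
        have hsB : (B.filter fun x => x.val < r).card
            + (B.filter fun x => ¬ x.val < r).card = B.card :=
          card_filter_add_card_filter_not (p := fun x : Fin (n + r) => x.val < r)
        have hBc : B.card = (B.filter fun x => ¬ x.val < r).card + 1 := by omega
        simp only [hB1, hBc]
        simp [Nat.add_sub_add_right]
    rw [hbij]
    simp only [Finset.sum_product]
    rw [Finset.sum_const, card_filter_lt, smul_eq_mul]
    congr 1
    rw [Finset.sum_powerset, hNS]
    refine Finset.sum_congr rfl ?_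
    intro j hj
    have hconst : ∀ t ∈ powersetCard j
          ((univ : Finset (Fin (n + r))).filter fun x => ¬ x.val < r),
        (if (t.card + 1) ∈ S then srFubini S (r - 1) (n - t.card) else 0)
          = (if (j + 1) ∈ S then srFubini S (r - 1) (n - j) else 0) := by
      intro t ht
      rw [(mem_powersetCard.1 ht).2]
    rw [Finset.sum_congr rfl hconst, Finset.sum_const, card_powersetCard, hNS, smul_eq_mul,
      mul_ite, mul_zero]

noncomputable def Eser (S : Set ℕ) : PowerSeries ℚ :=
  PowerSeries.mk fun m => if m ∈ S then (1 : ℚ) / m.factorial else 0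

noncomputable def Gser (S : Set ℕ) : PowerSeries ℚ :=
  PowerSeries.mk fun m => if m + 1 ∈ S then (1 : ℚ) / m.factorial else 0

noncomputable def Aser (S : Set ℕ) (r : ℕ) : PowerSeries ℚ :=
  PowerSeries.mk fun n => (srFubini S r n : ℚ) / n.factorial

lemma constCoeff_one_sub_E (hS : ∀ s ∈ S, 0 < s) :
    PowerSeries.constantCoeff (1 - Eser S) = 1 := by
  have hS0 : 0 ∉ S := fun h => absurd (hS 0 h) (lt_irrefl 0)
  rw [map_sub, map_one, ← PowerSeries.coeff_zero_eq_constantCoeff_apply, Eser,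
    PowerSeries.coeff_mk, if_neg hS0, sub_zero]

lemma Aser_eq (hS : ∀ s ∈ S, 0 < s) (r : ℕ) :
    Aser S r = (if r = 0 then 1 else 0) + Eser S * Aser S r
      + PowerSeries.C (r : ℚ) * (Gser S * Aser S (r - 1)) := by
  have hS0 : 0 ∉ S := fun h => absurd (hS 0 h) (lt_irrefl 0)
  ext n
  rw [map_add, map_add, PowerSeries.coeff_C_mul, PowerSeries.coeff_mul, PowerSeries.coeff_mul,
    Finset.Nat.sum_antidiagonal_eq_sum_range_succ_mk,
    Finset.Nat.sum_antidiagonal_eq_sum_range_succ_mk]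
  simp only [Aser, Eser, Gser, PowerSeries.coeff_mk]
  by_cases h0 : 0 < n + r
  · have hδ : (PowerSeries.coeff n)
        ((if r = 0 then 1 else 0) : PowerSeries ℚ) = 0 := by
      split
      · next hr => rw [PowerSeries.coeff_one, if_neg (by omega)]
      · simp
    rw [hδ, zero_add]
    have hrecQ : (srFubini S r n : ℚ) =
        (∑ j ∈ range (n + 1),
          if j ∈ S then (n.choose j : ℚ) * srFubini S r (n - j) else 0)
        + r * ∑ j ∈ range (n + 1),
            if (j + 1) ∈ S then (n.choose j : ℚ) * srFubini S (r - 1) (n - j) else 0 := by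
      rw [srFubini_rec hS r n h0]
      push_cast
      ring
    rw [hrecQ, add_div, Finset.sum_div, mul_div_assoc, Finset.sum_div]
    congr 1
    · refine Finset.sum_congr rfl ?_
      intro j hj
      have hjn : j ≤ n := by rw [Finset.mem_range] at hj; omega
      have h1 : (n.factorial : ℚ) ≠ 0 := Nat.cast_ne_zero.2 (Nat.factorial_ne_zero n)
      have h2 : (j.factorial : ℚ) ≠ 0 := Nat.cast_ne_zero.2 (Nat.factorial_ne_zero j)
      have h3 : ((n - j).factorial : ℚ) ≠ 0 := Nat.cast_ne_zero.2 (Nat.factorial_ne_zero _)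
      split
      · next hjS =>
        rw [Nat.cast_choose ℚ hjn]
        field_simp
      · next => simp
    · congr 1
      refine Finset.sum_congr rfl ?_
      intro j hj
      have hjn : j ≤ n := by rw [Finset.mem_range] at hj; omega
      have h1 : (n.factorial : ℚ) ≠ 0 := Nat.cast_ne_zero.2 (Nat.factorial_ne_zero n)
      have h2 : (j.factorial : ℚ) ≠ 0 := Nat.cast_ne_zero.2 (Nat.factorial_ne_zero j)
      have h3 : ((n - j).factorial : ℚ) ≠ 0 := Nat.cast_ne_zero.2 (Nat.factorial_ne_zero _)
      split
      · next hjS =>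
        rw [Nat.cast_choose ℚ hjn]
        field_simp
      · next => simp
  · have hn : n = 0 := by omega
    have hr : r = 0 := by omega
    subst hn
    subst hr
    simp [srFubini_zero_zero, hS0, Finset.sum_range_one, Nat.factorial]

lemma Aser_formula (hS : ∀ s ∈ S, 0 < s) (r : ℕ) :
    Aser S r = PowerSeries.C (r.factorial : ℚ) * (Gser S) ^ r
      * ((1 - Eser S)⁻¹) ^ (r + 1) := by
  have hc : PowerSeries.constantCoeff (1 - Eser S) ≠ 0 := by
    rw [constCoeff_one_sub_E hS]; exact one_ne_zero
  have hmul : ∀ φ ψ : PowerSeries ℚ, (1 - Eser S) * φ = ψ → φ = (1 - Eser S)⁻¹ * ψ := by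
    intro φ ψ hφ
    rw [← hφ, ← mul_assoc, PowerSeries.inv_mul_cancel _ hc, one_mul]
  have hkey : ∀ r : ℕ, (1 - Eser S) * Aser S r =
      (if r = 0 then 1 else 0) + PowerSeries.C (r : ℚ) * (Gser S * Aser S (r - 1)) := by
    intro r
    rw [sub_mul, one_mul]
    nth_rewrite 1 [Aser_eq hS r]
    ring
  induction r with
  | zero =>
    have h := hmul _ _ (hkey 0)
    simp only [if_pos rfl, Nat.cast_zero, map_zero, zero_mul, add_zero] at h
    rw [h]
    simp [Nat.factorial]
  | succ r ih =>
    have h := hmul _ _ (hkey (r + 1))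
    rw [if_neg (Nat.succ_ne_zero r), zero_add, Nat.add_sub_cancel, ih] at h
    rw [h]
    have hfac : ((r + 1).factorial : ℚ) = ((r : ℚ) + 1) * (r.factorial : ℚ) := by
      rw [Nat.factorial_succ]; push_cast; ring
    rw [hfac, map_mul]
    push_cast
    ring

end Comb

/-- the EGF of the `(S,r)`-Fubini numbers is
`r!·G_S(x)^r·(1 − E_S(x))^{−(r+1)}`, the series `1 − E_S(x)` being invertible. -/
theorem srFubini_egf (S : Set ℕ) (hS : ∀ s ∈ S, 0 < s) (r : ℕ) :
    IsUnit (1 - PowerSeries.mk fun m => if m ∈ S then (1 : ℚ) / m.factorial else 0) ∧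
    PowerSeries.mk (fun n => (srFubini S r n : ℚ) / n.factorial) =
      PowerSeries.C (r.factorial : ℚ) *
        (PowerSeries.mk fun m => if m + 1 ∈ S then (1 : ℚ) / m.factorial else 0) ^ r *
        ((1 - PowerSeries.mk fun m => if m ∈ S then (1 : ℚ) / m.factorial else 0)⁻¹) ^ (r + 1) := by
  constructor
  · have h : IsUnit (1 - Eser S) := by
      rw [PowerSeries.isUnit_iff_constantCoeff, constCoeff_one_sub_E hS]
      exact isUnit_one
    exact h
  · exact Aser_formula hS r
end

section
/- Let S be a set of positive integers, r ≥ 1 an integer, and n ≥ 0 an integer. Then F_{n,S,r} = Σ_{s∈S} C(n,s)·F_{n−s,S,r} + r·Σ_{s∈S} C(n, s−1)·F_{n−(s−1), S, r−1}, where F_{m,S,r} = 0 for m < 0 and both sums have only finitely many nonzero terms. -/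
open Finset
open scoped Classical

set_option linter.unusedSectionVars false
set_option maxHeartbeats 1000000

def fubL {α : Type*} [DecidableEq α] (S : Set ℕ) (G R : Finset α) : Set (List (Finset α)) :=
  {L | (∀ b ∈ L, b.Nonempty ∧ b.card ∈ S) ∧ L.Pairwise (fun b b' => ∀ x ∈ b, x ∉ b') ∧
    (∀ x ∈ G, ∃ b ∈ L, x ∈ b) ∧ (∀ b ∈ L, b ⊆ G) ∧
    ∀ i ∈ R, ∀ j ∈ R, i ≠ j → ∀ b ∈ L, i ∈ b → j ∉ b}

lemma fubL_finite {α : Type*} [DecidableEq α] (S : Set ℕ) [Fintype α] (G R : Finset α) : (fubL S G R).Finite := by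
  apply Set.Finite.subset (List.finite_length_le (Finset α) (Fintype.card (Finset α)))
  rintro L ⟨h1, h2, -, -, -⟩
  have hnd : L.Nodup := by
    refine h2.imp_of_mem ?_
    intro a b ha _ hab heq
    obtain ⟨x, hx⟩ := (h1 a ha).1
    exact hab x hx (heq ▸ hx)
  exact hnd.length_le_card

lemma fubL_card_map {α β : Type*} [DecidableEq α] [DecidableEq β] (S : Set ℕ)
    (e : α → β) (he : Function.Injective e) (G R : Finset α) :
    Nat.card (fubL S (G.image e) (R.image e)) = Nat.card (fubL S G R) := by
  have himg : fubL S (G.image e) (R.image e) = (List.map (Finset.image e)) '' (fubL S G R) := by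
    ext L'
    constructor
    · rintro ⟨h1, h2, h3, h4, h5⟩
      have hkey : ∀ b' ∈ L', (b'.preimage e he.injOn).image e = b' := by
        intro b' hb'
        rw [Finset.image_preimage]
        apply Finset.filter_true_of_mem
        intro x hx
        obtain ⟨y, -, rfl⟩ := mem_image.mp (h4 b' hb' hx)
        exact ⟨y, rfl⟩
      refine ⟨L'.map (fun b => b.preimage e he.injOn), ⟨?_, ?_, ?_, ?_, ?_⟩, ?_⟩
      · intro b hb
        simp only [List.mem_map] at hb
        obtain ⟨b', hb', rfl⟩ := hb
        constructor
        · obtain ⟨x, hx⟩ := (h1 b' hb').1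
          rw [← hkey b' hb'] at hx
          obtain ⟨y, hy, rfl⟩ := mem_image.mp hx
          exact ⟨y, hy⟩
        · rw [← Finset.card_image_of_injective _ he, hkey b' hb']
          exact (h1 b' hb').2
      · rw [List.pairwise_map]
        refine h2.imp_of_mem ?_
        intro a b ha hb hab x hx hxb
        rw [Finset.mem_preimage] at hx hxb
        exact hab (e x) hx hxb
      · intro x hx
        obtain ⟨b', hb', hxb⟩ := h3 (e x) (mem_image_of_mem e hx)
        exact ⟨b'.preimage e he.injOn, List.mem_map_of_mem hb', Finset.mem_preimage.mpr hxb⟩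
      · intro b hb
        simp only [List.mem_map] at hb
        obtain ⟨b', hb', rfl⟩ := hb
        intro x hx
        rw [Finset.mem_preimage] at hx
        obtain ⟨y, hy, hey⟩ := mem_image.mp (h4 b' hb' hx)
        cases he hey
        exact hy
      · intro i hi j hj hij b hb hib hjb
        simp only [List.mem_map] at hb
        obtain ⟨b', hb', rfl⟩ := hb
        rw [Finset.mem_preimage] at hib hjb
        exact h5 (e i) (mem_image_of_mem e hi) (e j) (mem_image_of_mem e hj)
          (fun h => hij (he h)) b' hb' hib hjb
      · rw [List.map_map]
        have : L'.map ((Finset.image e) ∘ (fun b => b.preimage e he.injOn)) = L'.map id :=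
          List.map_congr_left (fun b hb => hkey b hb)
        rw [this, List.map_id]
    · rintro ⟨L, hL, rfl⟩
      obtain ⟨h1, h2, h3, h4, h5⟩ := hL
      refine ⟨?_, ?_, ?_, ?_, ?_⟩
      · intro b hb
        simp only [List.mem_map] at hb
        obtain ⟨b', hb', rfl⟩ := hb
        exact ⟨(h1 b' hb').1.image e, by rw [Finset.card_image_of_injective _ he]; exact (h1 b' hb').2⟩
      · rw [List.pairwise_map]
        refine h2.imp ?_
        intro a b hab x hx hxb
        obtain ⟨y, hy, rfl⟩ := mem_image.mp hx
        obtain ⟨z, hz, hez⟩ := mem_image.mp hxb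
        cases he hez
        exact hab y hy hz
      · intro x hx
        obtain ⟨y, hy, rfl⟩ := mem_image.mp hx
        obtain ⟨b, hb, hyb⟩ := h3 y hy
        exact ⟨b.image e, List.mem_map_of_mem hb, mem_image_of_mem e hyb⟩
      · intro b hb
        simp only [List.mem_map] at hb
        obtain ⟨b', hb', rfl⟩ := hb
        exact image_subset_image (h4 b' hb')
      · intro i hi j hj hij b hb hib hjb
        obtain ⟨i0, hi0, rfl⟩ := mem_image.mp hi
        obtain ⟨j0, hj0, rfl⟩ := mem_image.mp hj
        simp only [List.mem_map] at hb
        obtain ⟨b', hb', rfl⟩ := hb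
        obtain ⟨i1, hi1, hei⟩ := mem_image.mp hib
        obtain ⟨j1, hj1, hej⟩ := mem_image.mp hjb
        cases he hei; cases he hej
        exact h5 i0 hi0 j0 hj0 (fun h => hij (by rw [h])) b' hb' hi1 hj1
  rw [himg, Nat.card_coe_set_eq, Nat.card_coe_set_eq,
    Set.ncard_image_of_injective _ (List.map_injective_iff.mpr (Finset.image_injective he))]

lemma srFubiniSet_eq_fubL (S : Set ℕ) (r n : ℕ) :
    srFubiniSet S r n = fubL S (univ : Finset (Fin (n + r))) (univ.filter fun x => x.val < r) := by
  ext L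
  simp only [srFubiniSet, fubL, Set.mem_setOf_eq, mem_filter, mem_univ, true_and]
  constructor
  · rintro ⟨h1, h2, h3, h4⟩
    exact ⟨h1, h2, fun x _ => h3 x, fun b _ => subset_univ b,
      fun i hi j hj hij => h4 i j hi hj hij⟩
  · rintro ⟨h1, h2, h3, -, h4⟩
    exact ⟨h1, h2, fun x => h3 x (by simp), fun i j hi hj hij => h4 i hi j hj hij⟩

-- position in enumeration vs special threshold

lemma orderEmb_special_iff {m : ℕ} (T : Finset (Fin m)) (r : ℕ) (i : Fin T.card) :
    ((T.orderEmbOfFin rfl i : Fin m) : ℕ) < r ↔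
      (i : ℕ) < (T.filter fun x => x.val < r).card := by
  set f := T.orderEmbOfFin rfl with hf
  set P : Finset (Fin m) := T.filter (fun x => x.val < r) with hP
  have hfP : ∀ j : Fin T.card, ((f j : Fin m) : ℕ) < r ↔ f j ∈ P := by
    intro j; simp [hP, Finset.mem_filter]; intro _; exact Finset.orderEmbOfFin_mem T rfl j
  constructor
  · intro hi
    -- {j | j ≤ i} injects into P
    have hsub : (Finset.Iic i).image f ⊆ P := by
      intro x hx
      obtain ⟨j, hj, rfl⟩ := mem_image.mp hx
      rw [Finset.mem_Iic] at hj
      have : (f j : ℕ) ≤ (f i : ℕ) := by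
        exact_mod_cast (f.monotone hj)
      refine (hfP j).mp (lt_of_le_of_lt this hi)
    have := Finset.card_le_card hsub
    rwa [Finset.card_image_of_injective _ f.injective, Fin.card_Iic] at this
  · intro hi
    by_contra hge
    push_neg at hge
    -- P ⊆ image of Iio i
    have hsub : P ⊆ (Finset.Iio i).image f := by
      intro x hx
      have hxT : x ∈ T := (Finset.mem_filter.mp hx).1
      have : x ∈ Set.range f := by rw [Finset.range_orderEmbOfFin]; exact_mod_cast hxT
      obtain ⟨j, rfl⟩ := this
      refine mem_image_of_mem f ?_
      rw [Finset.mem_Iio]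
      by_contra hji
      push_neg at hji
      have : (f i : ℕ) ≤ (f j : ℕ) := by exact_mod_cast f.monotone hji
      have : (f j : ℕ) < r := (Finset.mem_filter.mp hx).2
      omega
    have := Finset.card_le_card hsub
    rw [Finset.card_image_of_injective _ f.injective, Fin.card_Iio] at this
    omega

lemma card_fubL_sub (S : Set ℕ) {m : ℕ} (r : ℕ) (T : Finset (Fin m)) :
    Nat.card (fubL S T (T.filter fun x => x.val < r)) =
      srFubini S (T.filter fun x => x.val < r).card
        (T.card - (T.filter fun x => x.val < r).card) := by
  set rT := (T.filter fun x => x.val < r).card with hrT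
  have hle : rT ≤ T.card := Finset.card_filter_le _ _
  obtain ⟨nT, hk⟩ : ∃ nT, T.card = nT + rT := ⟨T.card - rT, by omega⟩
  have hsub : T.card - rT = nT := by omega
  rw [hsub]
  set f : Fin T.card → Fin m := ⇑(T.orderEmbOfFin rfl) with hfdef
  have hinj : Function.Injective f := (T.orderEmbOfFin rfl).injective
  have h1 : (univ : Finset (Fin T.card)).image f = T := by
    rw [← Finset.coe_inj, Finset.coe_image, Finset.coe_univ, Set.image_univ]
    exact Finset.range_orderEmbOfFin T rfl
  have h2 : ((univ : Finset (Fin T.card)).filter fun i => i.val < rT).image f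
      = T.filter (fun x => x.val < r) := by
    ext x
    simp only [mem_image, mem_filter, mem_univ, true_and]
    constructor
    · rintro ⟨j, hj, rfl⟩
      exact ⟨Finset.orderEmbOfFin_mem T rfl j, (orderEmb_special_iff T r j).mpr hj⟩
    · rintro ⟨hxT, hxr⟩
      have : x ∈ Set.range f := by
        rw [hfdef, Finset.range_orderEmbOfFin]; exact_mod_cast hxT
      obtain ⟨j, rfl⟩ := this
      exact ⟨j, (orderEmb_special_iff T r j).mp hxr, rfl⟩
  have key : ∀ k (hk : k = nT + rT),
      Nat.card (fubL S (univ : Finset (Fin k)) (univ.filter fun i => i.val < rT))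
        = srFubini S rT nT := by
    rintro k rfl
    rw [srFubini, srFubiniSet_eq_fubL]
  have hmap := fubL_card_map S f hinj univ (univ.filter fun i => i.val < rT)
  rw [h1, h2] at hmap
  rw [hmap]
  exact key T.card hk

lemma fubL_head_iff {α : Type*} [Fintype α] [DecidableEq α] (S : Set ℕ) (G R : Finset α)
    (hG : G.Nonempty) (L : List (Finset α)) :
    L ∈ fubL S G R ↔ ∃ B ∈ G.powerset.filter
        (fun B => B.Nonempty ∧ B.card ∈ S ∧ (B ∩ R).card ≤ 1),
      ∃ t ∈ fubL S (G \ B) (R \ B), B :: t = L := by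
  constructor
  · rintro ⟨h1, h2, h3, h4, h5⟩
    obtain ⟨x, hx⟩ := hG
    obtain ⟨b0, hb0, -⟩ := h3 x hx
    match L, hb0 with
    | B :: t, _ =>
    rw [List.pairwise_cons] at h2
    obtain ⟨hhead, htail⟩ := h2
    have hBmem : B ∈ B :: t := List.mem_cons_self
    have hBG : B ⊆ G := h4 B hBmem
    have hBR : (B ∩ R).card ≤ 1 := by
      by_contra h
      obtain ⟨i, hi, j, hj, hij⟩ := Finset.one_lt_card.mp (show 1 < (B ∩ R).card by omega)
      rw [mem_inter] at hi hj
      exact h5 i hi.2 j hj.2 hij B hBmem hi.1 hj.1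
    refine ⟨B, ?_, t, ⟨?_, htail, ?_, ?_, ?_⟩, rfl⟩
    · rw [mem_filter, mem_powerset]
      exact ⟨hBG, (h1 B hBmem).1, (h1 B hBmem).2, hBR⟩
    · exact fun b hb => h1 b (List.mem_cons_of_mem B hb)
    · intro x hx
      rw [mem_sdiff] at hx
      obtain ⟨b, hb, hxb⟩ := h3 x hx.1
      rcases List.mem_cons.mp hb with rfl | hb
      · exact absurd hxb hx.2
      · exact ⟨b, hb, hxb⟩
    · intro b hb x hxb
      rw [mem_sdiff]
      refine ⟨h4 b (List.mem_cons_of_mem B hb) hxb, fun hxB => hhead b hb x hxB hxb⟩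
    · intro i hi j hj hij b hb hib
      rw [mem_sdiff] at hi hj
      exact h5 i hi.1 j hj.1 hij b (List.mem_cons_of_mem B hb) hib
  · rintro ⟨B, hB, t, ⟨t1, t2, t3, t4, t5⟩, rfl⟩
    rw [mem_filter, mem_powerset] at hB
    obtain ⟨hBG, hBne, hBS, hBR⟩ := hB
    refine ⟨?_, ?_, ?_, ?_, ?_⟩
    · rintro b hb
      rcases List.mem_cons.mp hb with rfl | hb
      · exact ⟨hBne, hBS⟩
      · exact t1 b hb
    · rw [List.pairwise_cons]
      refine ⟨?_, t2⟩
      intro b hb x hxB hxb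
      exact (mem_sdiff.mp (t4 b hb hxb)).2 hxB
    · intro x hx
      by_cases hxB : x ∈ B
      · exact ⟨B, List.mem_cons_self, hxB⟩
      · obtain ⟨b, hb, hxb⟩ := t3 x (mem_sdiff.mpr ⟨hx, hxB⟩)
        exact ⟨b, List.mem_cons_of_mem B hb, hxb⟩
    · intro b hb
      rcases List.mem_cons.mp hb with rfl | hb
      · exact hBG
      · exact (t4 b hb).trans sdiff_subset
    · intro i hi j hj hij b hb hib hjb
      rcases List.mem_cons.mp hb with rfl | hb
      · have : 1 < (b ∩ R).card :=
          Finset.one_lt_card.mpr ⟨i, mem_inter.mpr ⟨hib, hi⟩, j, mem_inter.mpr ⟨hjb, hj⟩, hij⟩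
        omega
      · have hiB : i ∉ B := (mem_sdiff.mp (t4 b hb hib)).2
        have hjB : j ∉ B := (mem_sdiff.mp (t4 b hb hjb)).2
        exact t5 i (mem_sdiff.mpr ⟨hi, hiB⟩) j (mem_sdiff.mpr ⟨hj, hjB⟩) hij b hb hib hjb

lemma fubL_head_decomp {α : Type*} [Fintype α] [DecidableEq α] (S : Set ℕ) (G R : Finset α)
    (hG : G.Nonempty) :
    Nat.card (fubL S G R) =
      ∑ B ∈ G.powerset.filter (fun B => B.Nonempty ∧ B.card ∈ S ∧ (B ∩ R).card ≤ 1),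
        Nat.card (fubL S (G \ B) (R \ B)) := by
  set V := G.powerset.filter (fun B => B.Nonempty ∧ B.card ∈ S ∧ (B ∩ R).card ≤ 1) with hV
  have hbi : (fubL_finite S G R).toFinset =
      V.biUnion (fun B => ((fubL_finite S (G \ B) (R \ B)).toFinset.image (B :: ·))) := by
    ext L
    rw [Set.Finite.mem_toFinset, mem_biUnion, fubL_head_iff S G R hG]
    constructor
    · rintro ⟨B, hB, t, ht, rfl⟩
      exact ⟨B, hB, mem_image.mpr ⟨t, (Set.Finite.mem_toFinset _).mpr ht, rfl⟩⟩
    · rintro ⟨B, hB, hL⟩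
      obtain ⟨t, ht, rfl⟩ := mem_image.mp hL
      exact ⟨B, hB, t, (Set.Finite.mem_toFinset _).mp ht, rfl⟩
  have hcard : Nat.card (fubL S G R) = (fubL_finite S G R).toFinset.card := by
    rw [Nat.card_coe_set_eq, Set.ncard_eq_toFinset_card _ (fubL_finite S G R)]
  rw [hcard, hbi, Finset.card_biUnion]
  · refine Finset.sum_congr rfl ?_
    intro B hB
    rw [Finset.card_image_of_injective _ (List.cons_injective), Nat.card_coe_set_eq,
      Set.ncard_eq_toFinset_card _ (fubL_finite S (G \ B) (R \ B))]
  · intro B hB B' hB' hne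
    rw [Function.onFun, Finset.disjoint_left]
    rintro L hL hL'
    obtain ⟨t, -, rfl⟩ := mem_image.mp hL
    obtain ⟨t', -, heq⟩ := mem_image.mp hL'
    exact hne (List.head_eq_of_cons_eq heq).symm

lemma srFubini_rec_nat (S : Set ℕ) (hS : ∀ s ∈ S, 0 < s) (r n : ℕ) (hr : 1 ≤ r) :
    srFubini S r n =
      ∑ s ∈ (Finset.range (n+1)).filter (· ∈ S), n.choose s * srFubini S r (n - s) +
      r * ∑ s ∈ (Finset.range (n+2)).filter (· ∈ S),
            n.choose (s-1) * srFubini S (r-1) (n-(s-1)) := by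
  classical
  set R : Finset (Fin (n + r)) := univ.filter (fun x => x.val < r) with hR
  have hcardR : R.card = r := by
    rw [hR, ← Finset.card_image_of_injective _ Fin.val_injective]
    have : (univ.filter fun x : Fin (n+r) => x.val < r).image Fin.val = Finset.range r := by
      ext a
      simp only [mem_image, mem_filter, mem_univ, true_and, Finset.mem_range]
      constructor
      · rintro ⟨x, hx, rfl⟩; exact hx
      · intro ha; exact ⟨⟨a, by omega⟩, ha, rfl⟩
    rw [this, Finset.card_range]
  have hcardU : (univ : Finset (Fin (n + r))).card = n + r := by simp
  have hcardNR : ((univ : Finset (Fin (n + r))) \ R).card = n := by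
    rw [Finset.card_sdiff_of_subset (subset_univ R), hcardU, hcardR]; omega
  have hne : (univ : Finset (Fin (n + r))).Nonempty := ⟨⟨0, by omega⟩, mem_univ _⟩
  set V := (univ : Finset (Fin (n+r))).powerset.filter
      (fun B => B.Nonempty ∧ B.card ∈ S ∧ (B ∩ R).card ≤ 1) with hV
  have step1 : srFubini S r n = ∑ B ∈ V, Nat.card (fubL S (univ \ B) (R \ B)) := by
    rw [srFubini, srFubiniSet_eq_fubL, ← hR, fubL_head_decomp S univ R hne]
  -- identify each term
  have hterm : ∀ B : Finset (Fin (n+r)), Nat.card (fubL S (univ \ B) (R \ B)) =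
      srFubini S ((R \ B).card) ((univ \ B).card - (R \ B).card) := by
    intro B
    have hRB : R \ B = (univ \ B).filter (fun x => x.val < r) := by
      ext x
      simp only [hR, mem_sdiff, mem_filter, mem_univ, true_and]
      tauto
    rw [hRB, card_fubL_sub S r (univ \ B)]
  rw [step1]
  have hsplit : ∑ B ∈ V, Nat.card (fubL S (univ \ B) (R \ B)) =
      ∑ B ∈ V.filter (fun B => B ∩ R = ∅), Nat.card (fubL S (univ \ B) (R \ B)) +
      ∑ B ∈ V.filter (fun B => ¬ B ∩ R = ∅), Nat.card (fubL S (univ \ B) (R \ B)) :=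
    (Finset.sum_filter_add_sum_filter_not V _ _).symm
  rw [hsplit]
  congr 1
  -- FIRST SUM
  · set V₀ := V.filter (fun B => B ∩ R = ∅) with hV₀
    have hval : ∀ B ∈ V₀, Nat.card (fubL S (univ \ B) (R \ B)) = srFubini S r (n - B.card) := by
      intro B hB
      rw [hterm B]
      rw [hV₀, mem_filter] at hB
      obtain ⟨hBV, hBR⟩ := hB
      have hRB : R \ B = R := by
        rw [Finset.sdiff_eq_self_iff_disjoint, Finset.disjoint_left]
        intro x hx hxB
        have : x ∈ B ∩ R := mem_inter.mpr ⟨hxB, hx⟩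
        rw [hBR] at this
        exact absurd this (Finset.notMem_empty x)
      have hBsub : B ⊆ univ \ R := by
        intro x hx
        rw [mem_sdiff]
        refine ⟨mem_univ x, fun hxR => ?_⟩
        have : x ∈ B ∩ R := mem_inter.mpr ⟨hx, hxR⟩
        rw [hBR] at this
        exact absurd this (Finset.notMem_empty x)
      have hBn : B.card ≤ n := by
        have := Finset.card_le_card hBsub; omega
      have h1 : (univ \ B).card = n + r - B.card := by
        rw [Finset.card_sdiff_of_subset (subset_univ B), hcardU]
      rw [hRB, hcardR, h1]
      congr 1
      omega
    rw [Finset.sum_congr rfl hval]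
    -- fiberwise
    have hmaps : V₀.filter (fun B => B.card ∈ (Finset.range (n+1)).filter (· ∈ S)) = V₀ := by
      apply Finset.filter_true_of_mem
      intro B hB
      rw [hV₀, mem_filter, hV, mem_filter] at hB
      obtain ⟨⟨-, -, hBS, -⟩, hBR⟩ := hB
      have hBsub : B ⊆ univ \ R := by
        intro x hx
        rw [mem_sdiff]
        refine ⟨mem_univ x, fun hxR => ?_⟩
        have : x ∈ B ∩ R := mem_inter.mpr ⟨hx, hxR⟩
        rw [hBR] at this
        exact absurd this (Finset.notMem_empty x)
      have hBn : B.card ≤ n := by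
        have := Finset.card_le_card hBsub; omega
      rw [mem_filter, Finset.mem_range]
      exact ⟨by omega, hBS⟩
    have hfib := Finset.sum_fiberwise_eq_sum_filter' V₀ ((Finset.range (n+1)).filter (· ∈ S))
      (fun B => B.card) (fun s => srFubini S r (n - s))
    rw [hmaps] at hfib
    rw [← hfib]
    refine Finset.sum_congr rfl ?_
    intro s hs
    have hsS : s ∈ S := (mem_filter.mp hs).2
    have hspos : 0 < s := hS s hsS
    have hcount : V₀.filter (fun B => B.card = s) = ((univ : Finset (Fin (n+r))) \ R).powersetCard s := by
      ext B
      rw [mem_filter, hV₀, mem_filter, hV, mem_filter, Finset.mem_powersetCard, mem_powerset]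
      constructor
      · rintro ⟨⟨⟨-, -, -, -⟩, hBR⟩, hcard⟩
        refine ⟨?_, hcard⟩
        intro x hx
        rw [mem_sdiff]
        refine ⟨mem_univ x, fun hxR => ?_⟩
        have : x ∈ B ∩ R := mem_inter.mpr ⟨hx, hxR⟩
        rw [hBR] at this
        exact absurd this (Finset.notMem_empty x)
      · rintro ⟨hsub, hcard⟩
        have hBR : B ∩ R = ∅ := by
          rw [Finset.eq_empty_iff_forall_notMem]
          intro x hx
          rw [mem_inter] at hx
          exact (mem_sdiff.mp (hsub hx.1)).2 hx.2
        exact ⟨⟨⟨subset_univ B, Finset.card_pos.mp (by rw [hcard]; exact hspos),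
          (by rw [hcard]; exact hsS), by rw [hBR]; simp⟩, hBR⟩, hcard⟩
    rw [hcount, Finset.sum_const, Finset.card_powersetCard, hcardNR, smul_eq_mul]
  -- SECOND SUM
  · set V₁ := V.filter (fun B => ¬ B ∩ R = ∅) with hV₁
    have hone : ∀ B ∈ V₁, (B ∩ R).card = 1 := by
      intro B hB
      rw [hV₁, mem_filter, hV, mem_filter] at hB
      obtain ⟨⟨-, -, -, hle⟩, hne'⟩ := hB
      have : 0 < (B ∩ R).card := Finset.card_pos.mpr (Finset.nonempty_iff_ne_empty.mpr hne')
      omega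
    have hBcard_le : ∀ B ∈ V₁, B.card ≤ n + 1 ∧ B.card ∈ S ∧ 1 ≤ B.card := by
      intro B hB
      have h1 := hone B hB
      rw [hV₁, mem_filter, hV, mem_filter] at hB
      obtain ⟨⟨-, hBne, hBS, -⟩, -⟩ := hB
      have hsub : B \ R ⊆ univ \ R := by
        intro x hx; rw [mem_sdiff] at hx ⊢; exact ⟨mem_univ x, hx.2⟩
      have h2 : (B \ R).card ≤ n := by
        have := Finset.card_le_card hsub; omega
      have h3 : (B \ R).card + (B ∩ R).card = B.card := Finset.card_sdiff_add_card_inter B R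
      have h4 : 0 < B.card := Finset.card_pos.mpr hBne
      exact ⟨by omega, hBS, by omega⟩
    have hval : ∀ B ∈ V₁, Nat.card (fubL S (univ \ B) (R \ B)) =
        srFubini S (r-1) (n - (B.card - 1)) := by
      intro B hB
      have h1 := hone B hB
      obtain ⟨hle, -, hpos⟩ := hBcard_le B hB
      rw [hterm B]
      have hRBcard : (R \ B).card = r - 1 := by
        have := Finset.card_sdiff_add_card_inter R B
        rw [Finset.inter_comm R B, h1, hcardR] at this
        omega
      have h2 : (univ \ B).card = n + r - B.card := by
        rw [Finset.card_sdiff_of_subset (subset_univ B), hcardU]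
      rw [hRBcard, h2]
      congr 1
      have hsub : B \ R ⊆ univ \ R := by
        intro x hx; rw [mem_sdiff] at hx ⊢; exact ⟨mem_univ x, hx.2⟩
      have h3 : (B \ R).card ≤ n := by
        have := Finset.card_le_card hsub; omega
      have h4 : (B \ R).card + (B ∩ R).card = B.card := Finset.card_sdiff_add_card_inter B R
      omega
    rw [Finset.sum_congr rfl hval]
    have hmaps : V₁.filter (fun B => B.card ∈ (Finset.range (n+2)).filter (· ∈ S)) = V₁ := by
      apply Finset.filter_true_of_mem
      intro B hB
      obtain ⟨h1, h2, -⟩ := hBcard_le B hB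
      rw [mem_filter, Finset.mem_range]
      exact ⟨by omega, h2⟩
    have hfib := Finset.sum_fiberwise_eq_sum_filter' V₁ ((Finset.range (n+2)).filter (· ∈ S))
      (fun B => B.card) (fun s => srFubini S (r-1) (n - (s - 1)))
    rw [hmaps] at hfib
    rw [← hfib, Finset.mul_sum]
    refine Finset.sum_congr rfl ?_
    intro s hs
    have hsS : s ∈ S := (mem_filter.mp hs).2
    have hspos : 0 < s := hS s hsS
    have hcount : (V₁.filter (fun B => B.card = s)).card = r * n.choose (s - 1) := by
      have hbij : (V₁.filter (fun B => B.card = s)).card =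
          ((R.image fun x => ({x} : Finset (Fin (n+r)))) ×ˢ
            ((univ \ R).powersetCard (s-1))).card := by
        apply Finset.card_nbij' (fun B => (B ∩ R, B \ R)) (fun p => p.1 ∪ p.2)
        · intro B hB
          rw [mem_coe, mem_filter] at hB
          obtain ⟨hBV₁, hBs⟩ := hB
          rw [mem_coe, Finset.mem_product]
          dsimp only
          constructor
          · obtain ⟨x, hx⟩ := Finset.card_eq_one.mp (hone B hBV₁)
            have hxR : x ∈ R := (mem_inter.mp (hx ▸ Finset.mem_singleton_self x)).2
            exact mem_image.mpr ⟨x, hxR, hx.symm⟩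
          · rw [Finset.mem_powersetCard]
            constructor
            · intro x hx; rw [mem_sdiff] at hx ⊢; exact ⟨mem_univ x, hx.2⟩
            · have := Finset.card_sdiff_add_card_inter B R
              rw [hone B hBV₁] at this
              omega
        · intro p hp
          rw [mem_coe, Finset.mem_product] at hp
          obtain ⟨hp1, hp2⟩ := hp
          obtain ⟨x, hxR, hx⟩ := mem_image.mp hp1
          rw [Finset.mem_powersetCard] at hp2
          obtain ⟨hp2sub, hp2card⟩ := hp2
          have hdisj : Disjoint p.1 p.2 := by
            rw [← hx, Finset.disjoint_left]
            intro y hy hy2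
            rw [Finset.mem_singleton] at hy
            subst hy
            exact (mem_sdiff.mp (hp2sub hy2)).2 hxR
          have hcardU' : (p.1 ∪ p.2).card = s := by
            rw [Finset.card_union_of_disjoint hdisj, ← hx, Finset.card_singleton]
            omega
          have hinterR : (p.1 ∪ p.2) ∩ R = {x} := by
            ext y
            rw [mem_inter, mem_union, ← hx, Finset.mem_singleton]
            constructor
            · rintro ⟨(rfl | hy2), hyR⟩
              · rfl
              · exact absurd hyR (mem_sdiff.mp (hp2sub hy2)).2
            · rintro rfl
              exact ⟨Or.inl rfl, hxR⟩
          rw [mem_coe, mem_filter, hV₁, mem_filter, hV, mem_filter, mem_powerset]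
          refine ⟨⟨⟨subset_univ _, ⟨x, by rw [mem_union, ← hx]; exact Or.inl (Finset.mem_singleton_self x)⟩,
            (by rw [hcardU']; exact hsS), by rw [hinterR]; simp⟩, ?_⟩, hcardU'⟩
          rw [hinterR]
          simp
        · intro B hB
          show B ∩ R ∪ B \ R = B
          rw [Finset.union_comm, Finset.sdiff_union_inter]
        · intro p hp
          rw [mem_coe, Finset.mem_product] at hp
          obtain ⟨hp1, hp2⟩ := hp
          obtain ⟨x, hxR, hx⟩ := mem_image.mp hp1
          rw [Finset.mem_powersetCard] at hp2
          obtain ⟨hp2sub, hp2card⟩ := hp2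
          have h1 : (p.1 ∪ p.2) ∩ R = p.1 := by
            ext y
            rw [mem_inter, mem_union, ← hx, Finset.mem_singleton]
            constructor
            · rintro ⟨(rfl | hy2), hyR⟩
              · rfl
              · exact absurd hyR (mem_sdiff.mp (hp2sub hy2)).2
            · rintro rfl
              exact ⟨Or.inl rfl, hxR⟩
          have h2 : (p.1 ∪ p.2) \ R = p.2 := by
            ext y
            rw [mem_sdiff, mem_union, ← hx, Finset.mem_singleton]
            constructor
            · rintro ⟨(rfl | hy2), hyR⟩
              · exact absurd hxR hyR
              · exact hy2
            · intro hy2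
              exact ⟨Or.inr hy2, (mem_sdiff.mp (hp2sub hy2)).2⟩
          show ((p.1 ∪ p.2) ∩ R, (p.1 ∪ p.2) \ R) = p
          rw [h1, h2]
      rw [hbij, Finset.card_product,
        Finset.card_image_of_injective _ Finset.singleton_injective,
        Finset.card_powersetCard, hcardNR, hcardR]
    rw [Finset.sum_const, hcount, smul_eq_mul, mul_assoc]


/-- the recurrence
`F_{n,S,r} = Σ_{s∈S} C(n,s)·F_{n−s,S,r} + r·Σ_{s∈S} C(n,s−1)·F_{n−(s−1),S,r−1}`. -/
theorem srFubini_recurrence (S : Set ℕ) (hS : ∀ s ∈ S, 0 < s) (r n : ℕ) (hr : 1 ≤ r) :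
    (srFubini S r n : ℤ) =
      (∑ᶠ s ∈ S, (n.choose s : ℤ) * srFubiniZ S r ((n : ℤ) - s)) +
      r * ∑ᶠ s ∈ S, (n.choose (s - 1) : ℤ) * srFubiniZ S (r - 1) ((n : ℤ) - ((s : ℤ) - 1)) := by
  classical
  set f₁ : ℕ → ℤ := fun s => (n.choose s : ℤ) * srFubiniZ S r ((n : ℤ) - s) with hf₁
  set f₂ : ℕ → ℤ := fun s => (n.choose (s - 1) : ℤ) * srFubiniZ S (r - 1) ((n : ℤ) - ((s : ℤ) - 1))
    with hf₂
  set A₁ := (Finset.range (n+1)).filter (· ∈ S) with hA₁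
  set A₂ := (Finset.range (n+2)).filter (· ∈ S) with hA₂
  have h1 : ∑ᶠ s ∈ S, f₁ s = ∑ s ∈ A₁, f₁ s := by
    apply finsum_mem_eq_sum_of_inter_support_eq
    ext s
    simp only [Set.mem_inter_iff, Function.mem_support, Finset.coe_filter, Set.mem_setOf_eq,
      Finset.mem_range, hA₁]
    constructor
    · rintro ⟨hsS, hne⟩
      refine ⟨⟨?_, hsS⟩, hne⟩
      by_contra h
      push_neg at h
      have : n.choose s = 0 := Nat.choose_eq_zero_of_lt (by omega)
      apply hne
      rw [hf₁]
      simp [this]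
    · rintro ⟨⟨-, hsS⟩, hne⟩
      exact ⟨hsS, hne⟩
  have h2 : ∑ᶠ s ∈ S, f₂ s = ∑ s ∈ A₂, f₂ s := by
    apply finsum_mem_eq_sum_of_inter_support_eq
    ext s
    simp only [Set.mem_inter_iff, Function.mem_support, Finset.coe_filter, Set.mem_setOf_eq,
      Finset.mem_range, hA₂]
    constructor
    · rintro ⟨hsS, hne⟩
      refine ⟨⟨?_, hsS⟩, hne⟩
      by_contra h
      push_neg at h
      have : n.choose (s-1) = 0 := Nat.choose_eq_zero_of_lt (by omega)
      apply hne
      rw [hf₂]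
      simp [this]
    · rintro ⟨⟨-, hsS⟩, hne⟩
      exact ⟨hsS, hne⟩
  rw [h1, h2]
  have e₁ : ∀ s ∈ A₁, f₁ s = ((n.choose s * srFubini S r (n - s) : ℕ) : ℤ) := by
    intro s hs
    rw [hA₁, mem_filter, Finset.mem_range] at hs
    have hsn : s ≤ n := by omega
    rw [hf₁]
    simp only [srFubiniZ]
    rw [if_pos (by omega : (0:ℤ) ≤ (n:ℤ) - s)]
    have : ((n:ℤ) - s).toNat = n - s := by omega
    rw [this]
    push_cast
    ring
  have e₂ : ∀ s ∈ A₂, f₂ s = ((n.choose (s-1) * srFubini S (r-1) (n - (s-1)) : ℕ) : ℤ) := by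
    intro s hs
    rw [hA₂, mem_filter, Finset.mem_range] at hs
    have hspos : 0 < s := hS s hs.2
    have hsn : s ≤ n + 1 := by omega
    rw [hf₂]
    simp only [srFubiniZ]
    have hcast : (n : ℤ) - ((s : ℤ) - 1) = ((n - (s-1) : ℕ) : ℤ) := by
      push_cast
      omega
    rw [hcast, if_pos (by positivity)]
    rw [Int.toNat_natCast]
    push_cast
    ring
  rw [Finset.sum_congr rfl e₁, Finset.sum_congr rfl e₂]
  rw [srFubini_rec_nat S hS r n hr]
  push_cast
  ring
end

section
/- Let S be a set of positive integers, r ≥ 0 an integer, and n ≥ 0 an integer. Then the series Σ_{ℓ=0}^{∞} (1/2^ℓ)·C(r+ℓ, ℓ)·(Σ_{k=0}^{n} {n brace k}_{S,r}·(ℓ)_k) of real numbers converges, and F_{n,S,r} = (r!/2^{r+1})·Σ_{ℓ=0}^{∞} (1/2^ℓ)·C(r+ℓ, ℓ)·Σ_{k=0}^{n} {n brace k}_{S,r}·(ℓ)_k, where (ℓ)_k = ℓ(ℓ−1)⋯(ℓ−k+1) is the falling factorial. -/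
open Finset
open scoped Classical

-- helpers
theorem pairwise_imp_mem {α : Type*} {R R' : α → α → Prop} :
    ∀ {l : List α}, l.Pairwise R → (∀ a ∈ l, ∀ b ∈ l, R a b → R' a b) → l.Pairwise R'
  | [], _, _ => List.Pairwise.nil
  | a :: l, h, H => by
    rw [List.pairwise_cons] at h ⊢
    exact ⟨fun b hb => H a (by simp) b (by simp [hb]) (h.1 b hb),
      pairwise_imp_mem h.2 (fun x hx y hy => H x (by simp [hx]) y (by simp [hy]))⟩

variable {S : Set ℕ} {r n : ℕ}

theorem symmDisj {N : ℕ} :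
    Symmetric (fun (b b' : Finset (Fin N)) => ∀ x ∈ b, x ∉ b') :=
  fun a b hab x hxb hxa => hab x hxa hxb

theorem fub_nodup {L : List (Finset (Fin (n + r)))} (h : L ∈ srFubiniSet S r n) : L.Nodup := by
  obtain ⟨h1, h2, -, -⟩ := h
  exact pairwise_imp_mem h2 (fun a ha b hb hR heq => by
    obtain ⟨x, hx⟩ := (h1 a ha).1
    exact hR x hx (heq ▸ hx))

theorem fub_uniq {L : List (Finset (Fin (n + r)))} (h : L ∈ srFubiniSet S r n)
    (x : Fin (n + r)) : ∃! b, b ∈ L ∧ x ∈ b := by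
  obtain ⟨h1, h2, h3, h4⟩ := h
  obtain ⟨b, hb, hx⟩ := h3 x
  refine ⟨b, ⟨hb, hx⟩, ?_⟩
  rintro b' ⟨hb', hx'⟩
  by_contra hne
  haveI : Std.Symm (fun (b b' : Finset (Fin (n + r))) => ∀ x ∈ b, x ∉ b') := ⟨fun a b h => symmDisj h⟩
  exact (h2.forall hb' hb hne) x hx' hx

theorem fub_toFinset_mem {L : List (Finset (Fin (n + r)))} (h : L ∈ srFubiniSet S r n) :
    r ≤ L.length ∧ L.length ≤ n + r ∧ L.toFinset ∈ srStirlingSet S r n (L.length - r) := by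
  have hnd := fub_nodup h
  have huniq := fub_uniq h
  obtain ⟨h1, h2, h3, h4⟩ := h
  have hcard : L.toFinset.card = L.length := List.toFinset_card_of_nodup hnd
  -- r ≤ L.length
  have hr : r ≤ L.length := by
    rcases Nat.eq_zero_or_pos r with h0 | hrpos
    · omega
    have hle : n + r ≠ 0 := by omega
    -- map i ∈ range r to the block containing ⟨i⟩
    have : (Finset.range r).card ≤ L.toFinset.card := by
      apply Finset.card_le_card_of_injOn
        (fun i => if hi : i < n + r then (h3 ⟨i, hi⟩).choose else ∅)
      · intro i hi
        rw [Finset.mem_coe, Finset.mem_range] at hi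
        have hi' : i < n + r := by omega
        simp only [dif_pos hi', Finset.mem_coe]
        rw [List.mem_toFinset]
        exact (h3 ⟨i, hi'⟩).choose_spec.1
      · intro i hi j hj hij
        rw [Finset.mem_coe, Finset.mem_range] at hi hj
        have hi' : i < n + r := by omega
        have hj' : j < n + r := by omega
        dsimp only at hij
        rw [dif_pos hi', dif_pos hj'] at hij
        by_contra hne
        have hne' : (⟨i, hi'⟩ : Fin (n + r)) ≠ ⟨j, hj'⟩ := by
          simp [Fin.ext_iff, hne]
        have hbi := (h3 ⟨i, hi'⟩).choose_spec
        have hbj := (h3 ⟨j, hj'⟩).choose_spec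
        exact h4 ⟨i, hi'⟩ ⟨j, hj'⟩ hi hj hne' _ hbi.1 hbi.2 (hij ▸ hbj.2)
    simpa [hcard] using this
  -- L.length ≤ n + r
  have hlen : L.length ≤ n + r := by
    rcases Nat.eq_zero_or_pos (n + r) with h0 | hpos
    · rcases L with _ | ⟨b, L'⟩
      · simp
      · obtain ⟨x, -⟩ := (h1 b (by simp)).1
        exact absurd x.2 (by omega)
    have : L.toFinset.card ≤ (Finset.univ : Finset (Fin (n + r))).card := by
      apply Finset.card_le_card_of_injOn
        (fun b => if hb : b.Nonempty then hb.choose else ⟨0, hpos⟩)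
      · intro b _; exact Finset.mem_univ _
      · intro b hb b' hb' hbb'
        rw [Finset.mem_coe, List.mem_toFinset] at hb hb'
        have hne := (h1 b hb).1
        have hne' := (h1 b' hb').1
        dsimp only at hbb'
        rw [dif_pos hne, dif_pos hne'] at hbb'
        obtain ⟨c, ⟨-, -⟩, hun⟩ := huniq hne'.choose
        have h1' : b ∈ L ∧ hne'.choose ∈ b := ⟨hb, hbb' ▸ hne.choose_spec⟩
        have h2' : b' ∈ L ∧ hne'.choose ∈ b' := ⟨hb', hne'.choose_spec⟩
        rw [hun b h1', hun b' h2']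
    rw [hcard, Finset.card_univ, Fintype.card_fin] at this
    exact this
  refine ⟨hr, hlen, ⟨?_, ?_, ?_, ?_⟩⟩
  · intro b hb
    exact h1 b (List.mem_toFinset.1 hb)
  · omega
  · intro x
    obtain ⟨b, ⟨hb, hx⟩, hun⟩ := huniq x
    exact ⟨b, ⟨List.mem_toFinset.2 hb, hx⟩, fun b' hb' =>
      hun b' ⟨List.mem_toFinset.1 hb'.1, hb'.2⟩⟩
  · intro i j hi hj hij b hb
    exact h4 i j hi hj hij b (List.mem_toFinset.1 hb)

theorem mem_fub_iff_perm {k : ℕ} {P : Finset (Finset (Fin (n + r)))}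
    (hP : P ∈ srStirlingSet S r n k) (L : List (Finset (Fin (n + r)))) :
    (L ∈ srFubiniSet S r n ∧ L.toFinset = P) ↔ L.Perm P.toList := by
  obtain ⟨hP1, hP2, hP3, hP4⟩ := hP
  constructor
  · rintro ⟨hL, hLP⟩
    exact List.perm_of_nodup_nodup_toFinset_eq (fub_nodup hL) (Finset.nodup_toList P)
      (by rw [hLP, Finset.toList_toFinset])
  · intro hperm
    have hmem : ∀ b, b ∈ L ↔ b ∈ P := by
      intro b
      rw [hperm.mem_iff, Finset.mem_toList]
    have hnd : L.Nodup := hperm.nodup_iff.2 (Finset.nodup_toList P)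
    refine ⟨⟨?_, ?_, ?_, ?_⟩, ?_⟩
    · intro b hb; exact hP1 b ((hmem b).1 hb)
    · exact pairwise_imp_mem hnd (fun a ha b hb hab x hxa hxb => hab (by
        obtain ⟨c, -, hun⟩ := hP3 x
        rw [hun a ⟨(hmem a).1 ha, hxa⟩, hun b ⟨(hmem b).1 hb, hxb⟩]))
    · intro x
      obtain ⟨b, ⟨hb, hx⟩, -⟩ := hP3 x
      exact ⟨b, (hmem b).2 hb, hx⟩
    · intro i j hi hj hij b hb
      exact hP4 i j hi hj hij b ((hmem b).1 hb)
    · rw [List.toFinset_eq_of_perm _ _ hperm, Finset.toList_toFinset]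

theorem fubini_card (S : Set ℕ) (r n : ℕ) :
    srFubini S r n = ∑ k ∈ Finset.range (n + 1), (k + r).factorial * srStirling S r n k := by
  have hfin : (srFubiniSet S r n).Finite := by
    apply Set.Finite.subset (List.finite_length_le _ (n + r))
    intro L hL
    exact (fub_toFinset_mem hL).2.1
  have hTfin : ∀ k, (srStirlingSet S r n k).Finite := fun k => Set.toFinite _
  set F := hfin.toFinset with hF
  set T : ℕ → Finset (Finset (Finset (Fin (n + r)))) := fun k => (hTfin k).toFinset with hT
  have hsrF : srFubini S r n = F.card := by
    rw [srFubini, Nat.card_coe_set_eq, Set.ncard_eq_toFinset_card _ hfin]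
  have hsrS : ∀ k, srStirling S r n k = (T k).card := fun k => by
    rw [srStirling, Nat.card_coe_set_eq, Set.ncard_eq_toFinset_card _ (hTfin k)]
  set t := (Finset.range (n + 1)).biUnion T with ht
  have hmap : ∀ L ∈ F, L.toFinset ∈ t := by
    intro L hL
    rw [Set.Finite.mem_toFinset] at hL
    obtain ⟨hr, hlen, hmem⟩ := fub_toFinset_mem hL
    rw [ht, Finset.mem_biUnion]
    exact ⟨L.length - r, Finset.mem_range.2 (by omega), (hTfin _).mem_toFinset.2 hmem⟩
  have hcount := Finset.card_eq_sum_card_fiberwise hmap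
  have hdisj : (↑(Finset.range (n + 1)) : Set ℕ).PairwiseDisjoint T := by
    intro k _ k' _ hkk'
    simp only [Finset.disjoint_left]
    intro P hPk hPk'
    rw [hT, Set.Finite.mem_toFinset] at hPk hPk'
    have e1 := hPk.2.1
    have e2 := hPk'.2.1
    exact hkk' (by omega)
  rw [Finset.sum_biUnion hdisj] at hcount
  rw [hsrF, hcount]
  apply Finset.sum_congr rfl
  intro k hk
  have hfiber : ∀ P ∈ T k, (F.filter (fun L => L.toFinset = P)).card = (k + r).factorial := by
    intro P hPT
    have hPmem : P ∈ srStirlingSet S r n k := (hTfin k).mem_toFinset.1 hPT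
    have hset : F.filter (fun L => L.toFinset = P) = P.toList.permutations.toFinset := by
      ext L
      rw [Finset.mem_filter, List.mem_toFinset, List.mem_permutations,
        Set.Finite.mem_toFinset]
      exact mem_fub_iff_perm hPmem L
    rw [hset, List.toFinset_card_of_nodup
      (List.nodup_permutations _ (Finset.nodup_toList P)),
      List.length_permutations, Finset.length_toList, hPmem.2.1]
  rw [Finset.sum_congr rfl hfiber, Finset.sum_const, hsrS k, smul_eq_mul, mul_comm]

theorem hasSum_aux (r k : ℕ) :
    HasSum (fun ℓ : ℕ => (1 / 2 ^ ℓ : ℝ) * ((r + ℓ).choose ℓ : ℝ) * (ℓ.descFactorial k : ℝ))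
      (((r + k).factorial : ℝ) / (r.factorial : ℝ) * 2 ^ (r + 1)) := by
  set f : ℕ → ℝ := fun ℓ => (1 / 2 ^ ℓ : ℝ) * ((r + ℓ).choose ℓ : ℝ) * (ℓ.descFactorial k : ℝ)
    with hf
  have hN : ∀ m : ℕ, (r + (m + k)).choose (m + k) * ((m + k).descFactorial k) * r.factorial
      = (m + (r + k)).choose (r + k) * (r + k).factorial := by
    intro m
    apply Nat.eq_of_mul_eq_mul_right m.factorial_pos
    have hd : (m + k).descFactorial k * m.factorial = (m + k).factorial := by
      rw [mul_comm]
      simpa using Nat.factorial_mul_descFactorial (Nat.le_add_left k m)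
    have c1 := Nat.choose_mul_factorial_mul_factorial (Nat.le_add_left (m + k) r)
    rw [Nat.add_sub_cancel_right] at c1
    have c2 := Nat.choose_mul_factorial_mul_factorial (Nat.le_add_left (r + k) m)
    rw [Nat.add_sub_cancel_right] at c2
    calc (r + (m + k)).choose (m + k) * (m + k).descFactorial k * r.factorial * m.factorial
        = (r + (m + k)).choose (m + k) * ((m + k).descFactorial k * m.factorial)
          * r.factorial := by ring
      _ = (r + (m + k)).choose (m + k) * (m + k).factorial * r.factorial := by rw [hd]
      _ = (r + (m + k)).factorial := c1
      _ = (m + (r + k)).factorial := by ring_nf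
      _ = (m + (r + k)).choose (r + k) * (r + k).factorial * m.factorial := c2.symm
  have key : ∀ m : ℕ, f (m + k) =
      (((r + k).factorial : ℝ) / (r.factorial : ℝ) / 2 ^ k) *
        (((m + (r + k)).choose (r + k) : ℝ) * (1 / 2 : ℝ) ^ m) := by
    intro m
    have hNr : ((r + (m + k)).choose (m + k) : ℝ) * ((m + k).descFactorial k : ℝ)
        * (r.factorial : ℝ) = ((m + (r + k)).choose (r + k) : ℝ) * ((r + k).factorial : ℝ) := by
      exact_mod_cast congrArg (Nat.cast : ℕ → ℝ) (hN m)
    have hr0 : (r.factorial : ℝ) ≠ 0 := Nat.cast_ne_zero.2 r.factorial_ne_zero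
    simp only [hf]
    rw [pow_add, one_div_pow]
    field_simp
    linear_combination hNr
  have h0 : ∑ i ∈ Finset.range k, f i = 0 := by
    apply Finset.sum_eq_zero
    intro i hi
    simp only [hf]
    rw [Nat.descFactorial_eq_zero_iff_lt.2 (Finset.mem_range.1 hi)]
    simp
  have hmain : HasSum (fun m : ℕ => f (m + k))
      ((((r + k).factorial : ℝ) / (r.factorial : ℝ) / 2 ^ k) * (1 / (1 - 1 / 2) ^ (r + k + 1))) := by
    have := (hasSum_choose_mul_geometric_of_norm_lt_one (𝕜 := ℝ) (r + k) (r := 1 / 2)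
      (by rw [norm_div]; simp; norm_num)).mul_left
      (((r + k).factorial : ℝ) / (r.factorial : ℝ) / 2 ^ k)
    convert this using 2 with m
    exacts [rfl, key _]
  have heq : (((r + k).factorial : ℝ) / (r.factorial : ℝ) / 2 ^ k) *
      (1 / (1 - 1 / 2) ^ (r + k + 1)) =
      ((r + k).factorial : ℝ) / (r.factorial : ℝ) * 2 ^ (r + 1) := by
    rw [show (1 - 1/2 : ℝ) = 2⁻¹ by norm_num, inv_pow, one_div, inv_inv]
    rw [pow_add, pow_add]
    field_simp
    ring
  rw [heq] at hmain
  exact (hasSum_nat_add_iff' (f := f) k).1 (by rwa [h0, sub_zero])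

/-- the Dobinski-type formula
`F_{n,S,r} = (r!/2^{r+1})·Σ_{ℓ≥0} (1/2^ℓ)·C(r+ℓ,ℓ)·Σ_{k=0}^n {n brace k}_{S,r}·(ℓ)_k`,
the series being convergent. -/
theorem srFubini_series (S : Set ℕ) (hS : ∀ s ∈ S, 0 < s) (r n : ℕ) :
    Summable (fun ℓ : ℕ => (1 / 2 ^ ℓ : ℝ) * ((r + ℓ).choose ℓ : ℝ) *
      ∑ k ∈ Finset.range (n + 1), (srStirling S r n k : ℝ) * (ℓ.descFactorial k : ℝ)) ∧
    (srFubini S r n : ℝ) =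
      ((r.factorial : ℝ) / 2 ^ (r + 1)) *
        ∑' ℓ : ℕ, (1 / 2 ^ ℓ : ℝ) * ((r + ℓ).choose ℓ : ℝ) *
          ∑ k ∈ Finset.range (n + 1), (srStirling S r n k : ℝ) * (ℓ.descFactorial k : ℝ) := by

  have hst : ∀ ℓ : ℕ, (1 / 2 ^ ℓ : ℝ) * ((r + ℓ).choose ℓ : ℝ) *
      ∑ k ∈ Finset.range (n + 1), (srStirling S r n k : ℝ) * (ℓ.descFactorial k : ℝ) =
      ∑ k ∈ Finset.range (n + 1), (srStirling S r n k : ℝ) *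
        ((1 / 2 ^ ℓ : ℝ) * ((r + ℓ).choose ℓ : ℝ) * (ℓ.descFactorial k : ℝ)) := by
    intro ℓ
    rw [Finset.mul_sum]
    exact Finset.sum_congr rfl (fun k _ => by ring)
  have hsum : HasSum (fun ℓ : ℕ => ∑ k ∈ Finset.range (n + 1), (srStirling S r n k : ℝ) *
      ((1 / 2 ^ ℓ : ℝ) * ((r + ℓ).choose ℓ : ℝ) * (ℓ.descFactorial k : ℝ)))
      (∑ k ∈ Finset.range (n + 1), (srStirling S r n k : ℝ) *
        (((r + k).factorial : ℝ) / (r.factorial : ℝ) * 2 ^ (r + 1))) :=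
    hasSum_sum (fun k _ => (hasSum_aux r k).mul_left _)
  have hsum' : HasSum (fun ℓ : ℕ => (1 / 2 ^ ℓ : ℝ) * ((r + ℓ).choose ℓ : ℝ) *
      ∑ k ∈ Finset.range (n + 1), (srStirling S r n k : ℝ) * (ℓ.descFactorial k : ℝ))
      (∑ k ∈ Finset.range (n + 1), (srStirling S r n k : ℝ) *
        (((r + k).factorial : ℝ) / (r.factorial : ℝ) * 2 ^ (r + 1))) := by
    simpa only [← hst] using hsum
  refine ⟨hsum'.summable, ?_⟩
  rw [hsum'.tsum_eq, fubini_card S r n]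
  push_cast
  rw [Finset.mul_sum]
  apply Finset.sum_congr rfl
  intro k _
  have hkr : ((k + r).factorial : ℝ) = ((r + k).factorial : ℝ) := by rw [Nat.add_comm]
  have hr0 : (r.factorial : ℝ) ≠ 0 := Nat.cast_ne_zero.2 r.factorial_ne_zero
  rw [hkr]
  field_simp
end
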